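/- arXiv:2201.04832 — 11 statements merged into one kernel-verified Lean document; each statement's English description precedes it below -/
import Mathlib

section
/- Let α > 0 and C > 0, let r : (0,∞) → ℝ be continuous with 0 < r(z) ≤ C(1+z) for all z > 0, let λ ≥ αC, and let f ∈ X_{0,α}. Then for every y > 0, |(1/r(y)) ∫₀^y exp(−λ ∫ₓ^y dτ/r(τ)) f(x) dx| ≤ ‖f‖_{X_{0,α}} / ((1+y)^α r(y)). -/
open MeasureTheory Set

/-- Pointwise estimate for the resolvent of the growth semigroup in
`X_{0,α} = L¹((0,∞), (1+x)^α dx)`: if `0 < r(z) ≤ C(1+z)` and `λ ≥ αC`, then for every `y > 0`,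
`|(1/r(y)) ∫₀^y exp(−λ ∫ₓ^y dτ/r(τ)) f(x) dx| ≤ ‖f‖_{X_{0,α}} / ((1+y)^α r(y))`. -/
theorem stmt1 (α C : ℝ) (hα : 0 < α) (hC : 0 < C) (r : ℝ → ℝ)
    (hr_cont : ContinuousOn r (Ioi (0 : ℝ)))
    (hr_pos : ∀ z > (0 : ℝ), 0 < r z) (hr_le : ∀ z > (0 : ℝ), r z ≤ C * (1 + z))
    (lam : ℝ) (hlam : α * C ≤ lam)
    (f : ℝ → ℝ) (hf_meas : Measurable f)
    (hf_int : IntegrableOn (fun x => |f x| * (1 + x) ^ α) (Ioi (0 : ℝ))) :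
    ∀ y > (0 : ℝ),
      |(1 / r y) * ∫ x in Ioo (0 : ℝ) y, Real.exp (-(lam * ∫ τ in x..y, 1 / r τ)) * f x|
        ≤ (∫ x in Ioi (0 : ℝ), |f x| * (1 + x) ^ α) / ((1 + y) ^ α * r y) := by
  intro y hy
  have hry : 0 < r y := hr_pos y hy
  have h1y : (0 : ℝ) < 1 + y := by linarith
  have h1yα : (0 : ℝ) < (1 + y) ^ α := Real.rpow_pos_of_pos h1y α
  set N : ℝ := ∫ x in Ioi (0 : ℝ), |f x| * (1 + x) ^ α with hN
  -- pointwise bound on the exponential factor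
  have key : ∀ x ∈ Ioo (0 : ℝ) y,
      Real.exp (-(lam * ∫ τ in x..y, 1 / r τ)) ≤ (1 + x) ^ α / (1 + y) ^ α := by
    intro x hx
    obtain ⟨hx0, hxy⟩ := hx
    have h1x : (0 : ℝ) < 1 + x := by linarith
    have hsub : Icc x y ⊆ Ioi (0 : ℝ) := fun z hz => lt_of_lt_of_le hx0 hz.1
    have hint_r : IntervalIntegrable (fun τ => 1 / r τ) volume x y := by
      apply ContinuousOn.intervalIntegrable
      rw [uIcc_of_le hxy.le]
      exact ContinuousOn.div continuousOn_const (hr_cont.mono hsub)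
        (fun z hz => (hr_pos z (hsub hz)).ne')
    have hint_c : IntervalIntegrable (fun τ => 1 / (C * (1 + τ))) volume x y := by
      apply ContinuousOn.intervalIntegrable
      apply ContinuousOn.div continuousOn_const
      · fun_prop
      · intro z hz
        rw [uIcc_of_le hxy.le] at hz
        have hz0 : (0 : ℝ) < z := hsub hz
        have : (0 : ℝ) < 1 + z := by linarith
        positivity
    have hmono : (∫ τ in x..y, 1 / (C * (1 + τ))) ≤ ∫ τ in x..y, 1 / r τ := by
      apply intervalIntegral.integral_mono_on hxy.le hint_c hint_r
      intro z hz
      have hz0 : 0 < z := lt_of_lt_of_le hx0 hz.1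
      have hrz := hr_pos z hz0
      have hle := hr_le z hz0
      exact one_div_le_one_div_of_le hrz hle
    have hval : (∫ τ in x..y, 1 / (C * (1 + τ)))
        = C⁻¹ * Real.log ((1 + y) / (1 + x)) := by
      have : ∀ τ : ℝ, 1 / (C * (1 + τ)) = C⁻¹ * (1 + τ)⁻¹ := by
        intro τ; rw [one_div, mul_inv]
      simp_rw [this]
      rw [intervalIntegral.integral_const_mul]
      have := intervalIntegral.integral_comp_add_left (a := x) (b := y)
        (fun u : ℝ => u⁻¹) 1
      rw [this, integral_inv]
      rw [uIcc_of_le (by linarith : (1:ℝ) + x ≤ 1 + y)]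
      intro h; exact absurd h.1 (by linarith)
    have hlog0 : 0 ≤ Real.log ((1 + y) / (1 + x)) :=
      Real.log_nonneg ((le_div_iff₀ h1x).2 (by linarith))
    have hlam0 : 0 ≤ lam := le_trans (by positivity) hlam
    have hstep : α * Real.log ((1 + y) / (1 + x)) ≤ lam * ∫ τ in x..y, 1 / r τ := by
      calc α * Real.log ((1 + y) / (1 + x))
          = (α * C) * (C⁻¹ * Real.log ((1 + y) / (1 + x))) := by
            field_simp
        _ ≤ lam * (C⁻¹ * Real.log ((1 + y) / (1 + x))) := by
            apply mul_le_mul_of_nonneg_right hlam; positivity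
        _ ≤ lam * ∫ τ in x..y, 1 / r τ := by
            apply mul_le_mul_of_nonneg_left _ hlam0
            rw [← hval]; exact hmono
    calc Real.exp (-(lam * ∫ τ in x..y, 1 / r τ))
        ≤ Real.exp (-(α * Real.log ((1 + y) / (1 + x)))) := by
          apply Real.exp_le_exp.2; linarith
      _ = ((1 + y) / (1 + x)) ^ (-α) := by
          rw [Real.rpow_def_of_pos (by positivity)]; ring_nf
      _ = ((1 + x) / (1 + y)) ^ α := by
          rw [Real.rpow_neg (by positivity), ← Real.inv_rpow (by positivity), inv_div]
      _ = (1 + x) ^ α / (1 + y) ^ α := Real.div_rpow h1x.le h1y.le α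
  -- integrable dominating function
  have hIoo : Ioo (0 : ℝ) y ⊆ Ioi (0 : ℝ) := fun z hz => hz.1
  have hdom : IntegrableOn (fun x => (1 + x) ^ α / (1 + y) ^ α * |f x|)
      (Ioo (0 : ℝ) y) := by
    have h2 := (hf_int.mono_set hIoo).const_mul ((1 + y) ^ α)⁻¹
    exact h2.congr (Filter.Eventually.of_forall (fun x => by ring))
  have hbound : |∫ x in Ioo (0 : ℝ) y, Real.exp (-(lam * ∫ τ in x..y, 1 / r τ)) * f x|
      ≤ ∫ x in Ioo (0 : ℝ) y, (1 + x) ^ α / (1 + y) ^ α * |f x| := by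
    rw [← Real.norm_eq_abs]
    apply norm_integral_le_of_norm_le hdom
    filter_upwards [ae_restrict_mem measurableSet_Ioo] with x hx
    rw [Real.norm_eq_abs, abs_mul, abs_of_pos (Real.exp_pos _)]
    exact mul_le_mul_of_nonneg_right (key x hx) (abs_nonneg _)
  have hmono2 : (∫ x in Ioo (0 : ℝ) y, |f x| * (1 + x) ^ α) ≤ N := by
    apply setIntegral_mono_set hf_int
    · filter_upwards [ae_restrict_mem measurableSet_Ioi] with x hx
      have : (0:ℝ) < 1 + x := by have : (0:ℝ) < x := hx; linarith
      positivity
    · exact HasSubset.Subset.eventuallyLE hIoo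
  have heq : (∫ x in Ioo (0 : ℝ) y, (1 + x) ^ α / (1 + y) ^ α * |f x|)
      = ((1 + y) ^ α)⁻¹ * ∫ x in Ioo (0 : ℝ) y, |f x| * (1 + x) ^ α := by
    rw [← integral_const_mul]
    apply setIntegral_congr_fun measurableSet_Ioo
    intro x _; ring
  rw [abs_mul, abs_of_pos (one_div_pos.2 hry)]
  calc 1 / r y * |∫ x in Ioo (0 : ℝ) y, Real.exp (-(lam * ∫ τ in x..y, 1 / r τ)) * f x|
      ≤ 1 / r y * (((1 + y) ^ α)⁻¹ * N) := by
        apply mul_le_mul_of_nonneg_left _ (one_div_pos.2 hry).le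
        refine le_trans hbound ?_
        rw [heq]
        exact mul_le_mul_of_nonneg_left hmono2 (inv_nonneg.2 h1yα.le)
    _ = N / ((1 + y) ^ α * r y) := by
        rw [one_div, div_eq_mul_inv, mul_inv]; ring
end

section
/- Let α > 0 and C > 0, let r : (0,∞) → ℝ be continuous with 0 < r(z) ≤ C(1+z) for all z > 0, let a : (0,∞) → [0,∞) be locally integrable, let λ ≥ αC, and let f : (0,∞) → [0,∞) be measurable with ∫₀^∞ f(x)(1+x)^α dx < ∞. Then ∫₀^∞ (R_λ f)(y) · a(y) · (1+y)^α dy ≤ ∫₀^∞ f(x) (1+x)^α dx. -/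
open MeasureTheory Set
open scoped ENNReal

lemma aux_ofReal_integral_le {μ : Measure ℝ} {f : ℝ → ℝ} (hf : 0 ≤ᵐ[μ] f) :
    ENNReal.ofReal (∫ x, f x ∂μ) ≤ ∫⁻ x, ENNReal.ofReal (f x) ∂μ := by
  by_cases h : Integrable f μ
  · rw [MeasureTheory.ofReal_integral_eq_lintegral_ofReal h hf]
  · rw [integral_undef h]; simp

lemma aux_crux {g : ℝ → ℝ} (hg_meas : Measurable g) (hg0 : ∀ τ, 0 ≤ g τ) (x : ℝ)
    (hint : ∀ y, IntegrableOn g (Ioc x y)) :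
    ∫⁻ y in Ioi x, ENNReal.ofReal (g y) *
      ENNReal.ofReal (Real.exp (-(∫ τ in Ioc x y, g τ))) ≤ 1 := by
  set A : ℝ → ℝ := fun y => ∫ τ in Ioc x y, g τ with hA_def
  have hA0 : ∀ y, 0 ≤ A y := fun y => setIntegral_nonneg measurableSet_Ioc fun τ _ => hg0 τ
  have hAmono : Monotone A := by
    intro y₁ y₂ h
    exact setIntegral_mono_set (hint y₂) (ae_of_all _ hg0)
      (HasSubset.Subset.eventuallyLE (Ioc_subset_Ioc_right h))
  have hA_meas : Measurable A := hAmono.measurable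
  have hOfRealA : ∀ y, ∫⁻ τ in Ioc x y, ENNReal.ofReal (g τ) = ENNReal.ofReal (A y) :=
    fun y => (ofReal_integral_eq_lintegral_ofReal (hint y) (ae_of_all _ hg0)).symm
  set μ' : Measure ℝ := volume.withDensity (fun τ => ENNReal.ofReal (g τ)) with hμ'_def
  have hμ'_apply : ∀ S : Set ℝ, MeasurableSet S → μ' S = ∫⁻ τ in S, ENNReal.ofReal (g τ) :=
    fun S hS => withDensity_apply _ hS
  -- the key measure estimate
  have claim : ∀ t : ℝ, μ' (Ioi x ∩ {y | A y < t}) ≤ ENNReal.ofReal t := by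
    intro t
    rcases le_or_gt t 0 with ht | ht
    · have : Ioi x ∩ {y | A y < t} = ∅ := by
        ext y; simp only [mem_inter_iff, mem_Ioi, mem_setOf_eq, mem_empty_iff_false, iff_false]
        rintro ⟨-, hy⟩; exact absurd (lt_of_le_of_lt (hA0 y) hy) (not_lt.2 ht)
      simp [this]
    · set T := Ioi x ∩ {y | A y < t} with hT_def
      have hT_init : ∀ y ∈ T, Ioc x y ⊆ T := by
        rintro y ⟨hy1, hy2⟩ z hz
        exact ⟨hz.1, lt_of_le_of_lt (hAmono hz.2) hy2⟩
      have hTn : T = ⋃ n : ℕ, T ∩ Ioc x (x + n + 1) := by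
        ext y; simp only [mem_iUnion, mem_inter_iff]
        constructor
        · intro hy
          obtain ⟨n, hn⟩ := exists_nat_gt (y - x)
          exact ⟨n, hy, hy.1, by linarith⟩
        · rintro ⟨n, hn, -⟩; exact hn
      have hmono : Monotone (fun n : ℕ => T ∩ Ioc x (x + n + 1)) := by
        intro m n hmn
        exact inter_subset_inter_right _ (Ioc_subset_Ioc_right (by
          have : (m : ℝ) ≤ n := Nat.cast_le.2 hmn
          linarith))
      rw [hTn, (hmono.directed_le).measure_iUnion]
      refine iSup_le fun n => ?_
      rcases (T ∩ Ioc x (x + n + 1)).eq_empty_or_nonempty with hne | hne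
      · simp [hne]
      · set b := sSup (T ∩ Ioc x (x + n + 1)) with hb_def
        have hbdd : BddAbove (T ∩ Ioc x (x + n + 1)) := ⟨x + n + 1, fun y hy => hy.2.2⟩
        obtain ⟨y₀, hy₀⟩ := hne
        have hxb : x < b := lt_of_lt_of_le hy₀.1.1 (le_csSup hbdd hy₀)
        have hsub : T ∩ Ioc x (x + n + 1) ⊆ Ioc x b := fun y hy => ⟨hy.1.1, le_csSup hbdd hy⟩
        have hIoo : Ioo x b ⊆ T := by
          intro z hz
          obtain ⟨y, hyT, hzy⟩ := exists_lt_of_lt_csSup ⟨y₀, hy₀⟩ hz.2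
          exact hT_init y hyT.1 ⟨hz.1, hzy.le⟩
        set z : ℕ → ℝ := fun k => b - (b - x) / (k + 1) with hz_def
        have hzb : ∀ k, z k < b := fun k =>
          sub_lt_self b (div_pos (by linarith) (by positivity))
        have hzmono : Monotone z := by
          intro k l hkl
          have h1 : (0:ℝ) < k + 1 := by positivity
          have h2 : (k:ℝ) + 1 ≤ l + 1 := by
            have : (k : ℝ) ≤ l := Nat.cast_le.2 hkl
            linarith
          have := div_le_div_of_nonneg_left (by linarith : (0:ℝ) ≤ b - x) h1 h2
          simp only [hz_def]
          linarith
        have hIoo_eq : Ioo x b = ⋃ k, Ioc x (z k) := by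
          ext w
          simp only [mem_Ioo, mem_iUnion, mem_Ioc]
          constructor
          · rintro ⟨hw1, hw2⟩
            obtain ⟨k, hk⟩ := exists_nat_gt ((b - x) / (b - w))
            refine ⟨k, hw1, ?_⟩
            have hbw : 0 < b - w := by linarith
            have hk1 : (b - x) / (b - w) < k + 1 := by linarith
            have : (b - x) / (k + 1) < b - w := by
              rw [div_lt_iff₀ (by positivity)]
              rw [div_lt_iff₀ hbw] at hk1
              linarith [mul_comm (b - w) ((k:ℝ) + 1)]
            simp only [hz_def]; linarith
          · rintro ⟨k, hw1, hw2⟩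
            exact ⟨hw1, lt_of_le_of_lt hw2 (hzb k)⟩
        have hIocz : ∀ k, μ' (Ioc x (z k)) ≤ ENNReal.ofReal t := by
          intro k
          rw [hμ'_apply _ measurableSet_Ioc, hOfRealA]
          rcases le_or_gt (z k) x with hzx | hzx
          · refine ENNReal.ofReal_le_ofReal ?_
            have : Ioc x (z k) = ∅ := Ioc_eq_empty (not_lt.2 hzx)
            simp only [hA_def, this, Measure.restrict_empty, integral_zero_measure]
            exact ht.le
          · exact ENNReal.ofReal_le_ofReal (hIoo ⟨hzx, hzb k⟩).2.le
        have hμIoo : μ' (Ioo x b) ≤ ENNReal.ofReal t := by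
          have hmz : Monotone (fun k => Ioc x (z k)) := fun k l hkl =>
            Ioc_subset_Ioc_right (hzmono hkl)
          have hdir : Directed (· ⊆ ·) (fun k => Ioc x (z k)) := hmz.directed_le
          rw [hIoo_eq, hdir.measure_iUnion]
          exact iSup_le hIocz
        have hIocb : μ' (Ioc x b) ≤ ENNReal.ofReal t := by
          have hb0 : μ' {b} = 0 := by
            refine (withDensity_absolutelyContinuous volume _) ?_
            simp
          calc μ' (Ioc x b) ≤ μ' (Ioo x b ∪ {b}) := by
                refine measure_mono ?_
                intro w hw
                rcases eq_or_lt_of_le hw.2 with h | h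
                · exact Or.inr (by simp [h])
                · exact Or.inl ⟨hw.1, h⟩
            _ ≤ μ' (Ioo x b) + μ' {b} := measure_union_le _ _
            _ ≤ ENNReal.ofReal t + 0 := by rw [hb0]; exact add_le_add_left hμIoo 0
            _ = ENNReal.ofReal t := by simp
        exact le_trans (measure_mono hsub) hIocb
  -- rewrite exp as a tail integral
  have hexp : ∀ y : ℝ, ENNReal.ofReal (Real.exp (-(A y))) =
      ∫⁻ t, (Ioi (A y)).indicator (fun t => ENNReal.ofReal (Real.exp (-t))) t := by
    intro y
    rw [lintegral_indicator measurableSet_Ioi]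
    have hI : IntegrableOn (fun t => Real.exp (-t)) (Ioi (A y)) := by
      simpa using exp_neg_integrableOn_Ioi (A y) one_pos
    rw [← ofReal_integral_eq_lintegral_ofReal hI (ae_of_all _ fun t => (Real.exp_pos _).le),
      integral_exp_neg_Ioi]
  set Q : ℝ → ℝ → ℝ≥0∞ := fun y t => ENNReal.ofReal (g y) *
      ({p : ℝ × ℝ | A p.1 < p.2}.indicator (fun p => ENNReal.ofReal (Real.exp (-p.2))) (y, t))
    with hQ_def
  have hS_meas : MeasurableSet {p : ℝ × ℝ | A p.1 < p.2} :=
    measurableSet_lt (hA_meas.comp measurable_fst) measurable_snd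
  have hQ_meas : Measurable (Function.uncurry Q) := by
    apply Measurable.mul
    · exact ENNReal.measurable_ofReal.comp (hg_meas.comp measurable_fst)
    · exact Measurable.indicator
        (ENNReal.measurable_ofReal.comp (Real.measurable_exp.comp measurable_snd.neg)) hS_meas
  have hAset_meas : ∀ t : ℝ, MeasurableSet {y : ℝ | A y < t} := fun t =>
    measurableSet_lt hA_meas measurable_const
  calc ∫⁻ y in Ioi x, ENNReal.ofReal (g y) * ENNReal.ofReal (Real.exp (-A y))
      = ∫⁻ y in Ioi x, ∫⁻ t, Q y t := by
        refine lintegral_congr fun y => ?_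
        rw [hexp y, ← lintegral_const_mul' _ _ ENNReal.ofReal_ne_top]
        refine lintegral_congr fun t => ?_
        by_cases h : A y < t <;> simp [hQ_def, Set.indicator, h]
    _ = ∫⁻ t, ∫⁻ y in Ioi x, Q y t := lintegral_lintegral_swap hQ_meas.aemeasurable
    _ ≤ ∫⁻ t, ENNReal.ofReal (Real.exp (-t)) * ENNReal.ofReal t := by
        refine lintegral_mono fun t => ?_
        have hpt : ∀ y : ℝ, Q y t = ({y : ℝ | A y < t}).indicator
            (fun y => ENNReal.ofReal (g y) * ENNReal.ofReal (Real.exp (-t))) y := by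
          intro y; by_cases h : A y < t <;> simp [hQ_def, Set.indicator, h]
        rw [lintegral_congr hpt, lintegral_indicator (hAset_meas t),
          Measure.restrict_restrict (hAset_meas t),
          lintegral_mul_const' _ _ ENNReal.ofReal_ne_top]
        rw [mul_comm (ENNReal.ofReal (Real.exp (-t))) (ENNReal.ofReal t)]
        refine mul_le_mul_left ?_ _
        calc ∫⁻ a in {y | A y < t} ∩ Ioi x, ENNReal.ofReal (g a)
            = μ' (Ioi x ∩ {y | A y < t}) := by
              rw [hμ'_apply _ (measurableSet_Ioi.inter (hAset_meas t)), inter_comm]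
          _ ≤ ENNReal.ofReal t := claim t
    _ = ∫⁻ t, ENNReal.ofReal (Real.exp (-t) * t) := by
        refine lintegral_congr fun t => ?_
        rcases le_or_gt 0 t with h | h
        · rw [ENNReal.ofReal_mul (Real.exp_pos _).le]
        · rw [ENNReal.ofReal_eq_zero.2 h.le, mul_zero, eq_comm, ENNReal.ofReal_eq_zero]
          nlinarith [Real.exp_pos (-t)]
    _ = ∫⁻ t in Ioi 0, ENNReal.ofReal (Real.exp (-t) * t) := by
        rw [← lintegral_indicator measurableSet_Ioi]
        refine lintegral_congr fun t => ?_
        rcases le_or_gt t 0 with h | h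
        · have h1 : Real.exp (-t) * t ≤ 0 := by nlinarith [Real.exp_pos (-t)]
          simp [Set.indicator, not_lt.2 h, ENNReal.ofReal_eq_zero.2 h1]
        · simp [Set.indicator, h]
    _ ≤ 1 := by
        have hcover : Ioi (0:ℝ) = ⋃ n : ℕ, Ioc 0 (n:ℝ) := by
          ext t; simp only [mem_Ioi, mem_iUnion, mem_Ioc]
          exact ⟨fun h => (exists_nat_gt t).imp fun n hn => ⟨h, hn.le⟩, fun ⟨n, h, _⟩ => h⟩
        have hmono2 : Monotone (fun n : ℕ => Ioc (0:ℝ) (n:ℝ)) := fun m n hmn =>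
          Ioc_subset_Ioc_right (Nat.cast_le.2 hmn)
        have hM : ∫⁻ t in Ioi 0, ENNReal.ofReal (Real.exp (-t) * t)
            = (volume.withDensity fun t => ENNReal.ofReal (Real.exp (-t) * t)) (Ioi 0) :=
          (withDensity_apply _ measurableSet_Ioi).symm
        rw [hM, hcover, hmono2.directed_le.measure_iUnion]
        refine iSup_le fun n => ?_
        rw [withDensity_apply _ measurableSet_Ioc]
        have hcont : Continuous fun t : ℝ => Real.exp (-t) * t :=
          (Real.continuous_exp.comp continuous_neg).mul continuous_id
        have hInt : IntegrableOn (fun t => Real.exp (-t) * t) (Ioc (0:ℝ) (n:ℝ)) :=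
          hcont.integrableOn_Ioc
        have hnn : 0 ≤ᵐ[volume.restrict (Ioc (0:ℝ) (n:ℝ))] fun t => Real.exp (-t) * t := by
          refine (ae_restrict_iff' measurableSet_Ioc).2 (ae_of_all _ fun t ht => ?_)
          have := ht.1
          positivity
        rw [← ofReal_integral_eq_lintegral_ofReal hInt hnn]
        have h0n : (0:ℝ) ≤ (n:ℝ) := Nat.cast_nonneg n
        rw [← intervalIntegral.integral_of_le h0n]
        have hftc : ∫ t in (0:ℝ)..(n:ℝ), Real.exp (-t) * t
            = (fun s : ℝ => -((1+s) * Real.exp (-s))) (n:ℝ)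
              - (fun s : ℝ => -((1+s) * Real.exp (-s))) (0:ℝ) := by
          refine intervalIntegral.integral_eq_sub_of_hasDerivAt
            (f := fun s : ℝ => -((1+s) * Real.exp (-s))) (fun t ht => ?_)
            (hcont.intervalIntegrable _ _)
          ·
            have h1 : HasDerivAt (fun t : ℝ => 1 + t) 1 t := (hasDerivAt_id t).const_add 1
            have h2 : HasDerivAt (fun t : ℝ => Real.exp (-t)) (-Real.exp (-t)) t := by
              simpa using ((hasDerivAt_id t).neg).exp
            have h3 := (h1.mul h2).neg
            convert h3 using 1
            · rfl
            · ring
        rw [hftc]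
        have hfin : (fun s : ℝ => -((1+s) * Real.exp (-s))) (n:ℝ)
            - (fun s : ℝ => -((1+s) * Real.exp (-s))) (0:ℝ) ≤ 1 := by
          have h1 : (0:ℝ) ≤ (1+(n:ℝ)) * Real.exp (-(n:ℝ)) := by positivity
          simp only [neg_zero, Real.exp_zero]
          linarith
        calc ENNReal.ofReal _ ≤ ENNReal.ofReal 1 := ENNReal.ofReal_le_ofReal hfin
          _ = 1 := ENNReal.ofReal_one


/-- Smoothing effect of the resolvent of the growth–absorption semigroup in
`X_{0,α} = L¹((0,∞), (1+x)^α dx)`: if `0 < r(z) ≤ C(1+z)`, `a ≥ 0` is locally integrable on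
`(0,∞)`, `λ ≥ αC` and `f ≥ 0` has finite `X_{0,α}`-norm, then
`∫₀^∞ (R_λ f)(y) a(y) (1+y)^α dy ≤ ∫₀^∞ f(x) (1+x)^α dx`, where
`(R_λ f)(y) = (1/r(y)) ∫₀^y exp(−∫ₓ^y (λ+a(τ))/r(τ) dτ) f(x) dx`. -/
theorem stmt2 (α C : ℝ) (hα : 0 < α) (hC : 0 < C) (r : ℝ → ℝ)
    (hr_cont : ContinuousOn r (Ioi (0 : ℝ)))
    (hr_pos : ∀ z > (0 : ℝ), 0 < r z) (hr_le : ∀ z > (0 : ℝ), r z ≤ C * (1 + z))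
    (a : ℝ → ℝ) (ha_meas : Measurable a) (ha_nonneg : ∀ x > (0 : ℝ), 0 ≤ a x)
    (ha_loc : LocallyIntegrableOn a (Ioi (0 : ℝ)))
    (lam : ℝ) (hlam : α * C ≤ lam)
    (f : ℝ → ℝ) (hf_meas : Measurable f) (hf_nonneg : ∀ x > (0 : ℝ), 0 ≤ f x)
    (hf_int : ∫⁻ x in Ioi (0 : ℝ), ENNReal.ofReal (f x * (1 + x) ^ α) < ⊤) :
    ∫⁻ y in Ioi (0 : ℝ),
        ENNReal.ofReal
          (((1 / r y) * ∫ x in Ioo (0 : ℝ) y,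
              Real.exp (-(∫ τ in x..y, (lam + a τ) / r τ)) * f x) * a y * (1 + y) ^ α)
      ≤ ∫⁻ x in Ioi (0 : ℝ), ENNReal.ofReal (f x * (1 + x) ^ α) := by
  classical
  -- measurable modification of r
  obtain ⟨r₀, hr₀_meas, hr₀_eq, hr₀_pos⟩ :
      ∃ r₀ : ℝ → ℝ, Measurable r₀ ∧ (∀ z ∈ Ioi (0:ℝ), r₀ z = r z) ∧ (∀ z, 0 < r₀ z) := by
    refine ⟨fun z => if 0 < z then r z else 1, ?_, fun z hz => if_pos hz, fun z => ?_⟩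
    · apply measurable_of_isOpen
      intro U hU
      have hpre : (fun z => if 0 < z then r z else 1) ⁻¹' U
          = (Ioi 0 ∩ r ⁻¹' U) ∪ (if (1:ℝ) ∈ U then Iic 0 else ∅) := by
        ext z
        simp only [mem_preimage, mem_union, mem_inter_iff, mem_Ioi, mem_Iic]
        by_cases hz : 0 < z <;> by_cases h1 : (1:ℝ) ∈ U
        · simp [hz, h1, not_le.2 hz]
        · simp [hz, h1, not_le.2 hz]
        · have hz' : z ≤ 0 := le_of_not_gt hz
          simp [hz, h1, hz']
        · have hz' : z ≤ 0 := le_of_not_gt hz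
          simp [hz, h1, hz']
      rw [hpre]
      refine MeasurableSet.union
        (hr_cont.isOpen_inter_preimage isOpen_Ioi hU).measurableSet ?_
      split <;> simp
    · dsimp only
      split
      · exact hr_pos _ ‹_›
      · exact one_pos
  have hr₀_cont : ContinuousOn r₀ (Ioi (0:ℝ)) := hr_cont.congr hr₀_eq
  set g : ℝ → ℝ := (Ioi (0:ℝ)).indicator (fun τ => a τ / r₀ τ) with hg_def
  set l : ℝ → ℝ := (Ioi (0:ℝ)).indicator (fun τ => lam / r₀ τ) with hl_def
  set h₀ : ℝ → ℝ := (Ioi (0:ℝ)).indicator (fun τ => (lam + a τ) / r₀ τ) with hh_def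
  have hlam_pos : 0 < lam := lt_of_lt_of_le (mul_pos hα hC) hlam
  have hg_meas : Measurable g := (ha_meas.div hr₀_meas).indicator measurableSet_Ioi
  have hh_meas : Measurable h₀ :=
    ((measurable_const.add ha_meas).div hr₀_meas).indicator measurableSet_Ioi
  have hg0 : ∀ τ, 0 ≤ g τ := by
    intro τ; by_cases hτ : τ ∈ Ioi (0:ℝ)
    · rw [hg_def, indicator_of_mem hτ]
      exact div_nonneg (ha_nonneg τ hτ) (hr₀_pos τ).le
    · rw [hg_def, indicator_of_notMem hτ]
  have hh0 : ∀ τ, 0 ≤ h₀ τ := by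
    intro τ; by_cases hτ : τ ∈ Ioi (0:ℝ)
    · rw [hh_def, indicator_of_mem hτ]
      exact div_nonneg (by have := ha_nonneg τ hτ; linarith) (hr₀_pos τ).le
    · rw [hh_def, indicator_of_notMem hτ]
  have hhlg : ∀ τ, h₀ τ = l τ + g τ := by
    intro τ; by_cases hτ : τ ∈ Ioi (0:ℝ) <;>
      simp [hh_def, hl_def, hg_def, indicator, hτ, add_div]
  -- integrability facts
  have hIcc_sub : ∀ {x y : ℝ}, 0 < x → Icc x y ⊆ Ioi (0:ℝ) :=
    fun {x y} hx z hz => lt_of_lt_of_le hx hz.1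
  have hg_int : ∀ {x : ℝ}, 0 < x → ∀ y : ℝ, IntegrableOn g (Ioc x y) := by
    intro x hx y
    rcases le_or_gt y x with h | h
    · rw [Ioc_eq_empty (not_lt.2 h)]; exact integrableOn_empty
    · have hIcc : Icc x y ⊆ Ioi (0:ℝ) := hIcc_sub hx
      have ha' : IntegrableOn a (Icc x y) :=
        ha_loc.integrableOn_compact_subset hIcc isCompact_Icc
      have hrinv : ContinuousOn (fun τ => (r₀ τ)⁻¹) (Icc x y) :=
        ((hr₀_cont.mono hIcc).inv₀ (fun τ _ => (hr₀_pos τ).ne'))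
      have hI : IntegrableOn (fun τ => a τ * (r₀ τ)⁻¹) (Icc x y) :=
        ha'.mul_continuousOn hrinv isCompact_Icc
      refine ((hI.mono_set Ioc_subset_Icc_self).congr_fun ?_ measurableSet_Ioc)
      intro τ hτ
      rw [hg_def, indicator_of_mem (hIcc (Ioc_subset_Icc_self hτ)), div_eq_mul_inv]
  have hl_int : ∀ {x : ℝ}, 0 < x → ∀ y : ℝ, IntegrableOn l (Ioc x y) := by
    intro x hx y
    rcases le_or_gt y x with h | h
    · rw [Ioc_eq_empty (not_lt.2 h)]; exact integrableOn_empty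
    · have hIcc : Icc x y ⊆ Ioi (0:ℝ) := hIcc_sub hx
      have hcont : ContinuousOn (fun τ => lam / r₀ τ) (Icc x y) :=
        continuousOn_const.div (hr₀_cont.mono hIcc) (fun τ _ => (hr₀_pos τ).ne')
      have hI : IntegrableOn (fun τ => lam / r₀ τ) (Icc x y) :=
        hcont.integrableOn_compact isCompact_Icc
      refine ((hI.mono_set Ioc_subset_Icc_self).congr_fun ?_ measurableSet_Ioc)
      intro τ hτ
      rw [hl_def, indicator_of_mem (hIcc (Ioc_subset_Icc_self hτ))]
  have hh_int : ∀ {x : ℝ}, 0 < x → ∀ y : ℝ, IntegrableOn h₀ (Ioc x y) := by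
    intro x hx y
    have : h₀ = fun τ => l τ + g τ := funext hhlg
    rw [this]
    exact (hl_int hx y).add (hg_int hx y)
  -- the joint kernel
  set Λ : ℝ × ℝ → ℝ := fun p => (∫⁻ τ in Ioc p.1 p.2, ENNReal.ofReal (h₀ τ)).toReal
    with hΛ_def
  have hΛ_meas : Measurable Λ := by
    have hrepr : ∀ p : ℝ × ℝ, (∫⁻ τ in Ioc p.1 p.2, ENNReal.ofReal (h₀ τ))
        = ∫⁻ τ, ({q : (ℝ × ℝ) × ℝ | q.1.1 < q.2 ∧ q.2 ≤ q.1.2}.indicator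
            (fun q => ENNReal.ofReal (h₀ q.2)) (p, τ)) := by
      intro p
      rw [← lintegral_indicator measurableSet_Ioc]
      refine lintegral_congr fun τ => ?_
      by_cases hτ : τ ∈ Ioc p.1 p.2
      · rw [indicator_of_mem hτ, indicator_of_mem (by exact ⟨hτ.1, hτ.2⟩)]
      · rw [indicator_of_notMem hτ, indicator_of_notMem (by
          intro hq; exact hτ ⟨hq.1, hq.2⟩)]
    have hq_meas : Measurable fun q : (ℝ × ℝ) × ℝ =>
        ({q : (ℝ × ℝ) × ℝ | q.1.1 < q.2 ∧ q.2 ≤ q.1.2}.indicator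
          (fun q => ENNReal.ofReal (h₀ q.2)) q) := by
      refine Measurable.indicator
        (ENNReal.measurable_ofReal.comp (hh_meas.comp measurable_snd)) ?_
      exact MeasurableSet.inter
        (measurableSet_lt (measurable_fst.fst) measurable_snd)
        (measurableSet_le measurable_snd (measurable_fst.snd))
    refine Measurable.ennreal_toReal ?_
    have h2 : (fun p : ℝ × ℝ => ∫⁻ τ in Ioc p.1 p.2, ENNReal.ofReal (h₀ τ))
        = fun p => ∫⁻ τ, ({q : (ℝ × ℝ) × ℝ | q.1.1 < q.2 ∧ q.2 ≤ q.1.2}.indicator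
            (fun q => ENNReal.ofReal (h₀ q.2)) (p, τ)) := funext hrepr
    rw [h2]
    exact hq_meas.lintegral_prod_right'
  -- Λ identities
  have hΛ_ioc : ∀ {x y : ℝ}, 0 < x → Λ (x, y) = ∫ τ in Ioc x y, h₀ τ := by
    intro x y hx
    rw [hΛ_def]
    rw [MeasureTheory.integral_eq_lintegral_of_nonneg_ae (ae_of_all _ fun τ => hh0 τ)
      hh_meas.aestronglyMeasurable]
  have hΛ_eq : ∀ {x y : ℝ}, 0 < x → x < y →
      (∫ τ in x..y, (lam + a τ) / r τ) = Λ (x, y) := by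
    intro x y hx hxy
    rw [intervalIntegral.integral_of_le hxy.le]
    have hIoc_sub : Ioc x y ⊆ Ioi (0:ℝ) := fun z hz => lt_trans hx hz.1
    have h1 : ∫ τ in Ioc x y, (lam + a τ) / r τ = ∫ τ in Ioc x y, h₀ τ := by
      refine setIntegral_congr_fun measurableSet_Ioc fun τ hτ => ?_
      rw [hh_def, indicator_of_mem (hIoc_sub hτ), hr₀_eq τ (hIoc_sub hτ)]
    rw [h1, hΛ_ioc hx]
  have hΛ_split : ∀ {x y : ℝ}, 0 < x →
      Λ (x, y) = (∫ τ in Ioc x y, l τ) + (∫ τ in Ioc x y, g τ) := by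
    intro x y hx
    rw [hΛ_ioc hx]
    have : (fun τ => h₀ τ) = fun τ => l τ + g τ := funext hhlg
    rw [this]
    exact integral_add (hl_int hx y) (hg_int hx y)
  -- auxiliary real quantities
  set c : ℝ → ℝ := fun y => a y * (1+y)^α / r₀ y with hc_def
  have hc_nonneg : ∀ y ∈ Ioi (0:ℝ), 0 ≤ c y := by
    intro y hy
    have h1y : (0:ℝ) ≤ 1 + y := by have : (0:ℝ) < y := hy; linarith
    exact div_nonneg (mul_nonneg (ha_nonneg y hy) (Real.rpow_nonneg h1y _)) (hr₀_pos y).le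
  have hc_meas : Measurable c :=
    (ha_meas.mul ((measurable_const.add measurable_id).pow_const _)).div hr₀_meas
  set S : Set (ℝ × ℝ) := {p : ℝ × ℝ | 0 < p.1 ∧ p.1 < p.2} with hS_def
  have hS_meas : MeasurableSet S :=
    MeasurableSet.inter (measurableSet_lt measurable_const measurable_fst)
      (measurableSet_lt measurable_fst measurable_snd)
  set W : ℝ × ℝ → ℝ≥0∞ := fun p => S.indicator
      (fun p => ENNReal.ofReal (f p.1) * ENNReal.ofReal (c p.2) *
        ENNReal.ofReal (Real.exp (-Λ p))) p with hW_def
  have hW_meas : Measurable W := by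
    refine Measurable.indicator ?_ hS_meas
    exact ((ENNReal.measurable_ofReal.comp (hf_meas.comp measurable_fst)).mul
      (ENNReal.measurable_ofReal.comp (hc_meas.comp measurable_snd))).mul
      (ENNReal.measurable_ofReal.comp (Real.measurable_exp.comp hΛ_meas.neg))
  -- Step 1 : pointwise bound in y
  have step1 : ∀ y ∈ Ioi (0:ℝ),
      ENNReal.ofReal (((1 / r y) * ∫ x in Ioo (0:ℝ) y,
          Real.exp (-(∫ τ in x..y, (lam + a τ) / r τ)) * f x) * a y * (1+y)^α)
        ≤ ∫⁻ x, W (x, y) := by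
    intro y hy
    have hI : (∫ x in Ioo (0:ℝ) y, Real.exp (-(∫ τ in x..y, (lam + a τ) / r τ)) * f x)
        = ∫ x in Ioo (0:ℝ) y, Real.exp (-Λ (x, y)) * f x := by
      refine setIntegral_congr_fun measurableSet_Ioo fun x hx => ?_
      rw [hΛ_eq hx.1 hx.2]
    rw [hI]
    have hry : r y = r₀ y := (hr₀_eq y hy).symm
    have hrearr : ((1 / r y) * ∫ x in Ioo (0:ℝ) y, Real.exp (-Λ (x, y)) * f x) * a y * (1+y)^α
        = ∫ x in Ioo (0:ℝ) y, c y * (Real.exp (-Λ (x, y)) * f x) := by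
      rw [MeasureTheory.integral_const_mul, hry, hc_def]
      have hne := (hr₀_pos y).ne'
      field_simp
    rw [hrearr]
    calc ENNReal.ofReal (∫ x in Ioo (0:ℝ) y, c y * (Real.exp (-Λ (x, y)) * f x))
        ≤ ∫⁻ x in Ioo (0:ℝ) y, ENNReal.ofReal (c y * (Real.exp (-Λ (x, y)) * f x)) := by
          refine aux_ofReal_integral_le ?_
          refine (ae_restrict_iff' measurableSet_Ioo).2 (ae_of_all _ fun x hx => ?_)
          exact mul_nonneg (hc_nonneg y hy)
            (mul_nonneg (Real.exp_nonneg _) (hf_nonneg x hx.1))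
      _ = ∫⁻ x, W (x, y) := by
          rw [← lintegral_indicator measurableSet_Ioo]
          refine lintegral_congr fun x => ?_
          by_cases hx : x ∈ Ioo (0:ℝ) y
          · rw [indicator_of_mem hx]
            simp only [hW_def]
            rw [indicator_of_mem (show ((x : ℝ), y) ∈ S from ⟨hx.1, hx.2⟩)]
            rw [ENNReal.ofReal_mul (hc_nonneg y hy), ENNReal.ofReal_mul (Real.exp_nonneg _)]
            ring
          · rw [indicator_of_notMem hx]
            simp only [hW_def]
            rw [indicator_of_notMem (show ((x : ℝ), y) ∉ S from fun h => hx ⟨h.1, h.2⟩)]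
  -- Step 3 : inner bound in x
  have step3 : ∀ x ∈ Ioi (0:ℝ),
      ∫⁻ y, W (x, y) ≤ ENNReal.ofReal (f x) * ENNReal.ofReal ((1+x)^α) := by
    intro x hx
    have hx0 : (0:ℝ) < x := hx
    have hWx : ∀ y, W (x, y) = (Ioi x).indicator
        (fun y => ENNReal.ofReal (f x) * (ENNReal.ofReal (c y) *
          ENNReal.ofReal (Real.exp (-Λ (x, y))))) y := by
      intro y
      by_cases hy : x < y
      · simp only [hW_def]
        rw [indicator_of_mem (show ((x : ℝ), y) ∈ S from ⟨hx0, hy⟩),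
          indicator_of_mem (show y ∈ Ioi x from hy), mul_assoc]
      · simp only [hW_def]
        rw [indicator_of_notMem (show ((x : ℝ), y) ∉ S from fun h => hy h.2),
          indicator_of_notMem (show y ∉ Ioi x from hy)]
    rw [lintegral_congr hWx, lintegral_indicator measurableSet_Ioi,
      lintegral_const_mul' _ _ ENNReal.ofReal_ne_top]
    refine mul_le_mul_right ?_ _
    have h1x : (0:ℝ) < 1 + x := by linarith
    -- pointwise bound
    have hpt : ∀ y ∈ Ioi x, ENNReal.ofReal (c y) * ENNReal.ofReal (Real.exp (-Λ (x, y)))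
        ≤ ENNReal.ofReal ((1+x)^α) * (ENNReal.ofReal (g y) *
          ENNReal.ofReal (Real.exp (-(∫ τ in Ioc x y, g τ)))) := by
      intro y hy
      have hxy : x < y := hy
      have hy0 : (0:ℝ) < y := lt_trans hx0 hxy
      have h1y : (0:ℝ) < 1 + y := by linarith
      have hreal : c y * Real.exp (-Λ (x, y))
          ≤ (1+x)^α * (g y * Real.exp (-(∫ τ in Ioc x y, g τ))) := by
        set L := ∫ τ in Ioc x y, l τ with hL
        set G := ∫ τ in Ioc x y, g τ with hG
        have hsplit := hΛ_split (x := x) (y := y) hx0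
        have hlog_int : ∫ τ in Ioc x y, α * (1+τ)⁻¹
            = α * Real.log (1+y) - α * Real.log (1+x) := by
          rw [← intervalIntegral.integral_of_le hxy.le]
          have hder : ∫ τ in x..y, α * (1+τ)⁻¹
              = (fun τ : ℝ => α * Real.log (1+τ)) y
                - (fun τ : ℝ => α * Real.log (1+τ)) x := by
            refine intervalIntegral.integral_eq_sub_of_hasDerivAt
              (f := fun τ : ℝ => α * Real.log (1+τ))
              (f' := fun τ : ℝ => α * (1+τ)⁻¹) (fun τ hτ => ?_) ?_
            · rw [uIcc_of_le hxy.le] at hτ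
              have hτ0 : (0:ℝ) < 1 + τ := by
                have := hτ.1; linarith
              have hd : HasDerivAt (fun τ : ℝ => 1 + τ) 1 τ := (hasDerivAt_id τ).const_add 1
              have := (hd.log hτ0.ne').const_mul α
              convert this using 1
              · rfl
              · simp
            · refine ContinuousOn.intervalIntegrable ?_
              refine continuousOn_const.mul (ContinuousOn.inv₀
                ((continuous_const.add continuous_id).continuousOn) fun τ hτ => ?_)
              rw [uIcc_of_le hxy.le] at hτ
              have : (0:ℝ) < 1 + τ := by have := hτ.1; linarith
              exact this.ne'
          rw [hder]
        have hmono_int : ∫ τ in Ioc x y, α * (1+τ)⁻¹ ≤ L := by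
          refine setIntegral_mono_on ?_ (hl_int hx0 y) measurableSet_Ioc fun τ hτ => ?_
          · have hc1 : ContinuousOn (fun τ : ℝ => α * (1+τ)⁻¹) (Icc x y) := by
              refine continuousOn_const.mul (ContinuousOn.inv₀
                ((continuous_const.add continuous_id).continuousOn) fun τ hτ => ?_)
              have : (0:ℝ) < 1 + τ := by have := hτ.1; linarith
              exact this.ne'
            exact (hc1.integrableOn_compact isCompact_Icc).mono_set Ioc_subset_Icc_self
          · have hτ0 : 0 < τ := lt_trans hx0 hτ.1
            rw [hl_def, indicator_of_mem (show τ ∈ Ioi (0:ℝ) from hτ0),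
              hr₀_eq τ (show τ ∈ Ioi (0:ℝ) from hτ0)]
            have hr_pos' := hr_pos τ hτ0
            have hr_le' := hr_le τ hτ0
            have h1τ : (0:ℝ) < 1 + τ := by linarith
            rw [show α * (1+τ)⁻¹ = α / (1+τ) by rw [div_eq_mul_inv]]
            rw [div_le_div_iff₀ h1τ hr_pos']
            nlinarith
        have hLge : α * Real.log (1+y) - α * Real.log (1+x) ≤ L :=
          hlog_int ▸ hmono_int
        have hexpL : (1+y)^α * Real.exp (-L) ≤ (1+x)^α := by
          have h1 : Real.exp (-L) ≤ Real.exp (-(α * Real.log (1+y) - α * Real.log (1+x))) :=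
            Real.exp_le_exp.2 (neg_le_neg hLge)
          have h2 : Real.exp (-(α * Real.log (1+y) - α * Real.log (1+x)))
              = (1+x)^α / (1+y)^α := by
            rw [Real.rpow_def_of_pos h1x, Real.rpow_def_of_pos h1y, ← Real.exp_sub]
            ring_nf
          have hypos : (0:ℝ) < (1+y)^α := Real.rpow_pos_of_pos h1y _
          calc (1+y)^α * Real.exp (-L)
              ≤ (1+y)^α * ((1+x)^α / (1+y)^α) := by
                rw [← h2]
                exact mul_le_mul_of_nonneg_left h1 (Real.rpow_nonneg h1y.le _)
            _ = (1+x)^α := by field_simp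
        have hcy : c y = a y / r₀ y * (1+y)^α := by rw [hc_def]; ring
        have hgy : g y = a y / r₀ y := by
          rw [hg_def]; exact indicator_of_mem (show y ∈ Ioi (0:ℝ) from hy0) _
        rw [hsplit, neg_add, Real.exp_add, hcy, hgy]
        have h0 : 0 ≤ a y / r₀ y := div_nonneg (ha_nonneg y hy0) (hr₀_pos y).le
        calc a y / r₀ y * (1+y)^α * (Real.exp (-L) * Real.exp (-G))
            = (a y / r₀ y * Real.exp (-G)) * ((1+y)^α * Real.exp (-L)) := by ring
          _ ≤ (a y / r₀ y * Real.exp (-G)) * (1+x)^α := by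
              refine mul_le_mul_of_nonneg_left hexpL ?_
              positivity
          _ = (1+x)^α * (a y / r₀ y * Real.exp (-G)) := by ring
      calc ENNReal.ofReal (c y) * ENNReal.ofReal (Real.exp (-Λ (x, y)))
          = ENNReal.ofReal (c y * Real.exp (-Λ (x, y))) :=
            (ENNReal.ofReal_mul (hc_nonneg y hy0)).symm
        _ ≤ ENNReal.ofReal ((1+x)^α * (g y * Real.exp (-(∫ τ in Ioc x y, g τ)))) :=
            ENNReal.ofReal_le_ofReal hreal
        _ = _ := by
            rw [ENNReal.ofReal_mul (Real.rpow_nonneg h1x.le _),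
              ENNReal.ofReal_mul (hg0 y)]
    calc ∫⁻ y in Ioi x, ENNReal.ofReal (c y) * ENNReal.ofReal (Real.exp (-Λ (x, y)))
        ≤ ∫⁻ y in Ioi x, ENNReal.ofReal ((1+x)^α) * (ENNReal.ofReal (g y) *
            ENNReal.ofReal (Real.exp (-(∫ τ in Ioc x y, g τ)))) :=
          lintegral_mono_ae ((ae_restrict_iff' measurableSet_Ioi).2 (ae_of_all _ hpt))
      _ = ENNReal.ofReal ((1+x)^α) * ∫⁻ y in Ioi x, ENNReal.ofReal (g y) *
            ENNReal.ofReal (Real.exp (-(∫ τ in Ioc x y, g τ))) :=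
          lintegral_const_mul' _ _ ENNReal.ofReal_ne_top
      _ ≤ ENNReal.ofReal ((1+x)^α) * 1 :=
          mul_le_mul_right (aux_crux hg_meas hg0 x (hg_int hx0)) _
      _ = ENNReal.ofReal ((1+x)^α) := mul_one _
  -- assemble everything
  calc ∫⁻ y in Ioi (0:ℝ), ENNReal.ofReal
          (((1 / r y) * ∫ x in Ioo (0 : ℝ) y,
              Real.exp (-(∫ τ in x..y, (lam + a τ) / r τ)) * f x) * a y * (1 + y) ^ α)
      ≤ ∫⁻ y in Ioi (0:ℝ), ∫⁻ x, W (x, y) :=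
        lintegral_mono_ae ((ae_restrict_iff' measurableSet_Ioi).2 (ae_of_all _ step1))
    _ = ∫⁻ y, ∫⁻ x, W (x, y) := by
        rw [← lintegral_indicator measurableSet_Ioi]
        refine lintegral_congr fun y => ?_
        by_cases hy : y ∈ Ioi (0:ℝ)
        · rw [indicator_of_mem hy]
        · rw [indicator_of_notMem hy]
          have hz : ∀ x : ℝ, W (x, y) = 0 := fun x =>
            indicator_of_notMem (show ((x : ℝ), y) ∉ S from
              fun h => hy (show y ∈ Ioi (0:ℝ) from lt_trans h.1 h.2)) _
          simp [hz]
    _ = ∫⁻ x, ∫⁻ y, W (x, y) :=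
        lintegral_lintegral_swap ((hW_meas.comp measurable_swap).aemeasurable)
    _ = ∫⁻ x in Ioi (0:ℝ), ∫⁻ y, W (x, y) := by
        rw [← lintegral_indicator measurableSet_Ioi]
        refine lintegral_congr fun x => ?_
        by_cases hx : x ∈ Ioi (0:ℝ)
        · rw [indicator_of_mem hx]
        · rw [indicator_of_notMem hx]
          have hz : ∀ y : ℝ, W (x, y) = 0 := fun y =>
            indicator_of_notMem (show ((x : ℝ), y) ∉ S from fun h => hx h.1) _
          simp [hz]
    _ ≤ ∫⁻ x in Ioi (0:ℝ), ENNReal.ofReal (f x) * ENNReal.ofReal ((1+x)^α) :=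
        lintegral_mono_ae ((ae_restrict_iff' measurableSet_Ioi).2 (ae_of_all _ step3))
    _ = ∫⁻ x in Ioi (0:ℝ), ENNReal.ofReal (f x * (1 + x) ^ α) := by
        refine setLIntegral_congr_fun measurableSet_Ioi (fun x hx => ?_)
        rw [← ENNReal.ofReal_mul (hf_nonneg x hx)]
end

section
/- Let α > 0 and C > 0, let r : (0,∞) → ℝ be continuous with 0 < r(z) ≤ C z for all z > 0, let λ ≥ αC, and let f ∈ X_α. Then for every y > 0, |(1/r(y)) ∫₀^y exp(−λ ∫ₓ^y dτ/r(τ)) f(x) dx| ≤ ‖f‖_{X_α} / (y^α r(y)). -/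
open MeasureTheory Set

/-- Pointwise estimate for the resolvent of the growth semigroup in
`X_α = L¹((0,∞), x^α dx)`: if `0 < r(z) ≤ C z` and `λ ≥ αC`, then for every `y > 0`,
`|(1/r(y)) ∫₀^y exp(−λ ∫ₓ^y dτ/r(τ)) f(x) dx| ≤ ‖f‖_{X_α} / (y^α r(y))`. -/
theorem stmt3 (α C : ℝ) (hα : 0 < α) (hC : 0 < C) (r : ℝ → ℝ)
    (hr_cont : ContinuousOn r (Ioi (0 : ℝ)))
    (hr_pos : ∀ z > (0 : ℝ), 0 < r z) (hr_le : ∀ z > (0 : ℝ), r z ≤ C * z)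
    (lam : ℝ) (hlam : α * C ≤ lam)
    (f : ℝ → ℝ) (hf_meas : Measurable f)
    (hf_int : IntegrableOn (fun x => |f x| * x ^ α) (Ioi (0 : ℝ))) :
    ∀ y > (0 : ℝ),
      |(1 / r y) * ∫ x in Ioo (0 : ℝ) y, Real.exp (-(lam * ∫ τ in x..y, 1 / r τ)) * f x|
        ≤ (∫ x in Ioi (0 : ℝ), |f x| * x ^ α) / (y ^ α * r y) := by
  intro y hy
  have hry : 0 < r y := hr_pos y hy
  have hyα : (0:ℝ) < y ^ α := Real.rpow_pos_of_pos hy α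
  -- pointwise bound
  have key : ∀ x ∈ Ioo (0:ℝ) y,
      |Real.exp (-(lam * ∫ τ in x..y, 1 / r τ)) * f x| ≤ |f x| * x ^ α / y ^ α := by
    intro x hx
    obtain ⟨hx0, hxy⟩ := hx
    have hsub : uIcc x y ⊆ Ioi (0:ℝ) := by
      rw [uIcc_of_le hxy.le]
      intro τ hτ
      exact lt_of_lt_of_le hx0 hτ.1
    have hI1 : IntervalIntegrable (fun τ => 1 / r τ) volume x y := by
      apply ContinuousOn.intervalIntegrable
      exact ContinuousOn.div continuousOn_const (hr_cont.mono hsub)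
        (fun τ hτ => (hr_pos τ (hsub hτ)).ne')
    have hI2 : IntervalIntegrable (fun τ => 1 / (C * τ)) volume x y := by
      apply ContinuousOn.intervalIntegrable
      apply ContinuousOn.div continuousOn_const
        (continuousOn_const.mul continuousOn_id)
      intro τ hτ
      exact (mul_pos hC (hsub hτ)).ne'
    have hmono : ∫ τ in x..y, 1 / (C * τ) ≤ ∫ τ in x..y, 1 / r τ := by
      apply intervalIntegral.integral_mono_on hxy.le hI2 hI1
      intro τ hτ
      have hτ0 : 0 < τ := lt_of_lt_of_le hx0 hτ.1
      exact one_div_le_one_div_of_le (hr_pos τ hτ0) (hr_le τ hτ0)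
    have hcomp : ∫ τ in x..y, 1 / (C * τ) = Real.log (y / x) / C := by
      have : ∀ τ, 1 / (C * τ) = (1/C) * (1/τ) := by
        intro τ; field_simp
      simp_rw [this]
      rw [intervalIntegral.integral_const_mul, integral_one_div (fun h => by
        have := hsub h; simp at this)]
      ring
    have hlog : 0 ≤ Real.log (y / x) :=
      Real.log_nonneg (by rw [le_div_iff₀ hx0]; linarith)
    set I := ∫ τ in x..y, 1 / r τ with hI
    have hI0 : Real.log (y / x) / C ≤ I := hcomp ▸ hmono
    have hInn : 0 ≤ I := le_trans (div_nonneg hlog hC.le) hI0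
    have hstep : α * Real.log (y / x) ≤ lam * I := by
      have h1 : α * Real.log (y / x) = (α * C) * (Real.log (y / x) / C) := by
        field_simp
      rw [h1]
      have h2 : (α * C) * (Real.log (y / x) / C) ≤ (α * C) * I :=
        mul_le_mul_of_nonneg_left hI0 (by positivity)
      have h3 : (α * C) * I ≤ lam * I := mul_le_mul_of_nonneg_right hlam hInn
      linarith
    have hexp : Real.exp (-(lam * I)) ≤ x ^ α / y ^ α := by
      have : Real.exp (-(lam * I)) ≤ Real.exp (-(α * Real.log (y / x))) :=
        Real.exp_le_exp.2 (by linarith)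
      refine this.trans_eq ?_
      rw [← Real.log_rpow (by positivity : (0:ℝ) < y / x), Real.exp_neg,
        Real.exp_log (by positivity), Real.div_rpow hy.le hx0.le, inv_div]
    rw [abs_mul, abs_of_pos (Real.exp_pos _)]
    calc Real.exp (-(lam * I)) * |f x| ≤ (x ^ α / y ^ α) * |f x| :=
          mul_le_mul_of_nonneg_right hexp (abs_nonneg _)
      _ = |f x| * x ^ α / y ^ α := by ring
  -- integrability of the bound
  have hg_int : IntegrableOn (fun x => |f x| * x ^ α / y ^ α) (Ioo (0:ℝ) y) :=
    (hf_int.mono_set Ioo_subset_Ioi_self).div_const _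
  have hbound : |∫ x in Ioo (0:ℝ) y, Real.exp (-(lam * ∫ τ in x..y, 1 / r τ)) * f x|
      ≤ ∫ x in Ioo (0:ℝ) y, |f x| * x ^ α / y ^ α := by
    rw [← Real.norm_eq_abs]
    apply norm_integral_le_of_norm_le hg_int
    filter_upwards [ae_restrict_mem measurableSet_Ioo] with x hx
    rw [Real.norm_eq_abs]
    exact key x hx
  have hmono2 : ∫ x in Ioo (0:ℝ) y, |f x| * x ^ α ≤ ∫ x in Ioi (0:ℝ), |f x| * x ^ α := by
    apply setIntegral_mono_set hf_int
    · filter_upwards [ae_restrict_mem measurableSet_Ioi] with x hx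
      have : 0 < x := hx
      positivity
    · exact HasSubset.Subset.eventuallyLE Ioo_subset_Ioi_self
  have hquot : ∫ x in Ioo (0:ℝ) y, |f x| * x ^ α / y ^ α
      = (∫ x in Ioo (0:ℝ) y, |f x| * x ^ α) / y ^ α := integral_div _ _
  rw [abs_mul, abs_of_pos (by positivity : (0:ℝ) < 1 / r y)]
  calc (1 / r y) * |∫ x in Ioo (0:ℝ) y, Real.exp (-(lam * ∫ τ in x..y, 1 / r τ)) * f x|
      ≤ (1 / r y) * ((∫ x in Ioi (0:ℝ), |f x| * x ^ α) / y ^ α) := by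
        apply mul_le_mul_of_nonneg_left _ (by positivity)
        refine hbound.trans ?_
        rw [hquot]
        gcongr
    _ = (∫ x in Ioi (0:ℝ), |f x| * x ^ α) / (y ^ α * r y) := by
        rw [one_div, inv_mul_eq_div, div_div]
end

section
/- Let α > 0 and C > 0, let r : (0,∞) → ℝ be continuous with 0 < r(z) ≤ C z for all z > 0, let a : (0,∞) → [0,∞) be locally integrable, let λ ≥ αC, and let f : (0,∞) → [0,∞) be measurable with ∫₀^∞ f(x) x^α dx < ∞. Then ∫₀^∞ (R_λ f)(y) · a(y) · y^α dy ≤ ∫₀^∞ f(x) x^α dx. -/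
open MeasureTheory Set
open Real Filter Topology
open scoped ENNReal NNReal


section Aux
variable {r a g ψ : ℝ → ℝ}

lemma myIntInt_div (hr_cont : ContinuousOn r (Ioi (0:ℝ)))
    (hr_pos : ∀ z > (0:ℝ), 0 < r z)
    (hg : LocallyIntegrableOn g (Ioi (0:ℝ)))
    {u v : ℝ} (hu : 0 < u) (hv : 0 < v) :
    IntervalIntegrable (fun τ => g τ / r τ) volume u v := by
  have hsub : uIcc u v ⊆ Ioi (0:ℝ) := fun z hz =>
    lt_of_lt_of_le (lt_min hu hv) hz.1
  have hgK : IntegrableOn g (uIcc u v) volume :=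
    hg.integrableOn_compact_subset hsub isCompact_uIcc
  have hrK : ContinuousOn (fun τ => (r τ)⁻¹) (uIcc u v) :=
    ((hr_cont.mono hsub).inv₀ fun τ hτ => (hr_pos τ (hsub hτ)).ne')
  have : IntegrableOn (fun τ => g τ * (r τ)⁻¹) (uIcc u v) volume :=
    hgK.mul_continuousOn hrK isCompact_uIcc
  rw [intervalIntegrable_iff]
  exact (this.mono_set uIoc_subset_uIcc).congr_fun
    (fun τ _ => (div_eq_mul_inv _ _).symm) measurableSet_uIoc

lemma myContAt_primitive (hint : ∀ u v : ℝ, 0 < u → 0 < v → IntervalIntegrable ψ volume u v)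
    {c z : ℝ} (hc : 0 < c) (hz : 0 < z) :
    ContinuousAt (fun w => ∫ τ in c..w, ψ τ) z := by
  set u := min c z / 2 with hu_def
  have hu : 0 < u := by positivity
  have huc : u < c := by
    have : min c z ≤ c := min_le_left _ _
    have : 0 < min c z := lt_min hc hz
    simp only [hu_def]
    nlinarith [min_le_left c z]
  have huz : u < z := by
    have : 0 < min c z := lt_min hc hz
    nlinarith [min_le_right c z]
  set v := max c z + 1 with hv_def
  have hvc : c ≤ v := le_trans (le_max_left _ _) (by linarith)
  have hvz : z < v := lt_of_le_of_lt (le_max_right _ _) (by linarith)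
  have huv : u ≤ v := by linarith
  have hcont : ContinuousOn (fun w => ∫ τ in c..w, ψ τ) (uIcc u v) :=
    intervalIntegral.continuousOn_primitive_interval' (hint u v hu (by linarith))
      (by rw [uIcc_of_le huv]; exact ⟨huc.le, hvc⟩)
  rw [uIcc_of_le huv] at hcont
  exact hcont.continuousAt (Icc_mem_nhds huz hvz)

lemma myContAt_joint (hint : ∀ u v : ℝ, 0 < u → 0 < v → IntervalIntegrable ψ volume u v)
    {p : ℝ × ℝ} (hp1 : 0 < p.1) (hp2 : 0 < p.2) :
    ContinuousAt (fun q : ℝ × ℝ => ∫ τ in q.1..q.2, ψ τ) p := by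
  set c := min p.1 p.2 / 2 with hc_def
  have hc : 0 < c := by positivity
  have hc1 : c < p.1 := by nlinarith [min_le_left p.1 p.2, lt_min hp1 hp2]
  have hc2 : c < p.2 := by nlinarith [min_le_right p.1 p.2, lt_min hp1 hp2]
  have hmem : (Ioi c ×ˢ Ioi c : Set (ℝ × ℝ)) ∈ nhds p :=
    (isOpen_Ioi.prod isOpen_Ioi).mem_nhds ⟨hc1, hc2⟩
  have heq : (fun q : ℝ × ℝ => ∫ τ in q.1..q.2, ψ τ) =ᶠ[nhds p]
      fun q : ℝ × ℝ => (∫ τ in c..q.2, ψ τ) - ∫ τ in c..q.1, ψ τ := by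
    filter_upwards [hmem] with q hq
    exact (intervalIntegral.integral_interval_sub_left
      (hint c q.2 hc (hc.trans hq.2)) (hint c q.1 hc (hc.trans hq.1))).symm
  refine ContinuousAt.congr ?_ heq.symm
  exact ((myContAt_primitive hint hc hp2).comp continuousAt_snd).sub
    ((myContAt_primitive hint hc hp1).comp continuousAt_fst)

end Aux


section Aux2
variable {r a : ℝ → ℝ}

lemma myPointwise (α C : ℝ) (hα : 0 < α) (hC : 0 < C)
    (hr_cont : ContinuousOn r (Ioi (0:ℝ)))
    (hr_pos : ∀ z > (0 : ℝ), 0 < r z) (hr_le : ∀ z > (0 : ℝ), r z ≤ C * z)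
    (ha_nonneg : ∀ x > (0 : ℝ), 0 ≤ a x)
    (ha_loc : LocallyIntegrableOn a (Ioi (0 : ℝ)))
    (lam : ℝ) (hlam : α * C ≤ lam)
    {x y : ℝ} (hx : 0 < x) (hxy : x < y) :
    Real.exp (-(∫ τ in x..y, (lam + a τ) / r τ)) * y ^ α ≤
      Real.exp (-(∫ τ in x..y, a τ / r τ)) * x ^ α := by
  have hy : 0 < y := hx.trans hxy
  have hlam0 : 0 ≤ lam := le_trans (by positivity) hlam
  have hIlam : IntervalIntegrable (fun τ => lam / r τ) volume x y :=
    myIntInt_div hr_cont hr_pos ((locallyIntegrable_const lam).locallyIntegrableOn _) hx hy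
  have hIa : IntervalIntegrable (fun τ => a τ / r τ) volume x y :=
    myIntInt_div hr_cont hr_pos ha_loc hx hy
  have hsub : uIcc x y ⊆ Ioi (0:ℝ) := fun z hz => lt_of_lt_of_le (lt_min hx hy) hz.1
  have hIinv : IntervalIntegrable (fun τ => α * (1 / τ)) volume x y := by
    apply ContinuousOn.intervalIntegrable
    exact (continuousOn_const.mul ((continuousOn_const.div continuousOn_id) fun τ hτ =>
      (hsub hτ).ne'))
  have hsplit : (∫ τ in x..y, (lam + a τ) / r τ) =
      (∫ τ in x..y, lam / r τ) + ∫ τ in x..y, a τ / r τ := by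
    rw [← intervalIntegral.integral_add hIlam hIa]
    apply intervalIntegral.integral_congr
    intro τ _
    simp only [add_div]
  have hkey : α * Real.log (y / x) ≤ ∫ τ in x..y, lam / r τ := by
    have h1 : (∫ τ in x..y, α * (1 / τ)) = α * Real.log (y / x) := by
      rw [intervalIntegral.integral_const_mul, integral_one_div]
      intro h
      exact lt_irrefl (0:ℝ) (hsub h)
    rw [← h1]
    apply intervalIntegral.integral_mono_on hxy.le hIinv hIlam
    intro τ hτ
    have hτ0 : 0 < τ := lt_of_lt_of_le hx hτ.1
    have hrτ : 0 < r τ := hr_pos τ hτ0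
    rw [mul_one_div, div_le_div_iff₀ hτ0 hrτ]
    nlinarith [hr_le τ hτ0]
  have h2 : Real.exp (-(∫ τ in x..y, lam / r τ)) * y ^ α ≤ x ^ α := by
    rw [rpow_def_of_pos hy, rpow_def_of_pos hx, ← Real.exp_add, Real.exp_le_exp]
    rw [Real.log_div hy.ne' hx.ne'] at hkey
    nlinarith
  calc Real.exp (-(∫ τ in x..y, (lam + a τ) / r τ)) * y ^ α
      = Real.exp (-(∫ τ in x..y, a τ / r τ)) *
        (Real.exp (-(∫ τ in x..y, lam / r τ)) * y ^ α) := by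
        rw [hsplit, neg_add, Real.exp_add]; ring
    _ ≤ Real.exp (-(∫ τ in x..y, a τ / r τ)) * x ^ α :=
        mul_le_mul_of_nonneg_left h2 (Real.exp_nonneg _)

end Aux2
section Aux3
variable {r a : ℝ → ℝ}

lemma myKeySet (hr_cont : ContinuousOn r (Ioi (0:ℝ)))
    (hr_pos : ∀ z > (0:ℝ), 0 < r z)
    (ha_meas : Measurable a) (ha_nonneg : ∀ z > (0:ℝ), 0 ≤ a z)
    (ha_loc : LocallyIntegrableOn a (Ioi (0:ℝ)))
    {x t : ℝ} (hx : 0 < x) :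
    ∫⁻ y in {y : ℝ | y ∈ Ioi x ∧ (∫ τ in x..y, a τ / r τ) < t},
      ENNReal.ofReal (a y / r y) ≤ ENNReal.ofReal t := by
  set φ : ℝ → ℝ := fun τ => a τ / r τ with hφ
  have hint : ∀ u v : ℝ, 0 < u → 0 < v → IntervalIntegrable φ volume u v :=
    fun u v hu hv => myIntInt_div hr_cont hr_pos ha_loc hu hv
  have hφnn : ∀ z > (0:ℝ), 0 ≤ φ z := fun z hz =>
    div_nonneg (ha_nonneg z hz) (hr_pos z hz).le
  have hAmono : ∀ {b c : ℝ}, x ≤ b → b ≤ c →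
      (∫ τ in x..b, φ τ) ≤ ∫ τ in x..c, φ τ := by
    intro b c hb hbc
    have hb0 : 0 < b := lt_of_lt_of_le hx hb
    have hc0 : 0 < c := lt_of_lt_of_le hb0 hbc
    have hsplit := intervalIntegral.integral_add_adjacent_intervals
      (hint x b hx hb0) (hint b c hb0 hc0)
    have hnn : 0 ≤ ∫ τ in b..c, φ τ :=
      intervalIntegral.integral_nonneg hbc (fun u hu => hφnn u (lt_of_lt_of_le hb0 hu.1))
    linarith
  have hAcont : ∀ z : ℝ, 0 < z → ContinuousAt (fun w => ∫ τ in x..w, φ τ) z :=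
    fun z hz => myContAt_primitive hint hx hz
  set E := {y : ℝ | y ∈ Ioi x ∧ (∫ τ in x..y, φ τ) < t} with hE
  have hE_open : IsOpen E := by
    rw [isOpen_iff_mem_nhds]
    rintro y ⟨hy1, hy2⟩
    filter_upwards [Ioi_mem_nhds hy1,
      (hAcont y (hx.trans hy1)).preimage_mem_nhds (Iio_mem_nhds hy2)] with z hz1 hz2
    exact ⟨hz1, hz2⟩
  have hEsub : E ⊆ Ioi x := fun y hy => hy.1
  have hraem : AEMeasurable r (volume.restrict (Ioi x)) :=
    (hr_cont.mono (Ioi_subset_Ioi hx.le)).aemeasurable measurableSet_Ioi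
  have hφaem : AEMeasurable (fun y => ENNReal.ofReal (φ y)) (volume.restrict (Ioi x)) :=
    (ha_meas.aemeasurable.div hraem).ennreal_ofReal
  set g₀ := hφaem.mk _ with hg₀
  have hgae : (fun y => ENNReal.ofReal (φ y)) =ᵐ[volume.restrict (Ioi x)] g₀ := hφaem.ae_eq_mk
  set ν := (volume.restrict (Ioi x)).withDensity g₀ with hν
  have hνeq : ∀ S : Set ℝ, MeasurableSet S → S ⊆ Ioi x →
      (∫⁻ y in S, ENNReal.ofReal (φ y)) = ν S := by
    intro S hS hSsub
    rw [hν, withDensity_apply _ hS, Measure.restrict_restrict hS,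
      inter_eq_self_of_subset_left hSsub]
    exact lintegral_congr_ae (ae_restrict_of_ae_restrict_of_subset hSsub hgae)
  have hIoc : ∀ b : ℝ, x < b → (∫ τ in x..b, φ τ) ≤ t → ν (Ioc x b) ≤ ENNReal.ofReal t := by
    intro b hb hAb
    rw [← hνeq _ measurableSet_Ioc Ioc_subset_Ioi_self]
    have hIntOn : IntegrableOn φ (Ioc x b) volume :=
      (intervalIntegrable_iff_integrableOn_Ioc_of_le hb.le).mp (hint x b hx (hx.trans hb))
    have hnn : 0 ≤ᵐ[volume.restrict (Ioc x b)] φ := by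
      rw [EventuallyLE, ae_restrict_iff' measurableSet_Ioc]
      exact Eventually.of_forall (fun y hy => hφnn y (hx.trans hy.1))
    rw [← ofReal_integral_eq_lintegral_ofReal hIntOn hnn]
    apply ENNReal.ofReal_le_ofReal
    calc (∫ y in Ioc x b, φ y) = ∫ τ in x..b, φ τ := (intervalIntegral.integral_of_le hb.le).symm
    _ ≤ t := hAb
  rw [hνeq E hE_open.measurableSet hEsub]
  rcases eq_empty_or_nonempty E with hemp | hne
  · rw [hemp]; simp
  by_cases hbdd : BddAbove E
  · set b := sSup E with hb
    obtain ⟨y₀, hy₀⟩ := id hne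
    have hxb : x < b := lt_of_lt_of_le hy₀.1 (le_csSup hbdd hy₀)
    have hAb : (∫ τ in x..b, φ τ) ≤ t := by
      obtain ⟨u, hmono, htend, hmem⟩ := exists_seq_tendsto_sSup hne hbdd
      have htd : Tendsto (fun n => ∫ τ in x..(u n), φ τ) atTop
          (𝓝 (∫ τ in x..b, φ τ)) := ((hAcont b (hx.trans hxb)).tendsto).comp htend
      exact le_of_tendsto htd (Eventually.of_forall fun n => (hmem n).2.le)
    calc ν E ≤ ν (Ioc x b) := measure_mono (fun y hy => ⟨hy.1, le_csSup hbdd hy⟩)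
    _ ≤ ENNReal.ofReal t := hIoc b hxb hAb
  · have hcover : Ioi x = ⋃ n : ℕ, Ioc x (x + n + 1) := by
      ext z; simp only [mem_Ioi, mem_iUnion, mem_Ioc]
      constructor
      · intro hz
        obtain ⟨n, hn⟩ := exists_nat_ge (z - x)
        exact ⟨n, hz, by linarith⟩
      · rintro ⟨n, hn, -⟩; exact hn
    have hmono2 : Monotone (fun n : ℕ => Ioc x (x + n + 1)) := by
      intro m n hmn
      apply Ioc_subset_Ioc_right
      have : (m:ℝ) ≤ n := Nat.cast_le.mpr hmn
      linarith
    calc ν E ≤ ν (Ioi x) := measure_mono hEsub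
    _ = ⨆ n : ℕ, ν (Ioc x (x + n + 1)) := by rw [hcover, hmono2.measure_iUnion]
    _ ≤ ENNReal.ofReal t := by
        apply iSup_le
        intro n
        have hxn : x < x + n + 1 := by
          have : (0:ℝ) ≤ n := Nat.cast_nonneg n
          linarith
        apply hIoc _ hxn
        obtain ⟨y, hyE, hy⟩ := not_bddAbove_iff.mp hbdd (x + n + 1)
        exact le_trans (hAmono (by linarith) hy.le) hyE.2.le

end Aux3
section Aux4
variable {r a : ℝ → ℝ}

lemma myLemC (hr_cont : ContinuousOn r (Ioi (0:ℝ)))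
    (hr_pos : ∀ z > (0:ℝ), 0 < r z)
    (ha_meas : Measurable a) (ha_nonneg : ∀ z > (0:ℝ), 0 ≤ a z)
    (ha_loc : LocallyIntegrableOn a (Ioi (0:ℝ)))
    {x : ℝ} (hx : 0 < x) :
    ∫⁻ y in Ioi x,
      ENNReal.ofReal (a y / r y * Real.exp (-(∫ τ in x..y, a τ / r τ))) ≤ 1 := by
  set φ : ℝ → ℝ := fun τ => a τ / r τ with hφ
  have hint : ∀ u v : ℝ, 0 < u → 0 < v → IntervalIntegrable φ volume u v :=
    fun u v hu hv => myIntInt_div hr_cont hr_pos ha_loc hu hv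
  have hφnn : ∀ z > (0:ℝ), 0 ≤ φ z := fun z hz =>
    div_nonneg (ha_nonneg z hz) (hr_pos z hz).le
  have hAcont : ∀ z : ℝ, 0 < z → ContinuousAt (fun w => ∫ τ in x..w, φ τ) z :=
    fun z hz => myContAt_primitive hint hx hz
  have hAnn : ∀ y, x ≤ y → 0 ≤ ∫ τ in x..y, φ τ := fun y hy =>
    intervalIntegral.integral_nonneg hy (fun u hu => hφnn u (lt_of_lt_of_le hx hu.1))
  have hraem : AEMeasurable r (volume.restrict (Ioi x)) :=
    (hr_cont.mono (Ioi_subset_Ioi hx.le)).aemeasurable measurableSet_Ioi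
  have hφaem : AEMeasurable φ (volume.restrict (Ioi x)) := ha_meas.aemeasurable.div hraem
  set F : ℝ → ℝ → ℝ≥0∞ := fun y s =>
    if (∫ τ in x..y, φ τ) < s then ENNReal.ofReal (φ y * Real.exp (-s)) else 0 with hF
  -- Step 1: pointwise identity
  have hstep1 : ∀ y ∈ Ioi x,
      ENNReal.ofReal (φ y * Real.exp (-(∫ τ in x..y, φ τ))) = ∫⁻ s in Ioi (0:ℝ), F y s := by
    intro y hy
    have hy0 : 0 < y := hx.trans hy
    have hAy := hAnn y (le_of_lt hy)
    have hindeq : (fun s => F y s) =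
        (Ioi (∫ τ in x..y, φ τ)).indicator
          (fun s => ENNReal.ofReal (φ y * Real.exp (-s))) := by
      funext s
      simp only [hF, Set.indicator_apply, mem_Ioi]
    have h1 : ∫⁻ s in Ioi (0:ℝ), F y s
        = ∫⁻ s in Ioi (∫ τ in x..y, φ τ), ENNReal.ofReal (φ y * Real.exp (-s)) := by
      rw [hindeq, lintegral_indicator measurableSet_Ioi,
        Measure.restrict_restrict measurableSet_Ioi, Ioi_inter_Ioi, max_eq_left hAy]
    have hintexp : IntegrableOn (fun s : ℝ => Real.exp (-s)) (Ioi (∫ τ in x..y, φ τ)) := by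
      have := exp_neg_integrableOn_Ioi (∫ τ in x..y, φ τ) (zero_lt_one (α := ℝ))
      exact this.congr_fun (fun s _ => by simp only [neg_one_mul]) measurableSet_Ioi
    have hnnexp : 0 ≤ᵐ[volume.restrict (Ioi (∫ τ in x..y, φ τ))] fun s : ℝ => Real.exp (-s) :=
      Filter.Eventually.of_forall fun s => (Real.exp_pos _).le
    have h2 : ∀ s : ℝ, ENNReal.ofReal (φ y * Real.exp (-s))
        = ENNReal.ofReal (φ y) * ENNReal.ofReal (Real.exp (-s)) :=
      fun s => ENNReal.ofReal_mul (hφnn y hy0)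
    rw [h1]
    simp_rw [h2]
    rw [lintegral_const_mul' _ _ ENNReal.ofReal_ne_top,
      ← ofReal_integral_eq_lintegral_ofReal hintexp hnnexp, integral_exp_neg_Ioi,
      ← ENNReal.ofReal_mul (hφnn y hy0)]
  -- Step 2 : swap
  have hBmeas : MeasurableSet ((Ioi x) ×ˢ (Ioi (0:ℝ))) :=
    measurableSet_Ioi.prod measurableSet_Ioi
  have hW_open : IsOpen {p : ℝ × ℝ | x < p.1 ∧ (∫ τ in x..p.1, φ τ) < p.2} := by
    rw [isOpen_iff_mem_nhds]
    rintro p ⟨hp1, hp2⟩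
    have hG : ContinuousAt (fun q : ℝ × ℝ => q.2 - ∫ τ in x..q.1, φ τ) p :=
      continuousAt_snd.sub ((hAcont p.1 (hx.trans hp1)).comp continuousAt_fst)
    have hsubp : (0:ℝ) < p.2 - ∫ τ in x..p.1, φ τ := sub_pos.mpr hp2
    filter_upwards [(isOpen_Ioi.preimage continuous_fst).mem_nhds (show p ∈ _ from hp1),
      hG.preimage_mem_nhds (Ioi_mem_nhds hsubp)] with q hq1 hq2
    exact ⟨hq1, sub_pos.mp hq2⟩
  have hvaem : AEMeasurable (fun p : ℝ × ℝ => ENNReal.ofReal (φ p.1 * Real.exp (-p.2)))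
      ((volume.restrict (Ioi x)).prod (volume.restrict (Ioi (0:ℝ)))) := by
    have h1 : AEMeasurable (fun p : ℝ × ℝ => φ p.1)
        ((volume.restrict (Ioi x)).prod (volume.restrict (Ioi (0:ℝ)))) :=
      hφaem.comp_quasiMeasurePreserving Measure.quasiMeasurePreserving_fst
    have h2 : Measurable (fun p : ℝ × ℝ => Real.exp (-p.2)) :=
      (Real.continuous_exp.comp continuous_snd.neg).measurable
    exact (h1.mul h2.aemeasurable).ennreal_ofReal
  have huncurry : AEMeasurable (Function.uncurry F)
      ((volume.restrict (Ioi x)).prod (volume.restrict (Ioi (0:ℝ)))) := by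
    refine AEMeasurable.congr (hvaem.indicator hW_open.measurableSet) ?_
    rw [Measure.prod_restrict]
    filter_upwards [self_mem_ae_restrict hBmeas] with p hp
    rcases hp with ⟨hp1, hp2⟩
    simp only [Function.uncurry, hF, Set.indicator_apply, mem_setOf_eq, mem_Ioi]
    by_cases h : (∫ τ in x..p.1, φ τ) < p.2
    · rw [if_pos h, if_pos ⟨hp1, h⟩]
    · rw [if_neg h, if_neg (fun hc => h hc.2)]
  have hswap : ∫⁻ y in Ioi x, ∫⁻ s in Ioi (0:ℝ), F y s
      = ∫⁻ s in Ioi (0:ℝ), ∫⁻ y in Ioi x, F y s :=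
    lintegral_lintegral_swap huncurry
  -- Step 3 : inner bound
  have hInner : ∀ s ∈ Ioi (0:ℝ), (∫⁻ y in Ioi x, F y s)
      ≤ ENNReal.ofReal (Real.exp (-s) * s) := by
    intro s hs
    set E := {y : ℝ | y ∈ Ioi x ∧ (∫ τ in x..y, φ τ) < s} with hE
    have hE_open : IsOpen E := by
      rw [isOpen_iff_mem_nhds]
      rintro y ⟨hy1, hy2⟩
      filter_upwards [Ioi_mem_nhds hy1,
        (hAcont y (hx.trans hy1)).preimage_mem_nhds (Iio_mem_nhds hy2)] with z hz1 hz2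
      exact ⟨hz1, hz2⟩
    have hEsub : E ⊆ Ioi x := fun y hy => hy.1
    have h1 : (∫⁻ y in Ioi x, F y s)
        = ∫⁻ y in Ioi x, E.indicator (fun y => ENNReal.ofReal (φ y) * ENNReal.ofReal (Real.exp (-s))) y := by
      apply setLIntegral_congr_fun measurableSet_Ioi
      intro y hy
      simp only [hF, Set.indicator_apply, hE, mem_setOf_eq]
      by_cases h : (∫ τ in x..y, φ τ) < s
      · rw [if_pos h, if_pos ⟨hy, h⟩, ENNReal.ofReal_mul (hφnn y (hx.trans hy))]
      · rw [if_neg h, if_neg (fun hc => h hc.2)]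
    rw [h1, lintegral_indicator hE_open.measurableSet,
      Measure.restrict_restrict hE_open.measurableSet, inter_eq_self_of_subset_left hEsub,
      lintegral_mul_const'' _ ((hφaem.mono_measure (Measure.restrict_mono hEsub le_rfl)).ennreal_ofReal)]
    calc (∫⁻ y in E, ENNReal.ofReal (φ y)) * ENNReal.ofReal (Real.exp (-s))
        ≤ ENNReal.ofReal s * ENNReal.ofReal (Real.exp (-s)) :=
          mul_le_mul_left (myKeySet hr_cont hr_pos ha_meas ha_nonneg ha_loc hx) _
      _ = ENNReal.ofReal (Real.exp (-s) * s) := by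
          rw [← ENNReal.ofReal_mul (le_of_lt hs), mul_comm]
  -- Step 4 : Gamma integral
  have hGammaInt : IntegrableOn (fun s : ℝ => Real.exp (-s) * s) (Ioi (0:ℝ)) := by
    have := Real.GammaIntegral_convergent (by norm_num : (0:ℝ) < 2)
    exact this.congr_fun (fun s _ => by norm_num) measurableSet_Ioi
  have hGammann : 0 ≤ᵐ[volume.restrict (Ioi (0:ℝ))] fun s : ℝ => Real.exp (-s) * s := by
    rw [EventuallyLE, ae_restrict_iff' measurableSet_Ioi]
    exact Filter.Eventually.of_forall fun s hs => mul_nonneg (Real.exp_pos _).le (le_of_lt hs)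
  calc ∫⁻ y in Ioi x, ENNReal.ofReal (φ y * Real.exp (-(∫ τ in x..y, φ τ)))
      = ∫⁻ y in Ioi x, ∫⁻ s in Ioi (0:ℝ), F y s :=
        setLIntegral_congr_fun measurableSet_Ioi hstep1
    _ = ∫⁻ s in Ioi (0:ℝ), ∫⁻ y in Ioi x, F y s := hswap
    _ ≤ ∫⁻ s in Ioi (0:ℝ), ENNReal.ofReal (Real.exp (-s) * s) := by
        apply lintegral_mono_ae
        rw [ae_restrict_iff' measurableSet_Ioi]
        exact ae_of_all _ hInner
    _ = ENNReal.ofReal (∫ s in Ioi (0:ℝ), Real.exp (-s) * s) :=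
        (ofReal_integral_eq_lintegral_ofReal hGammaInt hGammann).symm
    _ = 1 := by
        have : (∫ s in Ioi (0:ℝ), Real.exp (-s) * s) = Real.Gamma 2 := by
          rw [Real.Gamma_eq_integral (by norm_num : (0:ℝ) < 2)]
          norm_num
        rw [this, Real.Gamma_two, ENNReal.ofReal_one]

end Aux4
section Aux5
variable {r a : ℝ → ℝ}

lemma myLemD (α C : ℝ) (hα : 0 < α) (hC : 0 < C)
    (hr_cont : ContinuousOn r (Ioi (0:ℝ)))
    (hr_pos : ∀ z > (0 : ℝ), 0 < r z) (hr_le : ∀ z > (0 : ℝ), r z ≤ C * z)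
    (ha_meas : Measurable a) (ha_nonneg : ∀ z > (0 : ℝ), 0 ≤ a z)
    (ha_loc : LocallyIntegrableOn a (Ioi (0 : ℝ)))
    (lam : ℝ) (hlam : α * C ≤ lam)
    (f : ℝ → ℝ) (hf_nonneg : ∀ z > (0 : ℝ), 0 ≤ f z)
    {x : ℝ} (hx : 0 < x) :
    ∫⁻ y in Ioi x, ENNReal.ofReal
        ((Real.exp (-(∫ τ in x..y, (lam + a τ) / r τ)) * f x) * (a y * y ^ α / r y))
      ≤ ENNReal.ofReal (f x * x ^ α) := by
  have hfx : 0 ≤ f x := hf_nonneg x hx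
  have hfxα : 0 ≤ f x * x ^ α := by positivity
  have hcb : ∀ y ∈ Ioi x,
      (Real.exp (-(∫ τ in x..y, (lam + a τ) / r τ)) * f x) * (a y * y ^ α / r y)
      ≤ f x * x ^ α * (a y / r y * Real.exp (-(∫ τ in x..y, a τ / r τ))) := by
    intro y hy
    have hy0 : 0 < y := hx.trans hy
    have hB := myPointwise α C hα hC hr_cont hr_pos hr_le ha_nonneg ha_loc lam hlam hx hy
    have hay : 0 ≤ a y := ha_nonneg y hy0
    have hry : 0 < r y := hr_pos y hy0
    calc (Real.exp (-(∫ τ in x..y, (lam + a τ) / r τ)) * f x) * (a y * y ^ α / r y)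
        = (f x * (a y / r y)) *
            (Real.exp (-(∫ τ in x..y, (lam + a τ) / r τ)) * y ^ α) := by
          rw [div_eq_mul_inv, div_eq_mul_inv]; ring
      _ ≤ (f x * (a y / r y)) *
            (Real.exp (-(∫ τ in x..y, a τ / r τ)) * x ^ α) := by
          apply mul_le_mul_of_nonneg_left hB (by positivity)
      _ = f x * x ^ α * (a y / r y * Real.exp (-(∫ τ in x..y, a τ / r τ))) := by ring
  calc ∫⁻ y in Ioi x, ENNReal.ofReal
        ((Real.exp (-(∫ τ in x..y, (lam + a τ) / r τ)) * f x) * (a y * y ^ α / r y))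
      ≤ ∫⁻ y in Ioi x, ENNReal.ofReal (f x * x ^ α) *
          ENNReal.ofReal (a y / r y * Real.exp (-(∫ τ in x..y, a τ / r τ))) := by
        apply lintegral_mono_ae
        rw [ae_restrict_iff' measurableSet_Ioi]
        apply ae_of_all
        intro y hy
        rw [← ENNReal.ofReal_mul hfxα]
        exact ENNReal.ofReal_le_ofReal (hcb y hy)
    _ = ENNReal.ofReal (f x * x ^ α) *
          ∫⁻ y in Ioi x, ENNReal.ofReal (a y / r y * Real.exp (-(∫ τ in x..y, a τ / r τ))) :=
        lintegral_const_mul' _ _ ENNReal.ofReal_ne_top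
    _ ≤ ENNReal.ofReal (f x * x ^ α) * 1 :=
        mul_le_mul_right (myLemC hr_cont hr_pos ha_meas ha_nonneg ha_loc hx) _
    _ = ENNReal.ofReal (f x * x ^ α) := mul_one _

end Aux5
/-- Smoothing effect of the resolvent of the growth–absorption semigroup in
`X_α = L¹((0,∞), x^α dx)`: if `0 < r(z) ≤ C z`, `a ≥ 0` is locally integrable on `(0,∞)`,
`λ ≥ αC` and `f ≥ 0` has finite `X_α`-norm, then
`∫₀^∞ (R_λ f)(y) a(y) y^α dy ≤ ∫₀^∞ f(x) x^α dx`, where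
`(R_λ f)(y) = (1/r(y)) ∫₀^y exp(−∫ₓ^y (λ+a(τ))/r(τ) dτ) f(x) dx`. -/
theorem stmt4 (α C : ℝ) (hα : 0 < α) (hC : 0 < C) (r : ℝ → ℝ)
    (hr_cont : ContinuousOn r (Ioi (0 : ℝ)))
    (hr_pos : ∀ z > (0 : ℝ), 0 < r z) (hr_le : ∀ z > (0 : ℝ), r z ≤ C * z)
    (a : ℝ → ℝ) (ha_meas : Measurable a) (ha_nonneg : ∀ x > (0 : ℝ), 0 ≤ a x)
    (ha_loc : LocallyIntegrableOn a (Ioi (0 : ℝ)))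
    (lam : ℝ) (hlam : α * C ≤ lam)
    (f : ℝ → ℝ) (hf_meas : Measurable f) (hf_nonneg : ∀ x > (0 : ℝ), 0 ≤ f x)
    (hf_int : ∫⁻ x in Ioi (0 : ℝ), ENNReal.ofReal (f x * x ^ α) < ⊤) :
    ∫⁻ y in Ioi (0 : ℝ),
        ENNReal.ofReal
          (((1 / r y) * ∫ x in Ioo (0 : ℝ) y,
              Real.exp (-(∫ τ in x..y, (lam + a τ) / r τ)) * f x) * a y * y ^ α)
      ≤ ∫⁻ x in Ioi (0 : ℝ), ENNReal.ofReal (f x * x ^ α) := by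
  have hψloc : LocallyIntegrableOn (fun τ => lam + a τ) (Ioi (0:ℝ)) volume := by
    have h1 := ((locallyIntegrable_const (μ := volume) lam).locallyIntegrableOn (Ioi (0:ℝ)))
    have := h1.add ha_loc
    exact this
  have hψint : ∀ u v : ℝ, 0 < u → 0 < v →
      IntervalIntegrable (fun τ => (lam + a τ) / r τ) volume u v :=
    fun u v hu hv => myIntInt_div hr_cont hr_pos hψloc hu hv
  set K : ℝ → ℝ → ℝ := fun x y =>
    (Real.exp (-(∫ τ in x..y, (lam + a τ) / r τ)) * f x) * (a y * y ^ α / r y) with hK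
  set F0 : ℝ → ℝ → ℝ≥0∞ := fun y x =>
    (Ioo (0:ℝ) y).indicator (fun x => ENNReal.ofReal (K x y)) x with hF0
  -- Step A : pointwise bound by an inner lintegral
  have hA : ∀ y ∈ Ioi (0:ℝ),
      ENNReal.ofReal (((1 / r y) * ∫ x in Ioo (0 : ℝ) y,
          Real.exp (-(∫ τ in x..y, (lam + a τ) / r τ)) * f x) * a y * y ^ α)
      ≤ ∫⁻ x in Ioo (0:ℝ) y, ENNReal.ofReal (K x y) := by
    intro y hy
    have hry : 0 < r y := hr_pos y hy
    set I := ∫ x in Ioo (0:ℝ) y, Real.exp (-(∫ τ in x..y, (lam + a τ) / r τ)) * f x with hI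
    have hI_nonneg : 0 ≤ I :=
      setIntegral_nonneg measurableSet_Ioo
        (fun x hx => mul_nonneg (Real.exp_pos _).le (hf_nonneg x hx.1))
    have heq : ((1 / r y) * I) * a y * y ^ α = I * (a y * y ^ α / r y) := by
      field_simp
    rw [heq, ENNReal.ofReal_mul hI_nonneg]
    have hcontA : ContinuousOn (fun z => ∫ τ in z..y, (lam + a τ) / r τ) (Ioi (0:ℝ)) := by
      have hfun : (fun z => ∫ τ in z..y, (lam + a τ) / r τ)
          = fun z => -∫ τ in y..z, (lam + a τ) / r τ := by
        funext z; rw [← intervalIntegral.integral_symm]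
      rw [hfun]
      intro z hz
      exact ((myContAt_primitive hψint hy hz).neg).continuousWithinAt
    have haem : AEMeasurable (fun x => ENNReal.ofReal
        (Real.exp (-(∫ τ in x..y, (lam + a τ) / r τ)) * f x))
        (volume.restrict (Ioo (0:ℝ) y)) := by
      have h1 : AEMeasurable (fun x => ∫ τ in x..y, (lam + a τ) / r τ)
          (volume.restrict (Ioo (0:ℝ) y)) :=
        (hcontA.mono Ioo_subset_Ioi_self).aemeasurable measurableSet_Ioo
      exact ((Real.measurable_exp.comp_aemeasurable h1.neg).mul
        hf_meas.aemeasurable).ennreal_ofReal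
    have hle : ENNReal.ofReal I ≤ ∫⁻ x in Ioo (0:ℝ) y, ENNReal.ofReal
        (Real.exp (-(∫ τ in x..y, (lam + a τ) / r τ)) * f x) := by
      by_cases hInt : IntegrableOn
          (fun x => Real.exp (-(∫ τ in x..y, (lam + a τ) / r τ)) * f x) (Ioo (0:ℝ) y) volume
      · rw [hI, ofReal_integral_eq_lintegral_ofReal hInt ?_]
        rw [EventuallyLE, ae_restrict_iff' measurableSet_Ioo]
        exact ae_of_all _ fun x hx => mul_nonneg (Real.exp_pos _).le (hf_nonneg x hx.1)
      · rw [hI, integral_undef hInt]; simp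
    calc ENNReal.ofReal I * ENNReal.ofReal (a y * y ^ α / r y)
        ≤ (∫⁻ x in Ioo (0:ℝ) y, ENNReal.ofReal
            (Real.exp (-(∫ τ in x..y, (lam + a τ) / r τ)) * f x))
            * ENNReal.ofReal (a y * y ^ α / r y) := mul_le_mul_left hle _
      _ = ∫⁻ x in Ioo (0:ℝ) y, ENNReal.ofReal
            (Real.exp (-(∫ τ in x..y, (lam + a τ) / r τ)) * f x)
            * ENNReal.ofReal (a y * y ^ α / r y) := (lintegral_mul_const'' _ haem).symm
      _ = ∫⁻ x in Ioo (0:ℝ) y, ENNReal.ofReal (K x y) := by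
          apply setLIntegral_congr_fun measurableSet_Ioo
          intro x hx
          beta_reduce
          rw [hK, ← ENNReal.ofReal_mul (mul_nonneg (Real.exp_pos _).le (hf_nonneg x hx.1))]
  -- measurability for the swap
  have hWopen : IsOpen {p : ℝ × ℝ | 0 < p.2 ∧ p.2 < p.1} :=
    (isOpen_lt continuous_const continuous_snd).inter (isOpen_lt continuous_snd continuous_fst)
  have hBmeas : MeasurableSet ((Ioi (0:ℝ)) ×ˢ (Ioi (0:ℝ))) :=
    measurableSet_Ioi.prod measurableSet_Ioi
  have hcontΦ : ContinuousOn (fun p : ℝ × ℝ => ∫ τ in p.2..p.1, (lam + a τ) / r τ)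
      ((Ioi (0:ℝ)) ×ˢ (Ioi (0:ℝ))) := by
    intro p hp
    have h := myContAt_joint hψint (p := (p.2, p.1)) hp.2 hp.1
    have hswapc : ContinuousAt (Prod.swap : ℝ × ℝ → ℝ × ℝ) p := continuous_swap.continuousAt
    have h3 : ContinuousAt
        ((fun q : ℝ × ℝ => ∫ τ in q.1..q.2, (lam + a τ) / r τ) ∘ Prod.swap) p :=
      ContinuousAt.comp h hswapc
    exact h3.continuousWithinAt
  have hvaem : AEMeasurable (fun p : ℝ × ℝ => ENNReal.ofReal (K p.2 p.1))
      ((volume.restrict (Ioi (0:ℝ))).prod (volume.restrict (Ioi (0:ℝ)))) := by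
    rw [Measure.prod_restrict]
    have h1 : AEMeasurable (fun p : ℝ × ℝ =>
        Real.exp (-(∫ τ in p.2..p.1, (lam + a τ) / r τ)))
        ((volume.prod volume).restrict ((Ioi (0:ℝ)) ×ˢ (Ioi (0:ℝ)))) :=
      Real.measurable_exp.comp_aemeasurable ((hcontΦ.aemeasurable hBmeas).neg)
    have h2 : AEMeasurable (fun p : ℝ × ℝ => r p.1)
        ((volume.prod volume).restrict ((Ioi (0:ℝ)) ×ˢ (Ioi (0:ℝ)))) :=
      ((hr_cont.comp continuous_fst.continuousOn (fun p hp => hp.1)).aemeasurable hBmeas)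
    have h3 : Measurable (fun p : ℝ × ℝ => a p.1 * p.1 ^ α) := by fun_prop
    have h4 : Measurable (fun p : ℝ × ℝ => f p.2) := hf_meas.comp measurable_snd
    exact ((h1.mul h4.aemeasurable).mul (h3.aemeasurable.div h2)).ennreal_ofReal
  have huncurry : AEMeasurable (Function.uncurry F0)
      ((volume.restrict (Ioi (0:ℝ))).prod (volume.restrict (Ioi (0:ℝ)))) := by
    have hrepr : Function.uncurry F0 =
        ({p : ℝ × ℝ | 0 < p.2 ∧ p.2 < p.1}).indicator
          (fun p => ENNReal.ofReal (K p.2 p.1)) := by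
      funext p
      simp only [Function.uncurry, hF0, Set.indicator_apply, mem_Ioo, mem_setOf_eq]
    rw [hrepr]
    exact hvaem.indicator hWopen.measurableSet
  -- Step D : inner bound after the swap
  have hD : ∀ x ∈ Ioi (0:ℝ), (∫⁻ y in Ioi (0:ℝ), F0 y x) ≤ ENNReal.ofReal (f x * x ^ α) := by
    intro x hx
    have heq : (fun y => F0 y x) = (Ioi x).indicator (fun y => ENNReal.ofReal (K x y)) := by
      funext y
      simp only [hF0, Set.indicator_apply, mem_Ioo, mem_Ioi]
      by_cases h : x < y
      · rw [if_pos ⟨hx, h⟩, if_pos h]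
      · rw [if_neg (fun hc => h hc.2), if_neg h]
    have h1 : (∫⁻ y in Ioi (0:ℝ), F0 y x) = ∫⁻ y in Ioi x, ENNReal.ofReal (K x y) := by
      rw [heq, lintegral_indicator measurableSet_Ioi,
        Measure.restrict_restrict measurableSet_Ioi,
        inter_eq_self_of_subset_left (Ioi_subset_Ioi hx.le)]
    rw [h1, hK]
    exact myLemD α C hα hC hr_cont hr_pos hr_le ha_meas ha_nonneg ha_loc lam hlam f
      hf_nonneg hx
  -- Assemble
  calc ∫⁻ y in Ioi (0 : ℝ), ENNReal.ofReal
          (((1 / r y) * ∫ x in Ioo (0 : ℝ) y,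
              Real.exp (-(∫ τ in x..y, (lam + a τ) / r τ)) * f x) * a y * y ^ α)
      ≤ ∫⁻ y in Ioi (0:ℝ), ∫⁻ x in Ioo (0:ℝ) y, ENNReal.ofReal (K x y) := by
        apply lintegral_mono_ae
        rw [ae_restrict_iff' measurableSet_Ioi]
        exact ae_of_all _ hA
    _ = ∫⁻ y in Ioi (0:ℝ), ∫⁻ x in Ioi (0:ℝ), F0 y x := by
        apply setLIntegral_congr_fun measurableSet_Ioi
        intro y hy
        beta_reduce
        rw [hF0, lintegral_indicator measurableSet_Ioo,
          Measure.restrict_restrict measurableSet_Ioo,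
          inter_eq_self_of_subset_left Ioo_subset_Ioi_self]
    _ = ∫⁻ x in Ioi (0:ℝ), ∫⁻ y in Ioi (0:ℝ), F0 y x := lintegral_lintegral_swap huncurry
    _ ≤ ∫⁻ x in Ioi (0 : ℝ), ENNReal.ofReal (f x * x ^ α) := by
        apply lintegral_mono_ae
        rw [ae_restrict_iff' measurableSet_Ioi]
        exact ae_of_all _ hD
end

section
/- Let r : (0,∞) → ℝ be continuous and positive with ∫₀^1 dτ/r(τ) < ∞ and ∫₁^∞ dτ/r(τ) = ∞, and set G(y) = ∫₀^y dτ/r(τ), so that G is a strictly increasing continuous bijection of (0,∞) onto (0,∞); let G⁻¹ denote its inverse. Fix t > 0 and for x > 0 set y(x,t) := G⁻¹(G(x)+t). Then y(x,t) → G⁻¹(t) > 0 as x → 0⁺, and consequently sup_{x>0} y(x,t)/x = +∞. -/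
open MeasureTheory Set Filter

/-- Obstruction to generation in `X_α` when `∫₀¹ dτ/r(τ) < ∞` and `∫₁^∞ dτ/r(τ) = ∞`:
with `G(y) = ∫₀^y dτ/r(τ)` a strictly increasing continuous bijection of `(0,∞)` onto `(0,∞)`
with inverse `Ginv`, and `t > 0`, the forward characteristic `y(x,t) = Ginv(G(x)+t)` tends to
`Ginv(t) > 0` as `x → 0⁺`, and consequently `sup_{x>0} y(x,t)/x = +∞`. -/
theorem stmt7 (r : ℝ → ℝ) (hr_cont : ContinuousOn r (Ioi (0 : ℝ)))
    (hr_pos : ∀ τ > (0 : ℝ), 0 < r τ)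
    (h_zero : IntegrableOn (fun τ => 1 / r τ) (Ioc (0 : ℝ) 1))
    (h_infty : ¬ IntegrableOn (fun τ => 1 / r τ) (Ioi (1 : ℝ)))
    (G Ginv : ℝ → ℝ)
    (hG : ∀ y, G y = ∫ τ in Ioc (0 : ℝ) y, 1 / r τ)
    (hG_mono : StrictMonoOn G (Ioi (0 : ℝ)))
    (hG_cont : ContinuousOn G (Ioi (0 : ℝ)))
    (hGinv_pos : ∀ s > (0 : ℝ), 0 < Ginv s)
    (hGinv_right : ∀ s > (0 : ℝ), G (Ginv s) = s)
    (hGinv_left : ∀ y > (0 : ℝ), Ginv (G y) = y)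
    (t : ℝ) (ht : 0 < t) :
    Tendsto (fun x => Ginv (G x + t)) (nhdsWithin 0 (Ioi (0 : ℝ))) (nhds (Ginv t)) ∧
      0 < Ginv t ∧
      ∀ M : ℝ, ∃ x > (0 : ℝ), M < Ginv (G x + t) / x := by
  set a : ℝ := Ginv t with ha_def
  have ha : 0 < a := hGinv_pos t ht
  -- G is nonnegative on (0, ∞)
  have hG_nonneg : ∀ x > (0 : ℝ), 0 ≤ G x := by
    intro x hx
    rw [hG x]
    apply setIntegral_nonneg measurableSet_Ioc
    intro τ hτ
    exact one_div_nonneg.2 (hr_pos τ hτ.1).le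
  -- Ginv is monotone on positives
  have hGinv_mono : ∀ s₁ s₂ : ℝ, 0 < s₁ → s₁ ≤ s₂ → Ginv s₁ ≤ Ginv s₂ := by
    intro s₁ s₂ h₁ h₁₂
    by_contra hlt
    push_neg at hlt
    have h₂ : 0 < s₂ := lt_of_lt_of_le h₁ h₁₂
    have := hG_mono (hGinv_pos s₂ h₂) (hGinv_pos s₁ h₁) hlt
    rw [hGinv_right s₁ h₁, hGinv_right s₂ h₂] at this
    exact absurd this (not_lt.2 h₁₂)
  -- lower bound: for all x > 0, a ≤ Ginv (G x + t)
  have hlow : ∀ x > (0 : ℝ), a ≤ Ginv (G x + t) := by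
    intro x hx
    exact hGinv_mono t (G x + t) ht (by linarith [hG_nonneg x hx])
  -- G tends to 0 from the right
  have hGtend : Tendsto G (nhdsWithin 0 (Ioi (0 : ℝ))) (nhds 0) := by
    have hIcc : IntegrableOn (fun τ => 1 / r τ) (Icc (0 : ℝ) 1) :=
      h_zero.congr_set_ae Ioc_ae_eq_Icc.symm
    have hcont := intervalIntegral.continuousOn_primitive (a := (0:ℝ)) (b := 1)
      (μ := volume) hIcc
    have h0 : ContinuousWithinAt (fun x => ∫ τ in Ioc (0:ℝ) x, 1 / r τ) (Icc (0:ℝ) 1) 0 :=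
      hcont 0 (by norm_num)
    have h0' : Tendsto (fun x => ∫ τ in Ioc (0:ℝ) x, 1 / r τ)
        (nhdsWithin 0 (Icc (0:ℝ) 1)) (nhds 0) := by
      have : (∫ τ in Ioc (0:ℝ) (0:ℝ), 1 / r τ) = 0 := by simp
      simpa [ContinuousWithinAt, this] using h0
    have hcongr : (fun x => ∫ τ in Ioc (0:ℝ) x, 1 / r τ) = G := by
      ext x; rw [hG x]
    rw [hcongr] at h0'
    have hsub : Tendsto G (nhdsWithin 0 (Ioc (0:ℝ) 1)) (nhds 0) :=
      h0'.mono_left (nhdsWithin_mono 0 Ioc_subset_Icc_self)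
    rwa [nhdsWithin_Ioc_eq_nhdsGT (by norm_num : (0:ℝ) < 1)] at hsub
  -- main tendsto
  have hmain : Tendsto (fun x => Ginv (G x + t)) (nhdsWithin 0 (Ioi (0 : ℝ))) (nhds a) := by
    rw [tendsto_order]
    constructor
    · intro b hb
      filter_upwards [self_mem_nhdsWithin] with x hx
      exact lt_of_lt_of_le hb (hlow x hx)
    · intro c hc
      have hc0 : 0 < c := lt_trans ha hc
      have hGc : t < G c := by
        have := hG_mono (mem_Ioi.2 ha) (mem_Ioi.2 hc0) hc
        rwa [hGinv_right t ht] at this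
      have hev : ∀ᶠ x in nhdsWithin 0 (Ioi (0:ℝ)), G x < G c - t :=
        hGtend (Iio_mem_nhds (by linarith))
      filter_upwards [hev, self_mem_nhdsWithin] with x hxG hx
      by_contra hge
      push_neg at hge
      have hs : 0 < G x + t := by linarith [hG_nonneg x hx]
      have := hG_mono (mem_Ioi.2 hc0) (mem_Ioi.2 (hGinv_pos _ hs))
      rcases eq_or_lt_of_le hge with heq | hlt
      · have hcc : G c = G x + t := by rw [heq, hGinv_right _ hs]
        linarith
      · have h2 := this hlt
        rw [hGinv_right _ hs] at h2
        linarith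
  refine ⟨hmain, ha, ?_⟩
  intro M
  refine ⟨a / (|M| + 1), by positivity, ?_⟩
  have hx : (0:ℝ) < a / (|M| + 1) := by positivity
  have h1 : a ≤ Ginv (G (a / (|M| + 1)) + t) := hlow _ hx
  have h2 : |M| + 1 = a / (a / (|M| + 1)) := by
    field_simp
  calc M ≤ |M| := le_abs_self M
    _ < |M| + 1 := by linarith
    _ = a / (a / (|M| + 1)) := h2
    _ ≤ Ginv (G (a / (|M| + 1)) + t) / (a / (|M| + 1)) := by gcongr
end

section
/- Let y > 0 and let w : (0,y) → [0,∞) be measurable with ∫₀^y x w(x) dx = y. Then for every α with 0 < α ≤ 1, ∫₀^y (1+x)^α w(x) dx ≥ (1+y)^α. -/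
open MeasureTheory Set

lemma stmt8_key (y x α : ℝ) (hy : 0 < y) (hx0 : 0 < x) (hxy : x < y)
    (hα : 0 < α) (hα1 : α ≤ 1) : (1 + y) ^ α / y * x ≤ (1 + x) ^ α := by
  have h1x : (0:ℝ) < 1 + x := by linarith
  have h1y : (0:ℝ) < 1 + y := by linarith
  have hb : (1:ℝ) ≤ (1 + y) / (1 + x) := by
    rw [le_div_iff₀ h1x]; linarith
  have h1 : ((1 + y) / (1 + x)) ^ α ≤ ((1 + y) / (1 + x)) ^ (1:ℝ) :=
    Real.rpow_le_rpow_of_exponent_le hb hα1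
  rw [Real.rpow_one, Real.div_rpow h1y.le h1x.le] at h1
  have hpx : (0:ℝ) < (1 + x) ^ α := Real.rpow_pos_of_pos h1x α
  have hpy : (0:ℝ) < (1 + y) ^ α := Real.rpow_pos_of_pos h1y α
  -- from h1 : (1+y)^α / (1+x)^α ≤ (1+y)/(1+x)
  have h2 : (1 + y) ^ α * (1 + x) ≤ (1 + y) * (1 + x) ^ α := by
    rw [div_le_div_iff₀ hpx h1x] at h1; linarith
  rw [div_mul_eq_mul_div, div_le_iff₀ hy]
  -- want (1+y)^α * x ≤ (1+x)^α * y
  nlinarith [mul_pos hpy hx0, mul_pos hpx hy]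

/-- For `y > 0` and a measurable nonnegative kernel `w` on `(0,y)` with mass conservation
`∫₀^y x w(x) dx = y`, one has `∫₀^y (1+x)^α w(x) dx ≥ (1+y)^α` for every `0 < α ≤ 1`. -/
theorem stmt8 (y : ℝ) (hy : 0 < y) (w : ℝ → ℝ) (hw_meas : Measurable w)
    (hw_nonneg : ∀ x ∈ Ioo (0 : ℝ) y, 0 ≤ w x)
    (hmass : ∫⁻ x in Ioo (0 : ℝ) y, ENNReal.ofReal (x * w x) = ENNReal.ofReal y) :
    ∀ α : ℝ, 0 < α → α ≤ 1 →
      ENNReal.ofReal ((1 + y) ^ α)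
        ≤ ∫⁻ x in Ioo (0 : ℝ) y, ENNReal.ofReal ((1 + x) ^ α * w x) := by
  intro α hα hα1
  set c : ℝ := (1 + y) ^ α / y with hc
  have hcpos : 0 < c := div_pos (Real.rpow_pos_of_pos (by linarith) α) hy
  have hcy : c * y = (1 + y) ^ α := by rw [hc]; field_simp
  calc ENNReal.ofReal ((1 + y) ^ α)
      = ENNReal.ofReal c * ENNReal.ofReal y := by
        rw [← ENNReal.ofReal_mul hcpos.le, hcy]
    _ = ENNReal.ofReal c * ∫⁻ x in Ioo (0 : ℝ) y, ENNReal.ofReal (x * w x) := by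
        rw [hmass]
    _ = ∫⁻ x in Ioo (0 : ℝ) y, ENNReal.ofReal c * ENNReal.ofReal (x * w x) :=
        (lintegral_const_mul' _ _ ENNReal.ofReal_ne_top).symm
    _ ≤ ∫⁻ x in Ioo (0 : ℝ) y, ENNReal.ofReal ((1 + x) ^ α * w x) := by
        apply setLIntegral_mono
        · exact (((measurable_const.add measurable_id).pow_const α).mul hw_meas).ennreal_ofReal
        · intro x hx
          rw [← ENNReal.ofReal_mul hcpos.le, ← mul_assoc]
          apply ENNReal.ofReal_le_ofReal
          exact mul_le_mul_of_nonneg_right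
            (stmt8_key y x α hy hx.1 hx.2 hα hα1) (hw_nonneg x hx)
end

section
/- Let α > 0 and C > 0, let r : (0,∞) → ℝ be continuous with 0 < r(z) ≤ C(1+z) for all z > 0, let a : (0,∞) → [0,∞) be locally integrable, let λ ≥ αC, and let f : (0,∞) → ℝ be measurable with ∫₀^∞ |f(x)|(1+x)^α dx ≤ 1. Then for every M > 0 and every c > 0, ∫_M^∞ |(R_λ f)(y)| (1+y)^α dy ≤ ∫_M^∞ 1_{{a < c}}(y) (1/r(y)) dy + 1/c, where 1_{{a<c}} is the indicator function of the sublevel set {y > 0 : a(y) < c}. -/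
open MeasureTheory Set


lemma meas_ind {f : ℝ → ℝ} {s : Set ℝ} (hs : IsOpen s) (hf : ContinuousOn f s) :
    Measurable (s.indicator f) := by
  apply measurable_of_isOpen
  intro U hU
  have hm : MeasurableSet (s ∩ f ⁻¹' U) := (hf.isOpen_inter_preimage hs hU).measurableSet
  by_cases h0 : (0:ℝ) ∈ U
  · have : s.indicator f ⁻¹' U = (s ∩ f ⁻¹' U) ∪ sᶜ := by
      ext x; by_cases hx : x ∈ s <;> simp [Set.indicator_apply, hx, h0]
    rw [this]; exact hm.union hs.measurableSet.compl
  · have : s.indicator f ⁻¹' U = s ∩ f ⁻¹' U := by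
      ext x; by_cases hx : x ∈ s <;> simp [Set.indicator_apply, hx, h0]
    rw [this]; exact hm

lemma primitive_contOn {b : ℝ → ℝ}
    (hbi : ∀ p q : ℝ, 0 < p → 0 < q → IntervalIntegrable b volume p q)
    {x : ℝ} (hx : 0 < x) :
    ContinuousOn (fun t => ∫ τ in x..t, b τ) (Ioi 0) := by
  intro t₀ ht₀
  have ht₀' : (0:ℝ) < t₀ := ht₀
  have h1 : (0:ℝ) < t₀ / 2 := by linarith
  have h2 : (0:ℝ) < t₀ + 1 := by linarith
  have key : ContinuousWithinAt (fun t => ∫ τ in x..t, b τ) (Icc (t₀/2) (t₀+1)) t₀ := by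
    apply intervalIntegral.continuousWithinAt_primitive (measure_singleton t₀)
    exact hbi _ _ (lt_min hx h1) (lt_max_of_lt_left hx)
  have hnh : Icc (t₀/2) (t₀+1) ∈ nhds t₀ := Icc_mem_nhds (by linarith) (by linarith)
  exact (key.continuousAt hnh).continuousWithinAt

lemma key_inner {b : ℝ → ℝ} (hb : Measurable b) (hb0 : ∀ t, 0 ≤ b t)
    (hbi : ∀ p q : ℝ, 0 < p → 0 < q → IntervalIntegrable b volume p q)
    {x : ℝ} (hx : 0 < x) :
    ∫⁻ y in Ioi x, ENNReal.ofReal (b y * Real.exp (-(∫ τ in x..y, b τ))) ≤ 1 := by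
  set F : ℝ → ℝ := fun t => ∫ τ in x..t, b τ with hF
  have hFc : ContinuousOn F (Ioi 0) := primitive_contOn hbi hx
  have hF0 : ∀ y, x ≤ y → 0 ≤ F y := fun y hy =>
    intervalIntegral.integral_nonneg hy (fun u _ => hb0 u)
  have hFIoc : ∀ s, x ≤ s → ∫ τ in Ioc x s, b τ = F s := fun s hs =>
    (intervalIntegral.integral_of_le hs).symm
  set E : ℝ → ℝ := fun y => Real.exp (-(F (max y x))) with hE
  have hEc : Continuous E := by
    apply Real.continuous_exp.comp
    apply Continuous.neg
    rw [continuous_iff_continuousAt]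
    intro y
    have hmem : max y x ∈ Ioi (0:ℝ) := lt_of_lt_of_le hx (le_max_right _ _)
    exact ContinuousAt.comp (g := F) (f := fun y : ℝ => max y x) (x := y)
      (hFc.continuousAt (isOpen_Ioi.mem_nhds hmem))
      ((continuous_id.max continuous_const).continuousAt)
  have hE1 : ∀ y, E y ≤ 1 := by
    intro y
    rw [hE]
    simp only []
    rw [Real.exp_le_one_iff]
    simp [hF0 _ (le_max_right _ _)]
  set μ' : Measure ℝ := (volume.restrict (Ioi x)).withDensity
      (fun y => ENNReal.ofReal (b y)) with hμ'
  have hbm : Measurable (fun y => ENNReal.ofReal (b y)) :=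
    ENNReal.measurable_ofReal.comp hb
  -- Step 1
  have step1 : ∫⁻ y in Ioi x, ENNReal.ofReal (b y * Real.exp (-(∫ τ in x..y, b τ)))
      = ∫⁻ y, ENNReal.ofReal (E y) ∂μ' := by
    rw [hμ', lintegral_withDensity_eq_lintegral_mul _ hbm
      (hEc.measurable.ennreal_ofReal)]
    refine setLIntegral_congr_fun measurableSet_Ioi (fun y hy => ?_)
    have : max y x = y := max_eq_left (le_of_lt hy)
    simp only [Pi.mul_apply, hE, this]
    rw [ENNReal.ofReal_mul (hb0 y)]
  -- Step 2 : layer cake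
  have step2 : ∫⁻ y, ENNReal.ofReal (E y) ∂μ' = ∫⁻ t in Ioi 0, μ' {y | t ≤ E y} :=
    lintegral_eq_lintegral_meas_le μ' (ae_of_all _ fun y => (Real.exp_pos _).le)
      hEc.measurable.aemeasurable
  -- Step 3 : pointwise bound on the measures
  have step3 : ∀ t ∈ Ioi (0:ℝ), μ' {y | t ≤ E y}
      ≤ indicator (Ioc (0:ℝ) 1) (fun t => ENNReal.ofReal (-Real.log t)) t := by
    intro t ht
    by_cases ht1 : 1 < t
    · have : {y | t ≤ E y} = ∅ := by
        ext y; simp only [mem_setOf_eq, mem_empty_iff_false, iff_false, not_le]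
        exact lt_of_le_of_lt (hE1 y) ht1
      rw [this]
      simp
    · push_neg at ht1
      have htmem : t ∈ Ioc (0:ℝ) 1 := ⟨ht, ht1⟩
      rw [indicator_of_mem htmem]
      set u := -Real.log t with hu
      have hu0 : 0 ≤ u := by
        rw [hu]; simp only [neg_nonneg]
        exact Real.log_nonpos (le_of_lt ht) ht1
      have hAm : MeasurableSet {y | t ≤ E y} := measurableSet_le measurable_const hEc.measurable
      rw [hμ', withDensity_apply _ hAm, Measure.restrict_restrict hAm]
      set S : Set ℝ := {y | t ≤ E y} ∩ Ioi x with hS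
      set ν : Measure ℝ := volume.withDensity (fun y => ENNReal.ofReal (b y)) with hν
      have hSm : MeasurableSet S := hAm.inter measurableSet_Ioi
      have hνS : ∫⁻ y in S, ENNReal.ofReal (b y) = ν S := (withDensity_apply _ hSm).symm
      rw [hνS]
      -- members of S satisfy F y ≤ u
      have hSF : ∀ y ∈ S, F y ≤ u := by
        rintro y ⟨hyt, hyx⟩
        have : max y x = y := max_eq_left (le_of_lt hyx)
        rw [mem_setOf_eq, hE] at hyt
        simp only [this] at hyt
        have := (Real.log_le_iff_le_exp ht).2 hyt
        linarith
      -- decompose S as a countable monotone union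
      have hScup : S = ⋃ n : ℕ, S ∩ Ioc x (x + (n+1)) := by
        ext y
        simp only [mem_iUnion, mem_inter_iff, mem_Ioc]
        constructor
        · intro hy
          obtain ⟨n, hn⟩ := exists_nat_ge (y - x)
          exact ⟨n, hy, hy.2, by push_cast; linarith⟩
        · rintro ⟨n, hy, _⟩; exact hy
      have hdir : Directed (fun x1 x2 => x1 ⊆ x2) (fun n : ℕ => S ∩ Ioc x (x + (n+1))) := by
        apply Monotone.directed_le
        intro m n hmn
        apply inter_subset_inter_right
        apply Ioc_subset_Ioc le_rfl
        have : (m:ℝ) ≤ n := Nat.cast_le.2 hmn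
        linarith
      rw [hScup, hdir.measure_iUnion]
      apply iSup_le
      intro n
      set Sn := S ∩ Ioc x (x + (n+1)) with hSn
      rcases Sn.eq_empty_or_nonempty with he | hne
      · rw [he]; simp
      · have hbdd : BddAbove Sn := ⟨x + (n+1), fun y hy => hy.2.2⟩
        set s := sSup Sn with hs
        obtain ⟨y₀, hy₀⟩ := id hne
        have hxs : x < s := lt_of_lt_of_le hy₀.2.1 (le_csSup hbdd hy₀)
        have hFs : F s ≤ u := by
          have hcl : s ∈ closure Sn := csSup_mem_closure hne hbdd
          have hca : ContinuousWithinAt F Sn s :=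
            (hFc.continuousAt (isOpen_Ioi.mem_nhds (hx.trans hxs))).continuousWithinAt
          have himg : F s ∈ closure (F '' Sn) := hca.mem_closure_image hcl
          have hsub : F '' Sn ⊆ Iic u := by
            rintro _ ⟨y, hy, rfl⟩
            exact hSF y hy.1
          have := closure_minimal hsub isClosed_Iic himg
          exact this
        calc ν Sn ≤ ν (Ioc x s) := by
              apply measure_mono
              rintro y ⟨hy1, hy2⟩
              exact ⟨hy1.2, le_csSup hbdd ⟨hy1, hy2⟩⟩
          _ = ∫⁻ y in Ioc x s, ENNReal.ofReal (b y) := withDensity_apply _ measurableSet_Ioc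
          _ = ENNReal.ofReal (∫ y in Ioc x s, b y) := by
              rw [ofReal_integral_eq_lintegral_ofReal
                ((hbi x s hx (hx.trans hxs)).1) (ae_of_all _ hb0)]
          _ = ENNReal.ofReal (F s) := by rw [hFIoc s hxs.le]
          _ ≤ ENNReal.ofReal u := ENNReal.ofReal_le_ofReal hFs
  -- Step 4 : integrate the bound
  have step4 : ∫⁻ t in Ioi (0:ℝ),
      indicator (Ioc (0:ℝ) 1) (fun t => ENNReal.ofReal (-Real.log t)) t = 1 := by
    rw [lintegral_indicator measurableSet_Ioc, Measure.restrict_restrict measurableSet_Ioc]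
    have : Ioc (0:ℝ) 1 ∩ Ioi 0 = Ioc (0:ℝ) 1 := by
      rw [inter_eq_left]; exact Ioc_subset_Ioi_self
    rw [this]
    have hlog : ∫⁻ t in Ioc (0:ℝ) 1, ENNReal.ofReal (-Real.log t)
        = ∫⁻ u in Ioi (0:ℝ), (volume.restrict (Ioc (0:ℝ) 1)) {t | u ≤ -Real.log t} := by
      apply lintegral_eq_lintegral_meas_le
      · have hmem : ∀ᵐ t ∂(volume.restrict (Ioc (0:ℝ) 1)), t ∈ Ioc (0:ℝ) 1 :=
          ae_restrict_mem measurableSet_Ioc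
        exact hmem.mono fun t ht => by
          simp only [Pi.zero_apply, neg_nonneg]
          exact Real.log_nonpos (le_of_lt ht.1) ht.2
      · exact (Real.measurable_log.neg).aemeasurable
    rw [hlog]
    have hmeas : ∀ u ∈ Ioi (0:ℝ), (volume.restrict (Ioc (0:ℝ) 1)) {t | u ≤ -Real.log t}
        = ENNReal.ofReal (Real.exp (-u)) := by
      intro u hu
      have hAm : MeasurableSet {t : ℝ | u ≤ -Real.log t} :=
        measurableSet_le measurable_const Real.measurable_log.neg
      rw [Measure.restrict_apply hAm]
      have : {t : ℝ | u ≤ -Real.log t} ∩ Ioc 0 1 = Ioc (0:ℝ) (Real.exp (-u)) := by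
        ext t
        simp only [mem_inter_iff, mem_setOf_eq, mem_Ioc]
        constructor
        · rintro ⟨h1, h2, h3⟩
          refine ⟨h2, ?_⟩
          have : Real.log t ≤ -u := by linarith
          exact (Real.log_le_iff_le_exp h2).1 this
        · rintro ⟨h1, h2⟩
          have hexp1 : Real.exp (-u) ≤ 1 := by
            rw [Real.exp_le_one_iff]; simp [le_of_lt (mem_Ioi.1 hu)]
          refine ⟨?_, h1, h2.trans hexp1⟩
          have := (Real.log_le_iff_le_exp h1).2 h2
          linarith
      rw [this, Real.volume_Ioc]
      congr 1; ring
    rw [setLIntegral_congr_fun measurableSet_Ioi hmeas]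
    have hexpint : IntegrableOn (fun u : ℝ => Real.exp (-u)) (Ioi (0:ℝ)) := by
      simpa using exp_neg_integrableOn_Ioi 0 one_pos
    rw [← ofReal_integral_eq_lintegral_ofReal hexpint
      (ae_of_all _ fun u => (Real.exp_pos _).le)]
    rw [integral_exp_neg_Ioi_zero]
    simp
  calc ∫⁻ y in Ioi x, ENNReal.ofReal (b y * Real.exp (-(∫ τ in x..y, b τ)))
      = ∫⁻ t in Ioi 0, μ' {y | t ≤ E y} := by rw [step1, step2]
    _ ≤ ∫⁻ t in Ioi (0:ℝ),
          indicator (Ioc (0:ℝ) 1) (fun t => ENNReal.ofReal (-Real.log t)) t :=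
        setLIntegral_mono' measurableSet_Ioi step3
    _ = 1 := step4


/-- Uniform tail estimate on the unit ball of `X_{0,α} = L¹((0,∞),(1+x)^α dx)`:
if `0 < r(z) ≤ C(1+z)`, `λ ≥ αC` and `∫₀^∞ |f|(1+x)^α dx ≤ 1`, then for every `M > 0`
and `c > 0`,
`∫_M^∞ |(R_λ f)(y)|(1+y)^α dy ≤ ∫_M^∞ 1_{{a<c}}(y) (1/r(y)) dy + 1/c`, where
`(R_λ f)(y) = (1/r(y)) ∫₀^y exp(−∫ₓ^y (λ+a(τ))/r(τ) dτ) f(x) dx`. -/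
theorem stmt11 (α C : ℝ) (hα : 0 < α) (hC : 0 < C) (r : ℝ → ℝ)
    (hr_cont : ContinuousOn r (Ioi (0 : ℝ)))
    (hr_pos : ∀ z > (0 : ℝ), 0 < r z) (hr_le : ∀ z > (0 : ℝ), r z ≤ C * (1 + z))
    (a : ℝ → ℝ) (ha_meas : Measurable a) (ha_nonneg : ∀ z > (0 : ℝ), 0 ≤ a z)
    (ha_loc : LocallyIntegrableOn a (Ioi (0 : ℝ)))
    (lam : ℝ) (hlam : α * C ≤ lam)
    (f : ℝ → ℝ) (hf_meas : Measurable f)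
    (hf_int : IntegrableOn (fun x => |f x| * (1 + x) ^ α) (Ioi (0 : ℝ)))
    (hf_ball : ∫ x in Ioi (0 : ℝ), |f x| * (1 + x) ^ α ≤ 1)
    (R : ℝ → ℝ)
    (hR : ∀ z > (0 : ℝ), R z = (1 / r z) * ∫ x in Ioo (0 : ℝ) z,
        Real.exp (-(∫ τ in x..z, (lam + a τ) / r τ)) * f x) :
    ∀ M > (0 : ℝ), ∀ c > (0 : ℝ),
      ∫⁻ z in Ioi M, ENNReal.ofReal (|R z| * (1 + z) ^ α)
        ≤ (∫⁻ z in Ioi M,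
              ENNReal.ofReal (Set.indicator {u : ℝ | a u < c} (fun u => 1 / r u) z))
          + ENNReal.ofReal (1 / c) := by
  intro M hM c hc
  -- measurable version of r⁻¹
  set ρ : ℝ → ℝ := (Ioi (0:ℝ)).indicator (fun z => (r z)⁻¹) with hρdef
  have hρ_meas : Measurable ρ :=
    meas_ind isOpen_Ioi (hr_cont.inv₀ (fun z hz => (hr_pos z hz).ne'))
  have hρ_eq : ∀ z ∈ Ioi (0:ℝ), ρ z = (r z)⁻¹ := fun z hz => indicator_of_mem hz _
  have hρ_nonneg : ∀ z, 0 ≤ ρ z := by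
    intro z
    by_cases hz : z ∈ Ioi (0:ℝ)
    · rw [hρ_eq z hz]; exact inv_nonneg.2 (hr_pos z hz).le
    · rw [hρdef, indicator_of_notMem hz]
  set b : ℝ → ℝ := fun τ => a τ * ρ τ with hbdef
  have hb_meas : Measurable b := ha_meas.mul hρ_meas
  have hb0 : ∀ τ, 0 ≤ b τ := by
    intro τ
    by_cases hτ : τ ∈ Ioi (0:ℝ)
    · exact mul_nonneg (ha_nonneg τ hτ) (hρ_nonneg τ)
    · rw [hbdef]; simp [hρdef, indicator_of_notMem hτ]
  -- integrability of b and ρ on compact subintervals of (0,∞)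
  have hKsub : ∀ p q : ℝ, 0 < p → 0 < q → uIcc p q ⊆ Ioi (0:ℝ) := by
    intro p q hp hq z hz
    exact lt_of_lt_of_le (lt_min hp hq) hz.1
  have hmin : ∀ p q : ℝ, 0 < p → 0 < q → ∃ m : ℝ, 0 < m ∧ ∀ τ ∈ uIcc p q, ρ τ ≤ m⁻¹ := by
    intro p q hp hq
    obtain ⟨z₀, hz₀K, hz₀min⟩ := isCompact_uIcc.exists_isMinOn ⟨p, left_mem_uIcc⟩
      (hr_cont.mono (hKsub p q hp hq))
    refine ⟨r z₀, hr_pos z₀ (hKsub p q hp hq hz₀K), fun τ hτ => ?_⟩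
    rw [hρ_eq τ (hKsub p q hp hq hτ)]
    exact inv_anti₀ (hr_pos z₀ (hKsub p q hp hq hz₀K)) (hz₀min hτ)
  have hρi : ∀ p q : ℝ, 0 < p → 0 < q → IntervalIntegrable ρ volume p q := by
    intro p q hp hq
    obtain ⟨m, hm, hmle⟩ := hmin p q hp hq
    rw [intervalIntegrable_iff]
    apply Integrable.mono' (g := fun _ => m⁻¹)
      (integrableOn_const measure_Ioc_lt_top.ne)
      hρ_meas.aestronglyMeasurable.restrict
    refine (ae_restrict_iff' measurableSet_uIoc).2 (ae_of_all _ fun τ hτ => ?_)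
    rw [Real.norm_eq_abs, abs_of_nonneg (hρ_nonneg τ)]
    exact hmle τ (uIoc_subset_uIcc hτ)
  have hbi : ∀ p q : ℝ, 0 < p → 0 < q → IntervalIntegrable b volume p q := by
    intro p q hp hq
    obtain ⟨m, hm, hmle⟩ := hmin p q hp hq
    have haK : IntegrableOn a (uIcc p q) :=
      ha_loc.integrableOn_compact_subset (hKsub p q hp hq) isCompact_uIcc
    rw [intervalIntegrable_iff]
    have h2 : IntegrableOn (fun τ => |a τ| * m⁻¹) (uIcc p q) volume := haK.abs.mul_const _
    apply Integrable.mono' (g := fun τ => |a τ| * m⁻¹)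
      (h2.mono_set uIoc_subset_uIcc)
      hb_meas.aestronglyMeasurable.restrict
    refine (ae_restrict_iff' measurableSet_uIoc).2 (ae_of_all _ fun τ hτ => ?_)
    rw [Real.norm_eq_abs, hbdef, abs_mul, abs_of_nonneg (hρ_nonneg τ)]
    exact mul_le_mul_of_nonneg_left (hmle τ (uIoc_subset_uIcc hτ)) (abs_nonneg _)
  set ℓ : ℝ → ℝ := fun τ => lam * ρ τ with hℓdef
  have hℓi : ∀ p q : ℝ, 0 < p → 0 < q → IntervalIntegrable ℓ volume p q :=
    fun p q hp hq => (hρi p q hp hq).const_mul lam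
  -- primitives
  set F : ℝ → ℝ := fun t => ∫ τ in (1:ℝ)..t, b τ with hFdef
  set L : ℝ → ℝ := fun t => ∫ τ in (1:ℝ)..t, ℓ τ with hLdef
  have hFc : ContinuousOn F (Ioi 0) := primitive_contOn hbi one_pos
  have hLc : ContinuousOn L (Ioi 0) := primitive_contOn hℓi one_pos
  set F₀ : ℝ → ℝ := (Ioi (0:ℝ)).indicator F with hF₀def
  set L₀ : ℝ → ℝ := (Ioi (0:ℝ)).indicator L with hL₀def
  have hF₀_meas : Measurable F₀ := meas_ind isOpen_Ioi hFc
  have hL₀_meas : Measurable L₀ := meas_ind isOpen_Ioi hLc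
  have hF₀_eq : ∀ z ∈ Ioi (0:ℝ), F₀ z = F z := fun z hz => indicator_of_mem hz _
  have hL₀_eq : ∀ z ∈ Ioi (0:ℝ), L₀ z = L z := fun z hz => indicator_of_mem hz _
  -- additivity of primitives
  have hFadd : ∀ x z : ℝ, 0 < x → 0 < z → ∫ τ in x..z, b τ = F z - F x := by
    intro x z hx hz
    have := intervalIntegral.integral_add_adjacent_intervals
      (hbi x 1 hx one_pos) (hbi 1 z one_pos hz)
    have hsymm : ∫ τ in x..(1:ℝ), b τ = -F x := intervalIntegral.integral_symm 1 x
    rw [hsymm] at this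
    have h5 : F z = ∫ τ in (1:ℝ)..z, b τ := rfl
    linarith
  have hLadd : ∀ x z : ℝ, 0 < x → 0 < z → ∫ τ in x..z, ℓ τ = L z - L x := by
    intro x z hx hz
    have := intervalIntegral.integral_add_adjacent_intervals
      (hℓi x 1 hx one_pos) (hℓi 1 z one_pos hz)
    have hsymm : ∫ τ in x..(1:ℝ), ℓ τ = -L x := intervalIntegral.integral_symm 1 x
    rw [hsymm] at this
    have h5 : L z = ∫ τ in (1:ℝ)..z, ℓ τ := rfl
    linarith
  -- the exponent identity
  have hexp_eq : ∀ x z : ℝ, 0 < x → 0 < z →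
      ∫ τ in x..z, (lam + a τ) / r τ = (L₀ z - L₀ x) + (F₀ z - F₀ x) := by
    intro x z hx hz
    have hcongr : ∫ τ in x..z, (lam + a τ) / r τ = ∫ τ in x..z, (ℓ τ + b τ) := by
      apply intervalIntegral.integral_congr
      intro τ hτ
      have hτ0 : τ ∈ Ioi (0:ℝ) := hKsub x z hx hz hτ
      rw [hℓdef, hbdef]
      simp only []
      rw [hρ_eq τ hτ0, add_div]
      field_simp
    rw [hcongr, intervalIntegral.integral_add (hℓi x z hx hz) (hbi x z hx hz),
      hLadd x z hx hz, hFadd x z hx hz, hL₀_eq x hx, hL₀_eq z hz, hF₀_eq x hx, hF₀_eq z hz]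
  -- nonnegativity of the exponent
  have hg_nonneg : ∀ x z : ℝ, 0 < x → x ≤ z → 0 ≤ ∫ τ in x..z, (lam + a τ) / r τ := by
    intro x z hx hxz
    apply intervalIntegral.integral_nonneg hxz
    intro u hu
    have hu0 : (0:ℝ) < u := lt_of_lt_of_le hx hu.1
    have : 0 ≤ lam := le_trans (le_of_lt (mul_pos hα hC)) hlam
    exact div_nonneg (by linarith [ha_nonneg u hu0]) (hr_pos u hu0).le
  have hF_mono : ∀ x z : ℝ, 0 < x → x ≤ z → F x ≤ F z := by
    intro x z hx hxz
    have h := hFadd x z hx (lt_of_lt_of_le hx hxz)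
    have h2 : 0 ≤ ∫ τ in x..z, b τ :=
      intervalIntegral.integral_nonneg hxz (fun u _ => hb0 u)
    linarith
  -- the logarithmic lower bound
  have hlog : ∀ x y : ℝ, 0 < x → x < y →
      α * (Real.log (1+y) - Real.log (1+x)) ≤ L y - L x := by
    intro x y hx hxy
    have hy : (0:ℝ) < y := hx.trans hxy
    rw [← hLadd x y hx hy]
    have hstep : ∫ τ in x..y, α * (1+τ)⁻¹ ≤ ∫ τ in x..y, ℓ τ := by
      apply intervalIntegral.integral_mono_on hxy.le _ (hℓi x y hx hy)
      · intro τ hτ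
        have hτ0 : (0:ℝ) < τ := lt_of_lt_of_le hx hτ.1
        have h1τ : (0:ℝ) < 1 + τ := by linarith
        have hrτ : 0 < r τ := hr_pos τ hτ0
        have hrle : r τ ≤ C * (1+τ) := hr_le τ hτ0
        rw [hℓdef]; simp only []
        rw [hρ_eq τ hτ0]
        have h1 : (C * (1+τ))⁻¹ ≤ (r τ)⁻¹ := inv_anti₀ hrτ hrle
        have h2 : α * C * (C * (1+τ))⁻¹ ≤ α * C * (r τ)⁻¹ :=
          mul_le_mul_of_nonneg_left h1 (le_of_lt (mul_pos hα hC))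
        have h3 : α * C * (r τ)⁻¹ ≤ lam * (r τ)⁻¹ :=
          mul_le_mul_of_nonneg_right hlam (inv_nonneg.2 hrτ.le)
        have h4 : α * C * (C * (1+τ))⁻¹ = α * (1+τ)⁻¹ := by
          field_simp
        linarith
      · apply ContinuousOn.intervalIntegrable
        apply ContinuousOn.mul continuousOn_const
        apply ContinuousOn.inv₀ (by fun_prop)
        intro τ hτ
        have h1 : x ⊓ y ≤ τ := hτ.1
        have hτ0 : (0:ℝ) < τ := lt_of_lt_of_le (lt_min hx hy) h1
        exact (by linarith : (0:ℝ) < 1 + τ).ne'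
    have hval : ∫ τ in x..y, α * (1+τ)⁻¹ = α * (Real.log (1+y) - Real.log (1+x)) := by
      rw [intervalIntegral.integral_const_mul]
      congr 1
      have hcomp : ∫ τ in x..y, (1+τ)⁻¹ = ∫ u in (1+x)..(1+y), u⁻¹ := by
        exact intervalIntegral.integral_comp_add_left (fun u => u⁻¹) 1
      rw [hcomp]
      have h0 : (0:ℝ) ∉ uIcc (1+x) (1+y) := by
        intro h
        have := h.1
        have hmin : (0:ℝ) < (1+x) ⊓ (1+y) := lt_min (by linarith) (by linarith)
        simp only [mem_uIcc] at h
        rcases h with ⟨h1, _⟩ | ⟨h1, _⟩ <;> linarith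
      have := integral_one_div (a := 1+x) (b := 1+y) h0
      simp only [one_div] at this
      rw [this, Real.log_div (by positivity) (by positivity)]
    linarith [hval ▸ hstep]
  -- main exponential bound
  have hexpb : ∀ x y : ℝ, 0 < x → x < y →
      Real.exp (-(∫ τ in x..y, (lam + a τ) / r τ)) * (1+y)^α
        ≤ (1+x)^α * Real.exp (F₀ x - F₀ y) := by
    intro x y hx hxy
    have hy : (0:ℝ) < y := hx.trans hxy
    rw [hexp_eq x y hx hy, hL₀_eq x hx, hL₀_eq y hy]
    have hrw : (1+y:ℝ)^α = Real.exp (Real.log (1+y) * α) :=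
      Real.rpow_def_of_pos (by linarith) α
    have hrwx : (1+x:ℝ)^α = Real.exp (Real.log (1+x) * α) :=
      Real.rpow_def_of_pos (by linarith) α
    rw [hrw, hrwx, ← Real.exp_add, ← Real.exp_add]
    apply Real.exp_le_exp.2
    have h := hlog x y hx hxy
    have h2 : Real.log (1+y) * α - Real.log (1+x) * α ≤ L y - L x := by nlinarith [h]
    linarith
  -- weight function facts
  set w : ℝ → ℝ := fun x => |f x| * (1+x)^α with hwdef
  have hw_meas : Measurable w :=
    hf_meas.abs.mul ((measurable_const.add measurable_id).pow measurable_const)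
  have hw0 : ∀ x : ℝ, 0 ≤ x → 0 ≤ w x := fun x hx =>
    mul_nonneg (abs_nonneg _) (Real.rpow_nonneg (by linarith) _)
  have hw_int : IntegrableOn w (Ioi (0:ℝ)) := hf_int
  have hfw : ∀ x : ℝ, 0 < x → |f x| ≤ w x := by
    intro x hx
    have h1 : (1:ℝ) ≤ (1+x)^α := Real.one_le_rpow (by linarith) hα.le
    show |f x| ≤ |f x| * (1+x)^α
    nlinarith [abs_nonneg (f x)]
  set Ψ : ℝ → ℝ → ℝ := fun y x => Real.exp (F₀ x - F₀ y) with hΨdef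
  have hΨ0 : ∀ y x, 0 ≤ Ψ y x := fun y x => (Real.exp_pos _).le
  have hΨ_le_one : ∀ y x, 0 < x → x < y → Ψ y x ≤ 1 := by
    intro y x hx hxy
    rw [hΨdef]
    simp only [Real.exp_le_one_iff]
    rw [hF₀_eq x hx, hF₀_eq y (hx.trans hxy)]
    have := hF_mono x y hx hxy.le
    linarith
  have hΨy_meas : ∀ y, Measurable (fun x => Ψ y x * w x) := fun y =>
    (Real.measurable_exp.comp (hF₀_meas.sub measurable_const)).mul hw_meas
  have hint2 : ∀ y : ℝ, 0 < y → IntegrableOn (fun x => Ψ y x * w x) (Ioo 0 y) := by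
    intro y hy
    apply Integrable.mono' (hw_int.mono_set Ioo_subset_Ioi_self)
      (hΨy_meas y).aestronglyMeasurable.restrict
    refine (ae_restrict_iff' measurableSet_Ioo).2 (ae_of_all _ fun x hx => ?_)
    rw [Real.norm_eq_abs, abs_mul, abs_of_nonneg (hΨ0 y x), abs_of_nonneg (hw0 x hx.1.le)]
    exact mul_le_of_le_one_left (hw0 x hx.1.le) (hΨ_le_one y x hx.1 hx.2)
  have hΨw_nonneg : ∀ y : ℝ, 0 ≤ᵐ[volume.restrict (Ioo (0:ℝ) y)]
      (fun x => Ψ y x * w x) := by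
    intro y
    refine (ae_restrict_iff' measurableSet_Ioo).2 (ae_of_all _ fun x hx => ?_)
    exact mul_nonneg (hΨ0 y x) (hw0 x hx.1.le)
  have hmass : ∀ y : ℝ, 0 < y → ∫ x in Ioo (0:ℝ) y, Ψ y x * w x ≤ 1 := by
    intro y hy
    have h1 : ∫ x in Ioo (0:ℝ) y, Ψ y x * w x ≤ ∫ x in Ioo (0:ℝ) y, w x := by
      apply setIntegral_mono_on (hint2 y hy) (hw_int.mono_set Ioo_subset_Ioi_self)
        measurableSet_Ioo
      intro x hx
      exact mul_le_of_le_one_left (hw0 x hx.1.le) (hΨ_le_one y x hx.1 hx.2)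
    have h2 : ∫ x in Ioo (0:ℝ) y, w x ≤ ∫ x in Ioi (0:ℝ), w x := by
      apply setIntegral_mono_set hw_int
        ((ae_restrict_iff' measurableSet_Ioi).2 (ae_of_all _ fun x hx => hw0 x (le_of_lt hx)))
        (HasSubset.Subset.eventuallyLE Ioo_subset_Ioi_self)
    linarith [hf_ball]
  have hQle : ∀ y : ℝ, 0 < y → (∫⁻ x in Ioo (0:ℝ) y, ENNReal.ofReal (Ψ y x * w x)) ≤ 1 := by
    intro y hy
    rw [← ofReal_integral_eq_lintegral_ofReal (hint2 y hy) (hΨw_nonneg y)]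
    calc ENNReal.ofReal (∫ x in Ioo (0:ℝ) y, Ψ y x * w x)
        ≤ ENNReal.ofReal 1 := ENNReal.ofReal_le_ofReal (hmass y hy)
      _ = 1 := ENNReal.ofReal_one
  set Q : ℝ → ENNReal := fun y => (ENNReal.ofReal (1 / r y)
      * ∫⁻ x in Ioo (0:ℝ) y, ENNReal.ofReal (Ψ y x * w x)) with hQdef
  -- pointwise domination of the resolvent
  have stepR : ∀ y ∈ Ioi M, ENNReal.ofReal (|R y| * (1+y)^α) ≤ Q y := by
    intro y hy
    have hy0 : (0:ℝ) < y := hM.trans hy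
    have hr1nn : (0:ℝ) ≤ 1 / r y := div_nonneg zero_le_one (hr_pos y hy0).le
    set e : ℝ → ℝ := fun x => Real.exp ((L₀ x + F₀ x) - (L₀ y + F₀ y)) with hedef
    have he_pos : ∀ x, 0 < e x := fun x => Real.exp_pos _
    have he_meas : Measurable e :=
      Real.measurable_exp.comp ((hL₀_meas.add hF₀_meas).sub measurable_const)
    have he_eq : ∀ x ∈ Ioo (0:ℝ) y,
        Real.exp (-(∫ τ in x..y, (lam + a τ)/r τ)) = e x := by
      intro x hx
      rw [hexp_eq x y hx.1 hy0, hedef]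
      simp only []
      congr 1
      ring
    have hI : R y = (1 / r y) * ∫ x in Ioo (0:ℝ) y, e x * f x := by
      rw [hR y hy0]
      congr 1
      exact setIntegral_congr_fun measurableSet_Ioo (fun x hx => by rw [he_eq x hx])
    have he_le : ∀ x ∈ Ioo (0:ℝ) y, e x ≤ 1 := by
      intro x hx
      rw [← he_eq x hx, Real.exp_le_one_iff]
      simpa using hg_nonneg x y hx.1 hx.2.le
    have hint1 : IntegrableOn (fun x => e x * |f x|) (Ioo (0:ℝ) y) := by
      apply Integrable.mono' (hw_int.mono_set Ioo_subset_Ioi_self)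
        (he_meas.mul hf_meas.abs).aestronglyMeasurable.restrict
      refine (ae_restrict_iff' measurableSet_Ioo).2 (ae_of_all _ fun x hx => ?_)
      simp only [Pi.mul_apply]
      rw [Real.norm_eq_abs, abs_mul, abs_of_nonneg (he_pos x).le, abs_abs]
      calc e x * |f x| ≤ 1 * |f x| :=
            mul_le_mul_of_nonneg_right (he_le x hx) (abs_nonneg _)
        _ = |f x| := one_mul _
        _ ≤ w x := hfw x hx.1
    have habs : |∫ x in Ioo (0:ℝ) y, e x * f x| ≤ ∫ x in Ioo (0:ℝ) y, e x * |f x| := by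
      calc |∫ x in Ioo (0:ℝ) y, e x * f x|
          ≤ ∫ x in Ioo (0:ℝ) y, |e x| * |f x| := by
            simpa [Real.norm_eq_abs, abs_mul] using
              norm_integral_le_integral_norm (μ := volume.restrict (Ioo (0:ℝ) y))
                (fun x => e x * f x)
        _ = ∫ x in Ioo (0:ℝ) y, e x * |f x| := by
            apply integral_congr_ae
            apply ae_of_all
            intro x
            simp [abs_of_nonneg (he_pos x).le]
    have hstep2 : (∫ x in Ioo (0:ℝ) y, e x * |f x|) * (1+y)^α
        ≤ ∫ x in Ioo (0:ℝ) y, Ψ y x * w x := by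
      rw [← integral_mul_const]
      apply setIntegral_mono_on (hint1.mul_const _) (hint2 y hy0) measurableSet_Ioo
      intro x hx
      have hb2 := hexpb x y hx.1 hx.2
      rw [he_eq x hx] at hb2
      calc e x * |f x| * (1+y)^α = (e x * (1+y)^α) * |f x| := by ring
        _ ≤ ((1+x)^α * Real.exp (F₀ x - F₀ y)) * |f x| :=
            mul_le_mul_of_nonneg_right hb2 (abs_nonneg _)
        _ = Ψ y x * w x := by rw [hΨdef, hwdef]; ring
    have hkey : |R y| * (1+y)^α ≤ (1 / r y) * ∫ x in Ioo (0:ℝ) y, Ψ y x * w x := by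
      have hynn : (0:ℝ) ≤ (1+y)^α := Real.rpow_nonneg (by linarith) _
      have c1 : |∫ x in Ioo (0:ℝ) y, e x * f x| * (1+y)^α
          ≤ ∫ x in Ioo (0:ℝ) y, Ψ y x * w x :=
        le_trans (mul_le_mul_of_nonneg_right habs hynn) hstep2
      calc |R y| * (1+y)^α
          = (1/r y) * (|∫ x in Ioo (0:ℝ) y, e x * f x| * (1+y)^α) := by
            rw [hI, abs_mul, abs_of_nonneg hr1nn]; ring
        _ ≤ (1/r y) * ∫ x in Ioo (0:ℝ) y, Ψ y x * w x :=
            mul_le_mul_of_nonneg_left c1 hr1nn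
    calc ENNReal.ofReal (|R y| * (1+y)^α)
        ≤ ENNReal.ofReal ((1/r y) * ∫ x in Ioo (0:ℝ) y, Ψ y x * w x) :=
          ENNReal.ofReal_le_ofReal hkey
      _ = Q y := by
          rw [hQdef]
          simp only []
          rw [ENNReal.ofReal_mul hr1nn,
            ofReal_integral_eq_lintegral_ofReal (hint2 y hy0) (hΨw_nonneg y)]
  -- split the integral
  set A := {u : ℝ | a u < c} with hAdef
  have hA : MeasurableSet A := measurableSet_lt ha_meas measurable_const
  have main1 : ∫⁻ z in Ioi M, ENNReal.ofReal (|R z| * (1+z)^α) ≤ ∫⁻ z in Ioi M, Q z :=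
    lintegral_mono_ae ((ae_restrict_iff' measurableSet_Ioi).2 (ae_of_all _ stepR))
  have hsplitQ : ∫⁻ z in Ioi M, Q z
      = (∫⁻ z in A, Q z ∂(volume.restrict (Ioi M)))
        + ∫⁻ z in Aᶜ, Q z ∂(volume.restrict (Ioi M)) := (lintegral_add_compl Q hA).symm
  -- term 1
  have term1 : ∫⁻ z in A, Q z ∂(volume.restrict (Ioi M))
      ≤ ∫⁻ z in Ioi M, ENNReal.ofReal (Set.indicator A (fun u => 1 / r u) z) := by
    have e1 : ∀ z, ENNReal.ofReal (Set.indicator A (fun u => 1 / r u) z)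
        = Set.indicator A (fun u => ENNReal.ofReal (1 / r u)) z := by
      intro z
      by_cases hz : z ∈ A
      · rw [indicator_of_mem hz, indicator_of_mem hz]
      · rw [indicator_of_notMem hz, indicator_of_notMem hz, ENNReal.ofReal_zero]
    have e2 : ∫⁻ z in Ioi M, ENNReal.ofReal (Set.indicator A (fun u => 1 / r u) z)
        = ∫⁻ z in A, ENNReal.ofReal (1 / r z) ∂(volume.restrict (Ioi M)) := by
      rw [lintegral_congr e1, lintegral_indicator hA]
    rw [e2]
    apply lintegral_mono_ae
    have hmem : ∀ᵐ z ∂((volume.restrict (Ioi M)).restrict A), z ∈ A ∩ Ioi M := by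
      rw [Measure.restrict_restrict hA]
      exact ae_restrict_mem (hA.inter measurableSet_Ioi)
    refine hmem.mono fun z hz => ?_
    have hz0 : (0:ℝ) < z := hM.trans hz.2
    calc Q z ≤ ENNReal.ofReal (1 / r z) * 1 := mul_le_mul_right (hQle z hz0) _
      _ = ENNReal.ofReal (1 / r z) := mul_one _
  -- term 2
  have term2 : ∫⁻ z in Aᶜ, Q z ∂(volume.restrict (Ioi M)) ≤ ENNReal.ofReal (1 / c) := by
    rw [Measure.restrict_restrict hA.compl]
    set V := Aᶜ ∩ Ioi M with hVdef
    have hVm : MeasurableSet V := hA.compl.inter measurableSet_Ioi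
    have hbV : ∀ z ∈ V, Q z ≤ ENNReal.ofReal (1/c)
        * (ENNReal.ofReal (b z) * ∫⁻ x in Ioo (0:ℝ) z, ENNReal.ofReal (Ψ z x * w x)) := by
      intro z hz
      have hz0 : (0:ℝ) < z := hM.trans hz.2
      have hca : c ≤ a z := not_lt.1 hz.1
      have h1 : (1:ℝ)/r z ≤ 1/c * b z := by
        have hbz : b z = a z * (r z)⁻¹ := by
          rw [hbdef]; simp only []; rw [hρ_eq z hz0]
        rw [hbz]
        have h2 : (0:ℝ) ≤ (r z)⁻¹ := inv_nonneg.2 (hr_pos z hz0).le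
        have h3 : 1 ≤ a z / c := (one_le_div hc).2 hca
        calc (1:ℝ)/r z = 1 * (r z)⁻¹ := by rw [one_div, one_mul]
          _ ≤ (a z / c) * (r z)⁻¹ := mul_le_mul_of_nonneg_right h3 h2
          _ = 1/c * (a z * (r z)⁻¹) := by ring
      calc Q z ≤ ENNReal.ofReal (1/c * b z)
            * ∫⁻ x in Ioo (0:ℝ) z, ENNReal.ofReal (Ψ z x * w x) :=
            mul_le_mul_left (ENNReal.ofReal_le_ofReal h1) _
        _ = ENNReal.ofReal (1/c)
            * (ENNReal.ofReal (b z) * ∫⁻ x in Ioo (0:ℝ) z, ENNReal.ofReal (Ψ z x * w x)) := by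
            rw [ENNReal.ofReal_mul (by positivity : (0:ℝ) ≤ 1/c), mul_assoc]
    have core : (∫⁻ z in V, ENNReal.ofReal (b z)
        * ∫⁻ x in Ioo (0:ℝ) z, ENNReal.ofReal (Ψ z x * w x)) ≤ 1 := by
      set W : Set (ℝ×ℝ) := {p : ℝ×ℝ | 0 < p.2 ∧ p.2 < p.1} with hWdef
      have hWm : MeasurableSet W :=
        (measurableSet_lt measurable_const measurable_snd).inter
          (measurableSet_lt measurable_snd measurable_fst)
      set Φ : ℝ×ℝ → ENNReal := fun p => ENNReal.ofReal (Ψ p.1 p.2 * w p.2) with hΦdef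
      have hΦm : Measurable Φ :=
        ((Real.measurable_exp.comp ((hF₀_meas.comp measurable_snd).sub
          (hF₀_meas.comp measurable_fst))).mul (hw_meas.comp measurable_snd)).ennreal_ofReal
      set H : ℝ → ℝ → ENNReal := fun z x => ENNReal.ofReal (b z) * W.indicator Φ (z, x)
        with hHdef
      have hHm : Measurable (Function.uncurry H) := by
        show Measurable fun p : ℝ×ℝ => ENNReal.ofReal (b p.1) * W.indicator Φ (p.1, p.2)
        exact ((hb_meas.comp measurable_fst).ennreal_ofReal).mul (hΦm.indicator hWm)
      have hinner : ∀ᵐ z ∂volume, z ∈ V → ENNReal.ofReal (b z)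
          * ∫⁻ x in Ioo (0:ℝ) z, ENNReal.ofReal (Ψ z x * w x) = ∫⁻ x, H z x := by
        apply ae_of_all
        intro z hz
        have h1 : ∫⁻ x in Ioo (0:ℝ) z, ENNReal.ofReal (Ψ z x * w x)
            = ∫⁻ x, W.indicator Φ (z, x) := by
          rw [← lintegral_indicator measurableSet_Ioo]
          apply lintegral_congr
          intro x
          by_cases hx : x ∈ Ioo (0:ℝ) z
          · rw [indicator_of_mem hx, indicator_of_mem (show (z,x) ∈ W from ⟨hx.1, hx.2⟩)]
          · rw [indicator_of_notMem hx,
              indicator_of_notMem (show (z,x) ∉ W from fun hW => hx ⟨hW.1, hW.2⟩)]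
        rw [h1, ← lintegral_const_mul' _ _ ENNReal.ofReal_ne_top]
      rw [setLIntegral_congr_fun_ae hVm hinner]
      rw [lintegral_lintegral_swap hHm.aemeasurable]
      have hb_inner : ∀ x : ℝ, (∫⁻ z in V, H z x)
          ≤ (Ioi (0:ℝ)).indicator (fun x => ENNReal.ofReal (w x)) x := by
        intro x
        by_cases hx : (0:ℝ) < x
        · have key := key_inner hb_meas hb0 hbi hx
          have hHle : ∀ z, H z x ≤ (Ioi x).indicator
              (fun z => ENNReal.ofReal (b z * Real.exp (-(∫ τ in x..z, b τ)))
                * ENNReal.ofReal (w x)) z := by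
            intro z
            by_cases hzx : x < z
            · have hz0 : (0:ℝ) < z := hx.trans hzx
              rw [hHdef]
              simp only []
              rw [indicator_of_mem (show (z,x) ∈ W from ⟨hx, hzx⟩),
                indicator_of_mem (show z ∈ Ioi x from hzx), hΦdef]
              simp only []
              have hpsi : Ψ z x = Real.exp (-(∫ τ in x..z, b τ)) := by
                rw [hΨdef]
                simp only []
                rw [hF₀_eq x hx, hF₀_eq z hz0, hFadd x z hx hz0]
                congr 1
                ring
              rw [hpsi, ENNReal.ofReal_mul (Real.exp_pos _).le, ← mul_assoc,
                ← ENNReal.ofReal_mul (hb0 z)]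
            · rw [hHdef]
              simp only []
              rw [indicator_of_notMem (show (z,x) ∉ W from fun hW => hzx hW.2),
                indicator_of_notMem (show z ∉ Ioi x from hzx)]
              simp
          calc ∫⁻ z in V, H z x
              ≤ ∫⁻ z in V, (Ioi x).indicator
                (fun z => ENNReal.ofReal (b z * Real.exp (-(∫ τ in x..z, b τ)))
                  * ENNReal.ofReal (w x)) z := lintegral_mono hHle
            _ ≤ ∫⁻ z, (Ioi x).indicator
                (fun z => ENNReal.ofReal (b z * Real.exp (-(∫ τ in x..z, b τ)))
                  * ENNReal.ofReal (w x)) z := setLIntegral_le_lintegral _ _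
            _ = ∫⁻ z in Ioi x, ENNReal.ofReal (b z * Real.exp (-(∫ τ in x..z, b τ)))
                  * ENNReal.ofReal (w x) := lintegral_indicator measurableSet_Ioi _
            _ = (∫⁻ z in Ioi x, ENNReal.ofReal (b z * Real.exp (-(∫ τ in x..z, b τ))))
                  * ENNReal.ofReal (w x) := lintegral_mul_const' _ _ ENNReal.ofReal_ne_top
            _ ≤ 1 * ENNReal.ofReal (w x) := mul_le_mul_left key _
            _ = (Ioi (0:ℝ)).indicator (fun x => ENNReal.ofReal (w x)) x := by
                rw [one_mul, indicator_of_mem (show x ∈ Ioi (0:ℝ) from hx)]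
        · have hzero : ∀ z, H z x = 0 := by
            intro z
            rw [hHdef]
            simp only []
            rw [indicator_of_notMem (show (z,x) ∉ W from fun hW => hx hW.1)]
            simp
          have : ∫⁻ z in V, H z x = 0 := by
            simp only [hzero]
            simp
          rw [this]
          exact zero_le
      calc ∫⁻ x, ∫⁻ z in V, H z x
          ≤ ∫⁻ x, (Ioi (0:ℝ)).indicator (fun x => ENNReal.ofReal (w x)) x :=
            lintegral_mono hb_inner
        _ = ∫⁻ x in Ioi (0:ℝ), ENNReal.ofReal (w x) := lintegral_indicator measurableSet_Ioi _
        _ = ENNReal.ofReal (∫ x in Ioi (0:ℝ), w x) :=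
            (ofReal_integral_eq_lintegral_ofReal hw_int
              ((ae_restrict_iff' measurableSet_Ioi).2
                (ae_of_all _ fun x hx => hw0 x (le_of_lt hx)))).symm
        _ ≤ ENNReal.ofReal 1 := ENNReal.ofReal_le_ofReal hf_ball
        _ ≤ 1 := by simp
    calc ∫⁻ z in V, Q z
        ≤ ∫⁻ z in V, ENNReal.ofReal (1/c)
          * (ENNReal.ofReal (b z) * ∫⁻ x in Ioo (0:ℝ) z, ENNReal.ofReal (Ψ z x * w x)) :=
          setLIntegral_mono' hVm hbV
      _ = ENNReal.ofReal (1/c) * ∫⁻ z in V, (ENNReal.ofReal (b z)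
          * ∫⁻ x in Ioo (0:ℝ) z, ENNReal.ofReal (Ψ z x * w x)) :=
          lintegral_const_mul' _ _ ENNReal.ofReal_ne_top
      _ ≤ ENNReal.ofReal (1/c) * 1 := mul_le_mul_right core _
      _ = ENNReal.ofReal (1/c) := mul_one _
  calc ∫⁻ z in Ioi M, ENNReal.ofReal (|R z| * (1+z)^α)
      ≤ ∫⁻ z in Ioi M, Q z := main1
    _ = (∫⁻ z in A, Q z ∂(volume.restrict (Ioi M)))
        + ∫⁻ z in Aᶜ, Q z ∂(volume.restrict (Ioi M)) := hsplitQ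
    _ ≤ (∫⁻ z in Ioi M, ENNReal.ofReal (Set.indicator A (fun u => 1 / r u) z))
        + ENNReal.ofReal (1 / c) := add_le_add term1 term2
end

section
/- Let b : (0,∞)×(0,∞) → [0,∞) be measurable with b(x,y) = 0 for x ≥ y, and let η ≥ 1 be such that for every α > η there exists c_α > 0 with ∫₀^y b(x,y) dx ≤ c_α (1+y)^α for all y > 0. Then for every α > η, limsup_{y→+∞} (∫₀^y (1+x)^α b(x,y) dx) / (1+y)^α ≤ limsup_{y→+∞} (∫₀^y x^α b(x,y) dx) / y^α, where the limits superior are taken in [0,∞]. -/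
open MeasureTheory Set Filter

/-- If the mean number of daughter aggregates `∫₀^y b(x,y) dx` grows at most polynomially
(with every exponent `α > η` admissible), then for every `α > η`,
`limsup_{y→∞} n_{1,α}(y)/(1+y)^α ≤ limsup_{y→∞} n_α(y)/y^α` in `[0,∞]`, where
`n_{1,α}(y) = ∫₀^y (1+x)^α b(x,y) dx` and `n_α(y) = ∫₀^y x^α b(x,y) dx`. -/
theorem stmt12 (b : ℝ → ℝ → ℝ) (hb_meas : Measurable (Function.uncurry b))
    (hb_nonneg : ∀ x y, 0 ≤ b x y) (hb_supp : ∀ x y, y ≤ x → b x y = 0)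
    (η : ℝ) (hη : 1 ≤ η)
    (hpoly : ∀ α > η, ∃ c > (0 : ℝ), ∀ y > (0 : ℝ),
        ∫⁻ x in Ioo (0 : ℝ) y, ENNReal.ofReal (b x y)
          ≤ ENNReal.ofReal (c * (1 + y) ^ α)) :
    ∀ α > η,
      limsup (fun y : ℝ =>
          (∫⁻ x in Ioo (0 : ℝ) y, ENNReal.ofReal ((1 + x) ^ α * b x y))
            / ENNReal.ofReal ((1 + y) ^ α)) atTop
        ≤ limsup (fun y : ℝ =>
          (∫⁻ x in Ioo (0 : ℝ) y, ENNReal.ofReal (x ^ α * b x y))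
            / ENNReal.ofReal (y ^ α)) atTop := by
  intro α hα
  have hα0 : (0 : ℝ) < α := by linarith
  set G : ℝ → ENNReal := fun y => ∫⁻ x in Ioo (0 : ℝ) y, ENNReal.ofReal (x ^ α * b x y) with hG
  set L : ENNReal := limsup (fun y : ℝ => G y / ENNReal.ofReal (y ^ α)) atTop with hLdef
  show limsup _ atTop ≤ L
  by_cases hLtop : L = ⊤
  · rw [hLtop]; exact le_top
  -- choose β between η and α
  set β : ℝ := (η + α) / 2 with hβdef
  have hβ1 : η < β := by rw [hβdef]; linarith
  have hβ2 : β < α := by rw [hβdef]; linarith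
  obtain ⟨c, hc, hcb⟩ := hpoly β hβ1
  -- the key estimate for each ε > 0
  have key : ∀ ε : ℝ, 0 < ε →
      limsup (fun y : ℝ =>
          (∫⁻ x in Ioo (0 : ℝ) y, ENNReal.ofReal ((1 + x) ^ α * b x y))
            / ENNReal.ofReal ((1 + y) ^ α)) atTop
        ≤ ENNReal.ofReal ((1 + ε) ^ α) * L := by
    intro ε hε
    set k : ENNReal := ENNReal.ofReal ((1 + ε) ^ α) with hk
    set K : ENNReal := ENNReal.ofReal ((1 + 1/ε) ^ α) with hK
    have hkt : k ≠ ⊤ := ENNReal.ofReal_ne_top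
    have hKt : K ≠ ⊤ := ENNReal.ofReal_ne_top
    -- auxiliary error term
    set h : ℝ → ENNReal := fun y => K * ENNReal.ofReal (c * (1 + y) ^ (β - α)) with hh
    have hh0 : Tendsto h atTop (nhds 0) := by
      have h1 : Tendsto (fun y : ℝ => (1 + y) ^ (β - α)) atTop (nhds 0) := by
        have := tendsto_rpow_neg_atTop (y := α - β) (by linarith)
        have h2 : Tendsto (fun y : ℝ => 1 + y) atTop atTop :=
          tendsto_atTop_add_const_left _ _ tendsto_id
        have := this.comp h2
        simpa [neg_sub, Function.comp_def] using this
      have h3 : Tendsto (fun y : ℝ => ENNReal.ofReal (c * (1 + y) ^ (β - α))) atTop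
          (nhds (ENNReal.ofReal (c * 0))) :=
        (ENNReal.continuous_ofReal.tendsto _).comp (h1.const_mul c)
      have h4 := ENNReal.Tendsto.const_mul (a := K) h3 (Or.inr hKt)
      simpa using h4
    -- eventual pointwise bound
    have hev : ∀ᶠ y : ℝ in atTop,
        (∫⁻ x in Ioo (0 : ℝ) y, ENNReal.ofReal ((1 + x) ^ α * b x y))
            / ENNReal.ofReal ((1 + y) ^ α)
          ≤ k * (G y / ENNReal.ofReal (y ^ α)) + h y := by
      filter_upwards [eventually_gt_atTop (0 : ℝ)] with y hy
      have hy1 : (0 : ℝ) < 1 + y := by linarith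
      have hbmy : Measurable fun x => b x y :=
        hb_meas.comp (measurable_id.prodMk measurable_const)
      set N : ENNReal := ∫⁻ x in Ioo (0 : ℝ) y, ENNReal.ofReal (b x y) with hN
      -- step A : pointwise integral bound
      have stepA : (∫⁻ x in Ioo (0 : ℝ) y, ENNReal.ofReal ((1 + x) ^ α * b x y))
          ≤ k * G y + K * N := by
        have pw : ∀ x ∈ Ioo (0 : ℝ) y,
            ENNReal.ofReal ((1 + x) ^ α * b x y)
              ≤ ENNReal.ofReal ((1 + ε) ^ α * (x ^ α * b x y))
                + ENNReal.ofReal ((1 + 1/ε) ^ α * b x y) := by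
          rintro x ⟨hx0, _⟩
          rw [← ENNReal.ofReal_add
            (mul_nonneg (Real.rpow_nonneg (by positivity) _)
              (mul_nonneg (Real.rpow_nonneg hx0.le _) (hb_nonneg x y)))
            (mul_nonneg (Real.rpow_nonneg (by positivity) _) (hb_nonneg x y))]
          refine ENNReal.ofReal_le_ofReal ?_
          have hbase : (1 + x) ^ α ≤ (1 + ε) ^ α * x ^ α + (1 + 1/ε) ^ α := by
            rcases le_total x (1/ε) with hcase | hcase
            · have h1 : (1 + x) ^ α ≤ (1 + 1/ε) ^ α :=
                Real.rpow_le_rpow (by positivity) (by linarith) hα0.le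
              nlinarith [Real.rpow_nonneg (by positivity : (0:ℝ) ≤ 1 + ε) α,
                Real.rpow_nonneg hx0.le α,
                mul_nonneg (Real.rpow_nonneg (by positivity : (0:ℝ) ≤ 1 + ε) α)
                  (Real.rpow_nonneg hx0.le α)]
            · have hεx : 1 ≤ ε * x := by
                rw [div_le_iff₀ hε] at hcase
                linarith
              have h1 : 1 + x ≤ (1 + ε) * x := by nlinarith
              have h2 : (1 + x) ^ α ≤ ((1 + ε) * x) ^ α :=
                Real.rpow_le_rpow (by positivity) h1 hα0.le
              rw [Real.mul_rpow (by positivity) hx0.le] at h2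
              have h3 : (0:ℝ) ≤ (1 + 1/ε) ^ α := Real.rpow_nonneg (by positivity) α
              linarith
          calc (1 + x) ^ α * b x y ≤ ((1 + ε) ^ α * x ^ α + (1 + 1/ε) ^ α) * b x y :=
                mul_le_mul_of_nonneg_right hbase (hb_nonneg x y)
            _ = (1 + ε) ^ α * (x ^ α * b x y) + (1 + 1/ε) ^ α * b x y := by ring
        calc (∫⁻ x in Ioo (0 : ℝ) y, ENNReal.ofReal ((1 + x) ^ α * b x y))
            ≤ ∫⁻ x in Ioo (0 : ℝ) y,
                (ENNReal.ofReal ((1 + ε) ^ α * (x ^ α * b x y))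
                  + ENNReal.ofReal ((1 + 1/ε) ^ α * b x y)) := by
              refine setLIntegral_mono' measurableSet_Ioo pw
          _ = (∫⁻ x in Ioo (0 : ℝ) y, ENNReal.ofReal ((1 + ε) ^ α * (x ^ α * b x y)))
                + ∫⁻ x in Ioo (0 : ℝ) y, ENNReal.ofReal ((1 + 1/ε) ^ α * b x y) := by
              refine lintegral_add_left ?_ _
              exact ENNReal.measurable_ofReal.comp
                (measurable_const.mul ((measurable_id.pow measurable_const).mul hbmy))
          _ = k * G y + K * N := by
              congr 1
              · rw [hG]
                calc (∫⁻ x in Ioo (0 : ℝ) y, ENNReal.ofReal ((1 + ε) ^ α * (x ^ α * b x y)))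
                    = ∫⁻ x in Ioo (0 : ℝ) y, k * ENNReal.ofReal (x ^ α * b x y) := by
                      refine lintegral_congr fun x => ?_
                      rw [hk, ← ENNReal.ofReal_mul (by positivity)]
                  _ = k * ∫⁻ x in Ioo (0 : ℝ) y, ENNReal.ofReal (x ^ α * b x y) :=
                      lintegral_const_mul' _ _ hkt
              · rw [hN]
                calc (∫⁻ x in Ioo (0 : ℝ) y, ENNReal.ofReal ((1 + 1/ε) ^ α * b x y))
                    = ∫⁻ x in Ioo (0 : ℝ) y, K * ENNReal.ofReal (b x y) := by
                      refine lintegral_congr fun x => ?_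
                      rw [hK, ← ENNReal.ofReal_mul (by positivity)]
                  _ = K * ∫⁻ x in Ioo (0 : ℝ) y, ENNReal.ofReal (b x y) :=
                      lintegral_const_mul' _ _ hKt
      -- step B : divide
      have hDpos : ENNReal.ofReal (y ^ α) ≤ ENNReal.ofReal ((1 + y) ^ α) :=
        ENNReal.ofReal_le_ofReal (Real.rpow_le_rpow hy.le (by linarith) hα0.le)
      calc (∫⁻ x in Ioo (0 : ℝ) y, ENNReal.ofReal ((1 + x) ^ α * b x y))
            / ENNReal.ofReal ((1 + y) ^ α)
          ≤ (k * G y + K * N) / ENNReal.ofReal ((1 + y) ^ α) :=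
            ENNReal.div_le_div_right stepA _
        _ = (k * G y) / ENNReal.ofReal ((1 + y) ^ α)
              + (K * N) / ENNReal.ofReal ((1 + y) ^ α) := ENNReal.add_div
        _ ≤ k * (G y / ENNReal.ofReal (y ^ α)) + h y := by
            refine add_le_add ?_ ?_
            · rw [div_eq_mul_inv, mul_assoc, ← div_eq_mul_inv]
              exact mul_le_mul_right (ENNReal.div_le_div_left hDpos _) k
            · rw [div_eq_mul_inv, mul_assoc, ← div_eq_mul_inv, hh]
              refine mul_le_mul_right ?_ K
              calc N / ENNReal.ofReal ((1 + y) ^ α)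
                  ≤ ENNReal.ofReal (c * (1 + y) ^ β) / ENNReal.ofReal ((1 + y) ^ α) :=
                    ENNReal.div_le_div_right (hcb y hy) _
                _ = ENNReal.ofReal (c * (1 + y) ^ β / (1 + y) ^ α) :=
                    (ENNReal.ofReal_div_of_pos (Real.rpow_pos_of_pos hy1 α)).symm
                _ = ENNReal.ofReal (c * (1 + y) ^ (β - α)) := by
                    rw [mul_div_assoc, Real.rpow_sub hy1]
    -- conclude : limsup ≤ k * L using h → 0
    have hlim : limsup (fun y : ℝ => k * (G y / ENNReal.ofReal (y ^ α))) atTop = k * L := by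
      rw [hLdef]
      exact ENNReal.limsup_const_mul_of_ne_top hkt
    have hkLt : k * L ≠ ⊤ := ENNReal.mul_ne_top hkt hLtop
    refine le_of_forall_gt_imp_ge_of_dense fun a ha => ?_
    obtain ⟨m, hm1, hm2⟩ := exists_between ha
    have hmt : m ≠ ⊤ := hm2.ne_top
    have hev1 : ∀ᶠ y : ℝ in atTop, k * (G y / ENNReal.ofReal (y ^ α)) < m := by
      refine eventually_lt_of_limsup_lt ?_
      rw [hlim]; exact hm1
    have hev2 : ∀ᶠ y : ℝ in atTop, h y < a - m :=
      hh0.eventually_lt_const (tsub_pos_of_lt hm2)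
    refine limsup_le_of_le (by isBoundedDefault) ?_
    filter_upwards [hev, hev1, hev2] with y h0 h1 h2
    calc (∫⁻ x in Ioo (0 : ℝ) y, ENNReal.ofReal ((1 + x) ^ α * b x y))
          / ENNReal.ofReal ((1 + y) ^ α)
        ≤ k * (G y / ENNReal.ofReal (y ^ α)) + h y := h0
      _ ≤ m + (a - m) := add_le_add h1.le h2.le
      _ = a := add_tsub_cancel_of_le hm2.le
  -- let ε → 0
  have htend : Tendsto (fun ε : ℝ => ENNReal.ofReal ((1 + ε) ^ α) * L)
      (nhdsWithin 0 (Ioi 0)) (nhds L) := by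
    have h1 : Tendsto (fun ε : ℝ => (1 + ε) ^ α) (nhdsWithin 0 (Ioi 0)) (nhds 1) := by
      have : ContinuousAt (fun ε : ℝ => (1 + ε) ^ α) 0 := by
        refine ContinuousAt.rpow_const ?_ (Or.inr hα0.le)
        exact (continuous_const.add continuous_id).continuousAt
      simpa using this.continuousWithinAt.tendsto
    have h2 := (ENNReal.continuous_ofReal.tendsto _).comp h1
    have h3 := ENNReal.Tendsto.mul_const (b := L) h2 (Or.inl (by simp))
    simpa using h3
  refine ge_of_tendsto htend ?_
  filter_upwards [eventually_mem_nhdsWithin] with ε hε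
  exact key ε hε
end

section
/- Let y > 0, let w : (0,y) → [0,∞) be measurable with ∫₀^y x w(x) dx = y, let ε ∈ [0,1], and let 1 ≤ α ≤ α₂ with α₂ > 1. If (∫₀^y x^{α₂} w(x) dx) / y^{α₂} ≤ 1 − ε, then (∫₀^y x^α w(x) dx) / y^α ≤ 1 − ε (α − 1)/(α₂ − 1). -/
open MeasureTheory Set

theorem pointwise_interp (y : ℝ) (hy : 0 < y) (α α₂ : ℝ) (hα1 : 1 ≤ α)
    (hαα₂ : α ≤ α₂) (hα₂ : 1 < α₂) (x : ℝ) (hx : x ∈ Ioo (0:ℝ) y) :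
    x ^ α ≤ (1 - (α - 1)/(α₂ - 1)) * y ^ (α - 1) * x
      + (α - 1)/(α₂ - 1) * y ^ (α - α₂) * x ^ α₂ := by
  obtain ⟨hx0, hxy⟩ := hx
  set t : ℝ := (α - 1)/(α₂ - 1) with ht
  have ht0 : 0 ≤ t := div_nonneg (by linarith) (by linarith)
  have ht1 : t ≤ 1 := by
    rw [ht, div_le_one (by linarith)]; linarith
  have hp₁ : (0:ℝ) ≤ y ^ (α - 1) * x :=
    mul_nonneg (Real.rpow_nonneg hy.le _) hx0.le
  have hp₂ : (0:ℝ) ≤ y ^ (α - α₂) * x ^ α₂ :=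
    mul_nonneg (Real.rpow_nonneg hy.le _) (Real.rpow_nonneg hx0.le _)
  have amgm := Real.geom_mean_le_arith_mean2_weighted (sub_nonneg.2 ht1) ht0 hp₁ hp₂
    (by ring)
  have htmul : t * (α₂ - 1) = α - 1 := by
    rw [ht, div_mul_cancel₀]; linarith
  have heq : (y ^ (α - 1) * x) ^ (1 - t) * (y ^ (α - α₂) * x ^ α₂) ^ t = x ^ α := by
    rw [Real.mul_rpow (Real.rpow_nonneg hy.le _) hx0.le,
        Real.mul_rpow (Real.rpow_nonneg hy.le _) (Real.rpow_nonneg hx0.le _),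
        ← Real.rpow_mul hy.le, ← Real.rpow_mul hy.le, ← Real.rpow_mul hx0.le]
    rw [mul_mul_mul_comm, ← Real.rpow_add hy, ← Real.rpow_add hx0]
    have h1 : (α - 1) * (1 - t) + (α - α₂) * t = 0 := by nlinarith [htmul]
    have h2 : (1 - t) + α₂ * t = α := by nlinarith [htmul]
    rw [h1, h2, Real.rpow_zero, one_mul]
  calc x ^ α = (y ^ (α - 1) * x) ^ (1 - t) * (y ^ (α - α₂) * x ^ α₂) ^ t := heq.symm
    _ ≤ (1 - t) * (y ^ (α - 1) * x) + t * (y ^ (α - α₂) * x ^ α₂) := amgm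
    _ = (1 - t) * y ^ (α - 1) * x + t * y ^ (α - α₂) * x ^ α₂ := by ring

/-- Convexity interpolation for moments of a mass-conserving fragmentation kernel:
if `∫₀^y x w(x) dx = y`, `ε ∈ [0,1]`, `1 ≤ α ≤ α₂`, `α₂ > 1` and
`(∫₀^y x^{α₂} w(x) dx)/y^{α₂} ≤ 1 − ε`, then
`(∫₀^y x^α w(x) dx)/y^α ≤ 1 − ε(α−1)/(α₂−1)`. -/
theorem stmt13 (y : ℝ) (hy : 0 < y) (w : ℝ → ℝ) (hw_meas : Measurable w)
    (hw_nonneg : ∀ x ∈ Ioo (0 : ℝ) y, 0 ≤ w x)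
    (hmass : ∫⁻ x in Ioo (0 : ℝ) y, ENNReal.ofReal (x * w x) = ENNReal.ofReal y)
    (ε : ℝ) (hε0 : 0 ≤ ε) (hε1 : ε ≤ 1)
    (α α₂ : ℝ) (hα1 : 1 ≤ α) (hαα₂ : α ≤ α₂) (hα₂ : 1 < α₂)
    (h2 : ∫⁻ x in Ioo (0 : ℝ) y, ENNReal.ofReal (x ^ α₂ * w x)
        ≤ ENNReal.ofReal ((1 - ε) * y ^ α₂)) :
    ∫⁻ x in Ioo (0 : ℝ) y, ENNReal.ofReal (x ^ α * w x)
      ≤ ENNReal.ofReal ((1 - ε * (α - 1) / (α₂ - 1)) * y ^ α) := by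
  set t : ℝ := (α - 1)/(α₂ - 1) with ht
  have ht0 : 0 ≤ t := div_nonneg (by linarith) (by linarith)
  have ht1 : t ≤ 1 := by rw [ht, div_le_one (by linarith)]; linarith
  set c₁ : ℝ := (1 - t) * y ^ (α - 1) with hc₁
  set c₂ : ℝ := t * y ^ (α - α₂) with hc₂
  have hc₁0 : 0 ≤ c₁ := mul_nonneg (by linarith) (Real.rpow_nonneg hy.le _)
  have hc₂0 : 0 ≤ c₂ := mul_nonneg ht0 (Real.rpow_nonneg hy.le _)
  have hmeas₂ : Measurable fun x : ℝ => ENNReal.ofReal (c₂ * (x ^ α₂ * w x)) := by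
    fun_prop
  have hmeas₁ : Measurable fun x : ℝ => ENNReal.ofReal (c₁ * (x * w x)) := by
    fun_prop
  have step1 : ∫⁻ x in Ioo (0 : ℝ) y, ENNReal.ofReal (x ^ α * w x)
      ≤ ∫⁻ x in Ioo (0 : ℝ) y,
          (ENNReal.ofReal (c₁ * (x * w x)) + ENNReal.ofReal (c₂ * (x ^ α₂ * w x))) := by
    apply setLIntegral_mono (hmeas₁.add hmeas₂)
    intro x hx
    simp only [Pi.add_apply]
    rw [← ENNReal.ofReal_add (mul_nonneg hc₁0 (mul_nonneg hx.1.le (hw_nonneg x hx)))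
        (mul_nonneg hc₂0 (mul_nonneg (Real.rpow_nonneg hx.1.le _) (hw_nonneg x hx)))]
    apply ENNReal.ofReal_le_ofReal
    have hpi := pointwise_interp y hy α α₂ hα1 hαα₂ hα₂ x hx
    have hwx := hw_nonneg x hx
    calc x ^ α * w x ≤ ((1 - t) * y ^ (α - 1) * x + t * y ^ (α - α₂) * x ^ α₂) * w x :=
          mul_le_mul_of_nonneg_right hpi hwx
      _ = c₁ * (x * w x) + c₂ * (x ^ α₂ * w x) := by rw [hc₁, hc₂]; ring
  have step2 : ∫⁻ x in Ioo (0 : ℝ) y,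
      (ENNReal.ofReal (c₁ * (x * w x)) + ENNReal.ofReal (c₂ * (x ^ α₂ * w x)))
      = ENNReal.ofReal c₁ * (∫⁻ x in Ioo (0 : ℝ) y, ENNReal.ofReal (x * w x))
        + ENNReal.ofReal c₂ * ∫⁻ x in Ioo (0 : ℝ) y, ENNReal.ofReal (x ^ α₂ * w x) := by
    have A : ∫⁻ x in Ioo (0 : ℝ) y, ENNReal.ofReal (c₁ * (x * w x))
        = ENNReal.ofReal c₁ * ∫⁻ x in Ioo (0 : ℝ) y, ENNReal.ofReal (x * w x) := by
      simp_rw [ENNReal.ofReal_mul hc₁0]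
      exact lintegral_const_mul' _ _ ENNReal.ofReal_ne_top
    have B : ∫⁻ x in Ioo (0 : ℝ) y, ENNReal.ofReal (c₂ * (x ^ α₂ * w x))
        = ENNReal.ofReal c₂ * ∫⁻ x in Ioo (0 : ℝ) y, ENNReal.ofReal (x ^ α₂ * w x) := by
      simp_rw [ENNReal.ofReal_mul hc₂0]
      exact lintegral_const_mul' _ _ ENNReal.ofReal_ne_top
    rw [lintegral_add_left hmeas₁, A, B]
  rw [step2, hmass] at step1
  refine step1.trans ?_
  have step3 : ENNReal.ofReal c₁ * ENNReal.ofReal y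
      + ENNReal.ofReal c₂ * ENNReal.ofReal ((1 - ε) * y ^ α₂)
      = ENNReal.ofReal (c₁ * y + c₂ * ((1 - ε) * y ^ α₂)) := by
    rw [← ENNReal.ofReal_mul hc₁0, ← ENNReal.ofReal_mul hc₂0,
        ← ENNReal.ofReal_add (mul_nonneg hc₁0 hy.le)
          (mul_nonneg hc₂0 (mul_nonneg (by linarith) (Real.rpow_nonneg hy.le _)))]
  calc ENNReal.ofReal c₁ * ENNReal.ofReal y
      + ENNReal.ofReal c₂ * ∫⁻ x in Ioo (0 : ℝ) y, ENNReal.ofReal (x ^ α₂ * w x)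
      ≤ ENNReal.ofReal c₁ * ENNReal.ofReal y
        + ENNReal.ofReal c₂ * ENNReal.ofReal ((1 - ε) * y ^ α₂) := by gcongr
    _ = ENNReal.ofReal (c₁ * y + c₂ * ((1 - ε) * y ^ α₂)) := step3
    _ ≤ ENNReal.ofReal ((1 - ε * (α - 1) / (α₂ - 1)) * y ^ α) := by
        apply ENNReal.ofReal_le_ofReal
        have e1 : y ^ (α - 1) * y = y ^ α := by
          nth_rewrite 2 [← Real.rpow_one y]
          rw [← Real.rpow_add hy]; norm_num
        have e2 : y ^ (α - α₂) * y ^ α₂ = y ^ α := by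
          rw [← Real.rpow_add hy]; norm_num
        have hsum : c₁ * y + c₂ * ((1 - ε) * y ^ α₂)
            = (1 - t) * y ^ α + t * (1 - ε) * y ^ α := by
          rw [hc₁, hc₂]; linear_combination (1 - t) * e1 + t * (1 - ε) * e2
        have hεt : ε * (α - 1) / (α₂ - 1) = ε * t := by
          rw [ht]; ring
        rw [hsum, hεt]
        nlinarith [Real.rpow_nonneg hy.le α]
end

section
/- Let β : (0,∞) → [0,∞) be measurable with 0 < ∫₀^y s β(s) ds < ∞ for every y > 0, and suppose that β₀⁻ := liminf_{x→0⁺} x β(x) > 0 and β₀⁺ := limsup_{x→0⁺} x β(x) < ∞. Then for every α > 1, limsup_{y→0⁺} y^{1−α} (∫₀^y x^α β(x) dx) / (∫₀^y x β(x) dx) ≤ β₀⁺ / (α β₀⁻). -/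
open MeasureTheory Set Filter

/-- For a separable fragmentation kernel given by `β` with `0 < ∫₀^y s β(s) ds < ∞` for all
`y > 0`, if `β₀⁻ := liminf_{x→0⁺} x β(x) > 0` and `β₀⁺ := limsup_{x→0⁺} x β(x) < ∞`, then
for every `α > 1`,
`limsup_{y→0⁺} y^{1−α} (∫₀^y x^α β(x) dx)/(∫₀^y x β(x) dx) ≤ β₀⁺/(α β₀⁻)`. -/
theorem stmt16 (β : ℝ → ℝ) (hβ_meas : Measurable β) (hβ_nonneg : ∀ x > (0 : ℝ), 0 ≤ β x)
    (hβ_int : ∀ y > (0 : ℝ), IntegrableOn (fun s => s * β s) (Ioo (0 : ℝ) y))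
    (hβ_pos : ∀ y > (0 : ℝ), 0 < ∫ s in Ioo (0 : ℝ) y, s * β s)
    (hliminf_pos : 0 < liminf (fun x => x * β x) (nhdsWithin 0 (Ioi (0 : ℝ))))
    (hlimsup_fin :
      IsBoundedUnder (· ≤ ·) (nhdsWithin 0 (Ioi (0 : ℝ))) (fun x => x * β x)) :
    ∀ α > (1 : ℝ),
      limsup (fun y => y ^ (1 - α) *
          ((∫ x in Ioo (0 : ℝ) y, x ^ α * β x) / ∫ x in Ioo (0 : ℝ) y, x * β x))
        (nhdsWithin 0 (Ioi (0 : ℝ)))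
        ≤ (limsup (fun x => x * β x) (nhdsWithin 0 (Ioi (0 : ℝ))))
          / (α * liminf (fun x => x * β x) (nhdsWithin 0 (Ioi (0 : ℝ)))) := by
  intro α hα
  have hα0 : (0 : ℝ) < α := by linarith
  set l : Filter ℝ := nhdsWithin 0 (Ioi (0 : ℝ)) with hl
  set m : ℝ := liminf (fun x => x * β x) l with hm
  set M : ℝ := limsup (fun x => x * β x) l with hM
  set F : ℝ → ℝ := fun y => y ^ (1 - α) *
      ((∫ x in Ioo (0 : ℝ) y, x ^ α * β x) / ∫ x in Ioo (0 : ℝ) y, x * β x) with hF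
  -- nonnegativity of F
  have hF_nonneg : ∀ᶠ y in l, 0 ≤ F y := by
    filter_upwards [self_mem_nhdsWithin] with y hy
    have hy0 : (0:ℝ) < y := hy
    have hnum : 0 ≤ ∫ x in Ioo (0 : ℝ) y, x ^ α * β x := by
      apply setIntegral_nonneg measurableSet_Ioo
      intro x hx
      exact mul_nonneg (Real.rpow_nonneg hx.1.le α) (hβ_nonneg x hx.1)
    exact mul_nonneg (Real.rpow_nonneg hy0.le _)
      (div_nonneg hnum (hβ_pos y hy0).le)
  have hF_cobdd : IsCoboundedUnder (· ≤ ·) l F :=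
    IsBoundedUnder.isCoboundedUnder_le ⟨0, by
      simpa [eventually_map] using hF_nonneg⟩
  have hcobdd_ge : IsCoboundedUnder (· ≥ ·) l (fun x => x * β x) :=
    hlimsup_fin.isCoboundedUnder_ge
  have hbdd_ge : IsBoundedUnder (· ≥ ·) l (fun x => x * β x) :=
    ⟨0, by
      simp only [eventually_map]
      filter_upwards [self_mem_nhdsWithin] with x hx
      exact mul_nonneg (le_of_lt hx) (hβ_nonneg x hx)⟩
  -- key estimate for each ε
  have key : ∀ ε : ℝ, 0 < ε → ε < m → limsup F l ≤ (M + ε) / (α * (m - ε)) := by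
    intro ε hε hεm
    have hmε : 0 < m - ε := by linarith
    have h1 : ∀ᶠ x in l, x * β x < M + ε :=
      eventually_lt_of_limsup_lt (by linarith [hε] : M < M + ε) hlimsup_fin
    have h2 : ∀ᶠ x in l, m - ε < x * β x :=
      eventually_lt_of_lt_liminf (by linarith : m - ε < m) hbdd_ge
    obtain ⟨δ, hδ, hsub⟩ := mem_nhdsGT_iff_exists_Ioo_subset.1 (h1.and h2)
    have hδ0 : (0:ℝ) < δ := hδ
    refine limsup_le_of_le hF_cobdd ?_
    have hIooδ : Ioo (0:ℝ) δ ∈ l := Ioo_mem_nhdsGT_of_mem ⟨le_refl _, hδ0⟩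
    filter_upwards [hIooδ] with y hy
    obtain ⟨hy0, hyδ⟩ := hy
    have hbound : ∀ x ∈ Ioo (0:ℝ) y, x * β x < M + ε ∧ m - ε < x * β x := by
      intro x hx
      exact hsub ⟨hx.1, hx.2.trans hyδ⟩
    -- numerator bound
    have hMε0 : 0 ≤ M + ε := by
      have : m ≤ M :=
        liminf_le_limsup hlimsup_fin ⟨0, by
          simpa [eventually_map] using (by
            filter_upwards [self_mem_nhdsWithin] with x hx
            exact mul_nonneg (le_of_lt hx) (hβ_nonneg x hx) : ∀ᶠ x in l, 0 ≤ x * β x)⟩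
      linarith
    have hint_rpow : IntegrableOn (fun x : ℝ => x ^ (α - 1)) (Ioo 0 y) := by
      have h := (intervalIntegral.intervalIntegrable_rpow' (a := 0) (b := y) (by linarith : (-1:ℝ) < α - 1))
      have := (intervalIntegrable_iff_integrableOn_Ioc_of_le hy0.le).1 h
      exact this.mono_set Ioo_subset_Ioc_self
    have hint_up : IntegrableOn (fun x : ℝ => (M + ε) * x ^ (α - 1)) (Ioo 0 y) :=
      hint_rpow.const_mul _
    have hnum_le : (∫ x in Ioo (0 : ℝ) y, x ^ α * β x)
        ≤ ∫ x in Ioo (0 : ℝ) y, (M + ε) * x ^ (α - 1) := by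
      apply integral_mono_of_nonneg
      · refine (ae_restrict_iff' measurableSet_Ioo).2 (ae_of_all _ ?_)
        intro x hx
        exact mul_nonneg (Real.rpow_nonneg hx.1.le α) (hβ_nonneg x hx.1)
      · exact hint_up
      · refine (ae_restrict_iff' measurableSet_Ioo).2 (ae_of_all _ ?_)
        intro x hx
        have hx0 : (0:ℝ) < x := hx.1
        have hxα : x ^ α = x ^ (α - 1) * x := by
          rw [← Real.rpow_add_one hx0.ne']
          ring_nf
        calc x ^ α * β x = x ^ (α - 1) * (x * β x) := by rw [hxα]; ring
          _ ≤ x ^ (α - 1) * (M + ε) :=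
            mul_le_mul_of_nonneg_left (hbound x hx).1.le (Real.rpow_nonneg hx0.le _)
          _ = (M + ε) * x ^ (α - 1) := by ring
    have hrpow_int : (∫ x in Ioo (0 : ℝ) y, x ^ (α - 1)) = y ^ α / α := by
      rw [← integral_Ioc_eq_integral_Ioo, ← intervalIntegral.integral_of_le hy0.le]
      rw [integral_rpow (Or.inl (by linarith : (-1:ℝ) < α - 1))]
      have : α - 1 + 1 = α := by ring
      rw [this, Real.zero_rpow hα0.ne']
      ring
    have hnum_le' : (∫ x in Ioo (0 : ℝ) y, x ^ α * β x) ≤ (M + ε) * (y ^ α / α) := by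
      calc (∫ x in Ioo (0 : ℝ) y, x ^ α * β x)
          ≤ ∫ x in Ioo (0 : ℝ) y, (M + ε) * x ^ (α - 1) := hnum_le
        _ = (M + ε) * ∫ x in Ioo (0 : ℝ) y, x ^ (α - 1) := integral_const_mul _ _
        _ = (M + ε) * (y ^ α / α) := by rw [hrpow_int]
    -- denominator bound
    have hden_ge : (m - ε) * y ≤ ∫ x in Ioo (0 : ℝ) y, x * β x := by
      have hconst : (∫ _ in Ioo (0 : ℝ) y, (m - ε)) = (m - ε) * y := by
        rw [setIntegral_const, measureReal_def, Real.volume_Ioo]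
        simp [smul_eq_mul, ENNReal.toReal_ofReal hy0.le, mul_comm]
      rw [← hconst]
      apply setIntegral_mono_on (integrableOn_const measure_Ioo_lt_top.ne)
        (hβ_int y hy0) measurableSet_Ioo
      intro x hx
      exact (hbound x hx).2.le
    have hden_pos := hβ_pos y hy0
    -- combine
    have hdiv : (∫ x in Ioo (0 : ℝ) y, x ^ α * β x) / (∫ x in Ioo (0 : ℝ) y, x * β x)
        ≤ ((M + ε) * (y ^ α / α)) / ((m - ε) * y) :=
      div_le_div₀ (by positivity) hnum_le' (by positivity) hden_ge
    have hyp : (0:ℝ) < y ^ (1 - α) := Real.rpow_pos_of_pos hy0 _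
    have hF_le : F y ≤ y ^ (1 - α) * (((M + ε) * (y ^ α / α)) / ((m - ε) * y)) :=
      mul_le_mul_of_nonneg_left hdiv hyp.le
    have hab : y ^ (1 - α) * y ^ α = y := by
      rw [← Real.rpow_add hy0]
      norm_num
    have heq : y ^ (1 - α) * (((M + ε) * (y ^ α / α)) / ((m - ε) * y))
        = (M + ε) / (α * (m - ε)) := by
      rw [← mul_div_assoc]
      rw [div_eq_div_iff (by positivity : ((m - ε) * y) ≠ 0)
        (by positivity : (α * (m - ε)) ≠ 0)]
      rw [show y ^ (1 - α) * ((M + ε) * (y ^ α / α)) * (α * (m - ε))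
          = (M + ε) * ((m - ε) * (y ^ (1 - α) * y ^ α)) * (α / α) by ring,
        hab, div_self hα0.ne', mul_one]
    calc F y ≤ y ^ (1 - α) * (((M + ε) * (y ^ α / α)) / ((m - ε) * y)) := hF_le
      _ = (M + ε) / (α * (m - ε)) := heq
  -- pass to the limit ε → 0⁺
  have hmpos : 0 < m := hliminf_pos
  have htend : Tendsto (fun ε : ℝ => (M + ε) / (α * (m - ε))) (nhdsWithin 0 (Ioi 0))
      (nhds (M / (α * m))) := by
    have hc : ContinuousAt (fun ε : ℝ => (M + ε) / (α * (m - ε))) 0 := by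
      apply ContinuousAt.div
      · exact (continuous_const.add continuous_id).continuousAt
      · exact (continuous_const.mul (continuous_const.sub continuous_id)).continuousAt
      · simp only [sub_zero]
        positivity
    have := hc.tendsto
    simp only [add_zero, sub_zero] at this
    exact this.mono_left nhdsWithin_le_nhds
  refine ge_of_tendsto htend ?_
  have : Ioo (0:ℝ) m ∈ nhdsWithin (0:ℝ) (Ioi 0) := Ioo_mem_nhdsGT_of_mem ⟨le_refl _, hmpos⟩
  filter_upwards [this] with ε hε
  exact key ε hε.1 hε.2
end

section
/- Let ᾱ > 1 and let β : (0,∞) → [0,∞) be measurable with ∫₀^∞ β(x)(1 + x^{ᾱ}) dx < ∞ and ∫₀^1 x β(x) dx > 0. Then for every α with 1 < α ≤ ᾱ, (y/(1+y)^α) · (∫₀^y β(x)(1+x)^α dx) / (∫₀^y x β(x) dx) → 0 as y → +∞. -/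
open MeasureTheory Set Filter

/-- For a separable fragmentation kernel given by `β` with `∫₀^∞ β(x)(1+x^{ᾱ}) dx < ∞`
for some `ᾱ > 1` and `∫₀¹ x β(x) dx > 0`, for every `1 < α ≤ ᾱ` one has
`(y/(1+y)^α) (∫₀^y β(x)(1+x)^α dx)/(∫₀^y x β(x) dx) → 0` as `y → +∞`. -/
theorem stmt18 (abar : ℝ) (habar : 1 < abar) (β : ℝ → ℝ) (hβ_meas : Measurable β)
    (hβ_nonneg : ∀ x > (0 : ℝ), 0 ≤ β x)
    (hβ_int : IntegrableOn (fun x => β x * (1 + x ^ abar)) (Ioi (0 : ℝ)))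
    (hβ_pos : 0 < ∫ x in Ioo (0 : ℝ) 1, x * β x) :
    ∀ α : ℝ, 1 < α → α ≤ abar →
      Tendsto (fun y => (y / (1 + y) ^ α) *
          ((∫ x in Ioo (0 : ℝ) y, β x * (1 + x) ^ α) / ∫ x in Ioo (0 : ℝ) y, x * β x))
        atTop (nhds 0) := by
  intro α hα hαbar
  -- pointwise bound (1+x)^α ≤ 2^abar * (1 + x^abar) for x ≥ 0
  have hbound : ∀ x : ℝ, 0 ≤ x → (1 + x) ^ α ≤ 2 ^ abar * (1 + x ^ abar) := by
    intro x hx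
    have h1x : (1:ℝ) ≤ 1 + x := by linarith
    have h1 : (1 + x) ^ α ≤ (1 + x) ^ abar :=
      Real.rpow_le_rpow_of_exponent_le h1x hαbar
    refine h1.trans ?_
    rcases le_total x 1 with h | h
    · have h2 : (1 + x) ^ abar ≤ (2:ℝ) ^ abar :=
        Real.rpow_le_rpow (by linarith) (by linarith) (by linarith)
      have h3 : (0:ℝ) ≤ x ^ abar := Real.rpow_nonneg hx abar
      have h2p : (0:ℝ) ≤ (2:ℝ) ^ abar := Real.rpow_nonneg (by norm_num) _
      nlinarith
    · have h2 : (1 + x) ^ abar ≤ (2 * x) ^ abar :=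
        Real.rpow_le_rpow (by linarith) (by linarith) (by linarith)
      refine h2.trans ?_
      rw [Real.mul_rpow (by norm_num) (by linarith)]
      have h2p : (0:ℝ) ≤ (2:ℝ) ^ abar := Real.rpow_nonneg (by norm_num) _
      nlinarith
  have hmeasα : Measurable fun x : ℝ => β x * (1 + x) ^ α :=
    hβ_meas.mul (((Real.continuous_rpow_const (by linarith : (0:ℝ) ≤ α)).comp
      (continuous_const.add continuous_id)).measurable)
  have hintα : IntegrableOn (fun x => β x * (1 + x) ^ α) (Ioi (0:ℝ)) := by
    refine Integrable.mono' (hβ_int.const_mul ((2:ℝ) ^ abar)) hmeasα.aestronglyMeasurable ?_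
    filter_upwards [ae_restrict_mem measurableSet_Ioi] with x hx
    have hx0 : (0:ℝ) < x := hx
    have hb := hβ_nonneg x hx0
    rw [Real.norm_eq_abs, abs_of_nonneg (mul_nonneg hb (Real.rpow_nonneg (by linarith) _))]
    calc β x * (1+x)^α ≤ β x * (2^abar * (1 + x^abar)) :=
          mul_le_mul_of_nonneg_left (hbound x hx0.le) hb
      _ = 2^abar * (β x * (1+x^abar)) := by ring
  have hβint : IntegrableOn β (Ioi (0:ℝ)) := by
    refine Integrable.mono' hβ_int hβ_meas.aestronglyMeasurable ?_
    filter_upwards [ae_restrict_mem measurableSet_Ioi] with x hx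
    have hb := hβ_nonneg x hx
    have h3 : (0:ℝ) ≤ x ^ abar := Real.rpow_nonneg (le_of_lt hx) _
    rw [Real.norm_eq_abs, abs_of_nonneg hb]; nlinarith
  have hxβint : ∀ y : ℝ, 0 < y → IntegrableOn (fun x => x * β x) (Ioo (0:ℝ) y) := by
    intro y hy
    refine Integrable.mono' ((hβint.mono_set Ioo_subset_Ioi_self).const_mul y)
      (measurable_id.mul hβ_meas).aestronglyMeasurable ?_
    filter_upwards [ae_restrict_mem measurableSet_Ioo] with x hx
    have hb := hβ_nonneg x hx.1
    rw [Real.norm_eq_abs, abs_of_nonneg (mul_nonneg hx.1.le hb)]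
    exact mul_le_mul_of_nonneg_right hx.2.le hb
  set C := ∫ x in Ioi (0:ℝ), β x * (1 + x) ^ α with hC
  set c := ∫ x in Ioo (0:ℝ) 1, x * β x with hcdef
  have hC0 : 0 ≤ C := by
    refine setIntegral_nonneg measurableSet_Ioi fun x hx => ?_
    exact mul_nonneg (hβ_nonneg x hx) (Real.rpow_nonneg (by simp at hx; linarith) _)
  have hg : Tendsto (fun y : ℝ => y / (1 + y) ^ α) atTop (nhds 0) := by
    have htop : Tendsto (fun y : ℝ => 1 + y) atTop atTop :=
      tendsto_atTop_add_const_left _ _ tendsto_id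
    have h0 : Tendsto (fun y : ℝ => (1 + y) ^ (-(α - 1))) atTop (nhds 0) :=
      (tendsto_rpow_neg_atTop (by linarith)).comp htop
    refine tendsto_of_tendsto_of_tendsto_of_le_of_le' tendsto_const_nhds h0 ?_ ?_
    · filter_upwards [eventually_ge_atTop (0:ℝ)] with y hy
      have h1y : (0:ℝ) < 1 + y := by linarith
      exact div_nonneg hy (Real.rpow_pos_of_pos h1y α).le
    · filter_upwards [eventually_ge_atTop (0:ℝ)] with y hy
      have h1y : (0:ℝ) < 1 + y := by linarith
      have hpow : (0:ℝ) < (1 + y) ^ α := Real.rpow_pos_of_pos h1y α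
      calc y / (1+y)^α ≤ (1+y) / (1+y)^α := by
            exact (div_le_div_iff_of_pos_right hpow).mpr (by linarith)
        _ = (1+y) ^ (-(α-1)) := by
            rw [neg_sub, Real.rpow_sub h1y, Real.rpow_one]
  have hK : Tendsto (fun y : ℝ => (y / (1 + y) ^ α) * (C / c)) atTop (nhds 0) := by
    simpa using hg.mul_const (C / c)
  refine tendsto_of_tendsto_of_tendsto_of_le_of_le' tendsto_const_nhds hK ?_ ?_
  · filter_upwards [eventually_ge_atTop (1:ℝ)] with y hy
    have hy0 : (0:ℝ) < y := by linarith
    have h1y : (0:ℝ) < 1 + y := by linarith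
    have hnum : 0 ≤ ∫ x in Ioo (0:ℝ) y, β x * (1+x)^α := by
      refine setIntegral_nonneg measurableSet_Ioo fun x hx => ?_
      exact mul_nonneg (hβ_nonneg x hx.1) (Real.rpow_nonneg (by linarith [hx.1.le]) _)
    have hden : 0 ≤ ∫ x in Ioo (0:ℝ) y, x * β x := by
      refine setIntegral_nonneg measurableSet_Ioo fun x hx => ?_
      exact mul_nonneg hx.1.le (hβ_nonneg x hx.1)
    exact mul_nonneg (div_nonneg hy0.le (Real.rpow_pos_of_pos h1y α).le)
      (div_nonneg hnum hden)
  · filter_upwards [eventually_ge_atTop (1:ℝ)] with y hy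
    have hy0 : (0:ℝ) < y := by linarith
    have h1y : (0:ℝ) < 1 + y := by linarith
    have hnumC : (∫ x in Ioo (0:ℝ) y, β x * (1+x)^α) ≤ C := by
      refine setIntegral_mono_set hintα ?_ Ioo_subset_Ioi_self.eventuallyLE
      filter_upwards [ae_restrict_mem measurableSet_Ioi] with x hx
      exact mul_nonneg (hβ_nonneg x hx) (Real.rpow_nonneg (by simp at hx; linarith) _)
    have hdenc : c ≤ ∫ x in Ioo (0:ℝ) y, x * β x := by
      refine setIntegral_mono_set (hxβint y hy0) ?_ (Ioo_subset_Ioo_right hy).eventuallyLE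
      filter_upwards [ae_restrict_mem measurableSet_Ioo] with x hx
      exact mul_nonneg hx.1.le (hβ_nonneg x hx.1)
    have hratio : (∫ x in Ioo (0:ℝ) y, β x * (1+x)^α) / (∫ x in Ioo (0:ℝ) y, x * β x)
        ≤ C / c := div_le_div₀ hC0 hnumC hβ_pos hdenc
    exact mul_le_mul_of_nonneg_left hratio
      (div_nonneg hy0.le (Real.rpow_pos_of_pos h1y α).le)
end
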